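/- arXiv:1809.04122 — 12 statements merged into one kernel-verified Lean document; each statement's English description precedes it below -/
import Mathlib

section
/- Let R be a Dedekind domain, let S be an integral domain containing R, and let θ ∈ S be integral over R, with (monic) minimal polynomial f ∈ R[t] of θ over the fraction field of R (its coefficients lie in R since R is integrally closed). Then R[θ] is a Dedekind domain if and only if, for every maximal ideal M of the polynomial ring R[t], the polynomial f does not lie in M². -/
set_option maxHeartbeats 1000000
set_option synthInstance.maxHeartbeats 400000
open Polynomial Ideal IsLocalRing


theorem exists_span_sup_sq {R : Type*} [CommRing R] [IsDomain R] [IsDedekindDomain R]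
    (q : Ideal R) (hq : q.IsMaximal) : ∃ x ∈ q, q ≤ Ideal.span {x} ⊔ q ^ 2 := by
  by_cases h : q ≤ q ^ 2
  · exact ⟨0, q.zero_mem, le_sup_of_le_right h⟩
  obtain ⟨x, hxq, hxq2⟩ := SetLike.not_le_iff_exists.mp h
  refine ⟨x, hxq, ?_⟩
  have hq0 : q ≠ ⊥ := by rintro rfl; exact h (by simp)
  have hqp : Prime q := (Ideal.prime_iff_isPrime hq0).mpr hq.isPrime
  set J := Ideal.span {x} ⊔ q ^ 2 with hJ
  have hJq : J ≤ q := sup_le ((Ideal.span_singleton_le_iff_mem _).2 hxq)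
    (Ideal.pow_le_self two_ne_zero)
  have hqJ : q ∣ J := Ideal.dvd_iff_le.mpr hJq
  obtain ⟨I, hI⟩ := hqJ
  have hJq2 : J ∣ q ^ 2 := Ideal.dvd_iff_le.mpr le_sup_right
  have hIq : I ∣ q := by
    have : q * I ∣ q * q := by rw [← hI, ← pow_two]; exact hJq2
    exact (mul_dvd_mul_iff_left hq0).mp this
  obtain ⟨c, hc⟩ := hIq
  rcases hqp.irreducible.isUnit_or_isUnit hc with hu | hu
  · rw [Ideal.isUnit_iff] at hu
    rw [hI, hu, mul_top]
  · rw [Ideal.isUnit_iff] at hu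
    rw [hu, mul_top] at hc
    exfalso
    apply hxq2
    have : J = q ^ 2 := by rw [hI, ← hc, pow_two]
    have hx' : x ∈ J := Submodule.mem_sup_left (Ideal.mem_span_singleton_self x)
    rwa [this] at hx'

theorem dvr_of_principal_maximalIdeal {A : Type*} [CommRing A] [IsDomain A] [IsNoetherianRing A]
    [IsLocalRing A] (h : (maximalIdeal A).IsPrincipal) (hbot : maximalIdeal A ≠ ⊥) :
    IsDiscreteValuationRing A := by
  have hnf : ¬IsField A := fun hf => hbot (isField_iff_maximalIdeal_eq.mp hf)
  exact ((IsDiscreteValuationRing.TFAE A hnf).out 0 4).mpr h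

theorem maximalIdeal_eq_span_of_le_sup_sq {W : Type*} [CommRing W] [IsLocalRing W]
    [IsNoetherianRing W] {t : W} (ht : t ∈ maximalIdeal W)
    (h : maximalIdeal W ≤ Ideal.span {t} ⊔ maximalIdeal W ^ 2) :
    maximalIdeal W = Ideal.span {t} := by
  refine le_antisymm ?_ ((Ideal.span_singleton_le_iff_mem _).mpr ht)
  refine Submodule.le_of_le_smul_of_le_jacobson_bot (IsNoetherian.noetherian _)
    (IsLocalRing.maximalIdeal_le_jacobson ⊥) ?_
  rwa [Ideal.smul_eq_mul, ← pow_two]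

/-- **Uchida's theorem (1977).** Let `R` be a Dedekind domain, `S` an integral domain
containing `R`, and `θ ∈ S` integral over `R`, with monic minimal polynomial
`f = minpoly R θ` (whose coefficients lie in `R` since `R` is integrally closed).  Then
`R[θ]` is a Dedekind domain if and only if `f` does not lie in `M²` for any maximal ideal
`M` of `R[t]`. -/
theorem uchida_criterion
    (R : Type*) [CommRing R] [IsDomain R] [IsDedekindDomain R]
    (S : Type*) [CommRing S] [IsDomain S] [Algebra R S]
    (hinj : Function.Injective (algebraMap R S))
    (θ : S) (hθ : IsIntegral R θ) :
    IsDedekindDomain ↥(Algebra.adjoin R {θ}) ↔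
      ∀ M : Ideal (Polynomial R), M.IsMaximal → minpoly R θ ∉ M ^ 2 := by
  haveI : Module.IsTorsionFree R S := Module.isTorsionFree_iff_algebraMap_injective.mpr hinj
  set f : R[X] := minpoly R θ with hf
  have hf0 : f ≠ 0 := minpoly.ne_zero hθ
  set T := Algebra.adjoin R ({θ} : Set S) with hT
  -- the surjection π : R[X] → R[θ] with kernel (f)
  set π : R[X] →+* T :=
    (AdjoinRoot.Minpoly.toAdjoin R θ).toRingHom.comp (AdjoinRoot.mk f) with hπdef
  have hπsurj : Function.Surjective π :=
    (AdjoinRoot.Minpoly.toAdjoin.surjective R θ).comp (AdjoinRoot.mk_surjective)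
  have hker : RingHom.ker π = Ideal.span {f} := by
    have h1 : RingHom.ker (AdjoinRoot.Minpoly.toAdjoin R θ).toRingHom = ⊥ :=
      (RingHom.injective_iff_ker_eq_bot _).mp (minpoly.ToAdjoin.injective hθ)
    rw [hπdef, ← RingHom.comap_ker, h1]
    show Ideal.comap (AdjoinRoot.mk f) ⊥ = _
    rw [← RingHom.ker_eq_comap_bot]
    exact Ideal.mk_ker
  have halg : ∀ r : R, π (C r) = algebraMap R T r := fun r =>
    (AdjoinRoot.Minpoly.toAdjoin R θ).commutes r
  have hcompeq : π.comp (C : R →+* R[X]) = algebraMap R T := RingHom.ext halg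
  haveI : IsNoetherianRing R[X] := inferInstance
  haveI hTnoeth : IsNoetherianRing T := isNoetherianRing_of_surjective R[X] T π hπsurj
  haveI : Module.Finite R T := by
    have pb := Algebra.adjoin.powerBasis' hθ
    exact Module.Finite.of_basis pb.basis
  haveI : Algebra.IsIntegral R T := Algebra.IsIntegral.of_finite R T
  constructor
  · -- Dedekind → criterion
    intro hDD M hM hfM2
    have hfM : f ∈ M := Ideal.pow_le_self two_ne_zero hfM2
    have hkerM : RingHom.ker π ≤ M := by rw [hker]; exact (span_singleton_le_iff_mem _).mpr hfM
    haveI : M.IsPrime := hM.isPrime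
    set p : Ideal T := M.map π with hp
    haveI hpprime : p.IsPrime := map_isPrime_of_surjective hπsurj hkerM
    have hcomap : Ideal.comap π p = M := by
      rw [hp, comap_map_of_surjective π hπsurj, ← RingHom.ker_eq_comap_bot, sup_eq_left.mpr hkerM]
    by_cases hp0 : p = (⊥ : Ideal T)
    · -- then M = span {f}, contradiction with f ∈ M²
      have hM' : M = Ideal.span {f} := by
        rw [← hcomap, hp0, ← RingHom.ker_eq_comap_bot, hker]
      rw [hM', Ideal.span_singleton_pow, Ideal.mem_span_singleton] at hfM2
      obtain ⟨c, hc⟩ := hfM2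
      have h1 : f * (1 - f * c) = 0 := by linear_combination hc
      rcases mul_eq_zero.mp h1 with h | h
      · exact hf0 h
      · have hunit : IsUnit f := IsUnit.of_mul_eq_one c (by linear_combination -h)
        exact hM.ne_top (hM'.trans (Ideal.span_singleton_eq_top.mpr hunit))
    · -- p is a nonzero maximal ideal of the Dedekind domain T
      have hpmax : p.IsMaximal := by
        rcases map_eq_top_or_isMaximal_of_surjective π hπsurj hM with htop | hmax
        · exfalso; apply hM.ne_top
          rw [← hcomap, hp, htop, Ideal.comap_top]
        · exact hmax
      obtain ⟨y, hyp, hyle⟩ := exists_span_sup_sq p hpmax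
      obtain ⟨y', hy'⟩ := hπsurj y
      have hy'M : y' ∈ M := by rw [← hcomap]; simpa [Ideal.mem_comap, hy'] using hyp
      -- M ≤ span {y'} ⊔ M ^ 2
      have hMle : M ≤ Ideal.span {y'} ⊔ M ^ 2 := by
        intro z hz
        have : π z ∈ Ideal.span {y} ⊔ p ^ 2 := hyle (Ideal.mem_map_of_mem π hz)
        rw [Submodule.mem_sup] at this
        obtain ⟨v, hv, e', he', hve⟩ := this
        rw [Ideal.mem_span_singleton'] at hv
        obtain ⟨cc, hcc⟩ := hv
        obtain ⟨c', hc'⟩ := hπsurj cc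
        have he'2 : e' ∈ Ideal.map π (M ^ 2) := by rwa [Ideal.map_pow, ← hp]
        rw [Ideal.mem_map_iff_of_surjective π hπsurj] at he'2
        obtain ⟨e'', he''M, he''⟩ := he'2
        have hzker : z - (c' * y' + e'') ∈ RingHom.ker π := by
          rw [RingHom.mem_ker, map_sub, map_add, _root_.map_mul, hc', hy', he'', hcc, hve, sub_self]
        rw [hker, Ideal.mem_span_singleton] at hzker
        obtain ⟨d, hd⟩ := hzker
        have hzeq : z = c' * y' + e'' + f * d := by rw [← hd]; ring
        rw [hzeq]
        refine Submodule.add_mem _ (Submodule.add_mem _ ?_ ?_) ?_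
        · exact Submodule.mem_sup_left (Ideal.mem_span_singleton'.mpr ⟨c', rfl⟩)
        · exact Submodule.mem_sup_right he''M
        · exact Submodule.mem_sup_right (Ideal.mul_mem_right d _ hfM2)
      -- localize R[X] at M
      set L := Localization.AtPrime M with hL
      set ψ : R[X] →+* L := algebraMap R[X] L with hψ
      haveI : IsDomain L := inferInstance
      haveI : IsNoetherianRing L := IsLocalization.isNoetherianRing M.primeCompl L inferInstance
      have hmax_eq : Ideal.map ψ M = maximalIdeal L := Localization.AtPrime.map_eq_maximalIdeal
      have hψy' : ψ y' ∈ maximalIdeal L := by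
        rw [← hmax_eq]; exact Ideal.mem_map_of_mem ψ hy'M
      have hmle : maximalIdeal L ≤ Ideal.span {ψ y'} ⊔ maximalIdeal L ^ 2 := by
        rw [← hmax_eq]
        calc Ideal.map ψ M ≤ Ideal.map ψ (Ideal.span {y'} ⊔ M ^ 2) := Ideal.map_mono hMle
          _ = Ideal.span {ψ y'} ⊔ Ideal.map ψ M ^ 2 := by
              rw [Ideal.map_sup, Ideal.map_span, Set.image_singleton, Ideal.map_pow]
      have hspan := maximalIdeal_eq_span_of_le_sup_sq hψy' hmle
      have hψinj : Function.Injective ψ :=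
        IsLocalization.injective L M.primeCompl_le_nonZeroDivisors
      have hψf : ψ f ≠ 0 := fun h => hf0 (hψinj (by rw [h, map_zero]))
      have hmbot : maximalIdeal L ≠ ⊥ := by
        intro h
        apply hψf
        have : ψ f ∈ maximalIdeal L := by rw [← hmax_eq]; exact Ideal.mem_map_of_mem ψ hfM
        rwa [h, Ideal.mem_bot] at this
      haveI hdvrL : IsDiscreteValuationRing L :=
        dvr_of_principal_maximalIdeal ⟨ψ y', hspan⟩ hmbot
      -- span {f} is prime in R[X]; its image in L is a nonzero prime, hence the maximal ideal
      have hfprime : (Ideal.span {f} : Ideal R[X]).IsPrime := by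
        rw [← hker]; exact RingHom.ker_isPrime π
      have hdisj : Disjoint (M.primeCompl : Set R[X]) ((Ideal.span {f} : Ideal R[X]) : Set R[X]) := by
        rw [Set.disjoint_left]
        intro a ha ha'
        exact ha (((Ideal.span_singleton_le_iff_mem _).mpr hfM) ha')
      have hPprime : (Ideal.map ψ (Ideal.span {f})).IsPrime :=
        IsLocalization.isPrime_of_isPrime_disjoint M.primeCompl L _ hfprime hdisj
      have hP0 : Ideal.map ψ (Ideal.span {f}) ≠ ⊥ := by
        intro h
        apply hψf
        have : ψ f ∈ Ideal.map ψ (Ideal.span {f}) :=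
          Ideal.mem_map_of_mem ψ (Ideal.mem_span_singleton_self f)
        rwa [h, Ideal.mem_bot] at this
      obtain ⟨-, huniq⟩ := (IsDiscreteValuationRing.iff_pid_with_one_nonzero_prime L).mp hdvrL
      have hPn : Ideal.map ψ (Ideal.span {f}) = maximalIdeal L := by
        have h1 := huniq.unique ⟨hP0, hPprime⟩ ⟨hmbot, (maximalIdeal.isMaximal L).isPrime⟩
        exact h1
      -- now f ∈ M² gives ψ f ∈ (span {ψ f})², contradiction
      have hψfmem : ψ f ∈ (maximalIdeal L) ^ 2 := by
        rw [← hmax_eq, ← Ideal.map_pow]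
        exact Ideal.mem_map_of_mem ψ hfM2
      rw [← hPn, Ideal.map_span, Set.image_singleton, Ideal.span_singleton_pow,
        Ideal.mem_span_singleton] at hψfmem
      obtain ⟨c, hc⟩ := hψfmem
      have hunit : IsUnit (ψ f) := by
        have h1 : ψ f * (1 - ψ f * c) = 0 := by linear_combination hc
        rcases mul_eq_zero.mp h1 with h | h
        · exact absurd h hψf
        · exact IsUnit.of_mul_eq_one c (by linear_combination -h)
      have : ψ f ∈ maximalIdeal L := by rw [← hmax_eq]; exact Ideal.mem_map_of_mem ψ hfM
      exact (IsLocalRing.mem_maximalIdeal _).mp this hunit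
  · -- criterion → Dedekind
    intro h
    suffices hdvr : IsDedekindDomainDvr T by
      exact IsDedekindDomainDvr.isDedekindDomain T
    refine ⟨?_⟩
    intro p hp0 hpprime
    haveI : p.IsPrime := hpprime
    set M : Ideal R[X] := Ideal.comap π p with hM
    haveI : M.IsPrime := Ideal.IsPrime.comap π
    have hfker : f ∈ RingHom.ker π := by rw [hker]; exact Ideal.mem_span_singleton_self f
    have hπf : π f = 0 := by rwa [RingHom.mem_ker] at hfker
    have hfM : f ∈ M := by rw [hM, Ideal.mem_comap, hπf]; exact p.zero_mem
    set q : Ideal R := Ideal.comap (algebraMap R T) p with hq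
    haveI : q.IsPrime := Ideal.IsPrime.comap _
    obtain ⟨z, hzp, hz0⟩ := Submodule.exists_mem_ne_zero_of_ne_bot hp0
    have hq0 : q ≠ ⊥ :=
      Ideal.comap_ne_bot_of_integral_mem hz0 hzp (Algebra.IsIntegral.isIntegral z)
    have hqmax : q.IsMaximal := Ring.DimensionLEOne.maximalOfPrime hq0 inferInstance
    haveI hpmax : p.IsMaximal := Ideal.isMaximal_of_isIntegral_of_isMaximal_comap p hqmax
    haveI hMmax : M.IsMaximal := Ideal.comap_isMaximal_of_surjective π hπsurj
    have hfM2 : f ∉ M ^ 2 := h M hMmax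
    have hqC : Ideal.comap C M = q := by
      rw [hM, Ideal.comap_comap, hcompeq, hq]
    -- decompose M = C(q) ⊔ (g)
    haveI := hqmax
    letI : Field (R ⧸ q) := Ideal.Quotient.field q
    set ψq : R[X] →+* (R ⧸ q)[X] := Polynomial.mapRingHom (Ideal.Quotient.mk q) with hψq
    have hψqsurj : Function.Surjective ψq :=
      Polynomial.map_surjective _ Ideal.Quotient.mk_surjective
    have hkerψq : RingHom.ker ψq = Ideal.map C q := by
      rw [hψq, Polynomial.ker_mapRingHom, Ideal.mk_ker]
    have hCqM : Ideal.map C q ≤ M := Ideal.map_le_iff_le_comap.mpr (le_of_eq hqC.symm)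
    have hkerle : RingHom.ker ψq ≤ M := by rw [hkerψq]; exact hCqM
    have hMc : Ideal.comap ψq (Ideal.map ψq M) = M := by
      rw [Ideal.comap_map_of_surjective ψq hψqsurj, ← RingHom.ker_eq_comap_bot,
        sup_eq_left.mpr hkerle]
    have hM'max : (Ideal.map ψq M).IsMaximal := by
      rcases Ideal.map_eq_top_or_isMaximal_of_surjective ψq hψqsurj hMmax with htop | hm
      · exfalso; apply hMmax.ne_top
        rw [← hMc, htop, Ideal.comap_top]
      · exact hm
    obtain ⟨g', hg'⟩ := (IsPrincipalIdealRing.principal (Ideal.map ψq M)).principal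
    obtain ⟨g, hg⟩ := hψqsurj g'
    have hgM : g ∈ M := by
      rw [← hMc, Ideal.mem_comap, hg' , hg]
      exact Submodule.mem_span_singleton_self g'
    have hMdec : M = Ideal.map C q ⊔ Ideal.span {g} := by
      refine le_antisymm ?_ (sup_le hCqM ((Ideal.span_singleton_le_iff_mem _).mpr hgM))
      intro z' hz'
      have h1 : ψq z' ∈ Submodule.span (R ⧸ q)[X] {g'} := hg' ▸ Ideal.mem_map_of_mem ψq hz'
      rw [Ideal.submodule_span_eq, Ideal.mem_span_singleton'] at h1
      obtain ⟨c', hc'⟩ := h1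
      obtain ⟨c, hc⟩ := hψqsurj c'
      have h2 : z' - c * g ∈ RingHom.ker ψq := by
        rw [RingHom.mem_ker, map_sub, _root_.map_mul, hc, hg, hc', sub_self]
      rw [hkerψq] at h2
      have hz'eq : z' = (z' - c * g) + c * g := by ring
      rw [hz'eq]
      exact Submodule.add_mem _ (Submodule.mem_sup_left h2)
        (Submodule.mem_sup_right (Ideal.mul_mem_left _ c (Ideal.mem_span_singleton_self g)))
    -- Dedekind generator of q mod q²
    obtain ⟨x, hxq, hxle⟩ := exists_span_sup_sq q hqmax
    have hCxM : C x ∈ M := by rw [← hqC] at hxq; exact hxq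
    have hmapCq : Ideal.map C q ≤ Ideal.span {C x} ⊔ (Ideal.map C q) ^ 2 := by
      have h1 := Ideal.map_mono (f := (C : R →+* R[X])) hxle
      rwa [Ideal.map_sup, Ideal.map_span, Set.image_singleton, Ideal.map_pow] at h1
    -- decompose f
    have hfM' : f ∈ Ideal.map C q ⊔ Ideal.span {g} := hMdec ▸ hfM
    rw [Submodule.mem_sup] at hfM'
    obtain ⟨w, hw, v, hv, hwv⟩ := hfM'
    rw [Ideal.mem_span_singleton'] at hv
    obtain ⟨c, hc⟩ := hv
    have hw' := hmapCq hw
    rw [Submodule.mem_sup] at hw'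
    obtain ⟨a', ha', e, he, ha'e⟩ := hw'
    rw [Ideal.mem_span_singleton'] at ha'
    obtain ⟨a, ha⟩ := ha'
    have heM2 : e ∈ M ^ 2 := Ideal.pow_right_mono hCqM 2 he
    have hfeq : f = a * C x + c * g + e := by
      rw [← hwv, ← hc, ← ha'e, ← ha]; ring
    have key : a ∉ M ∨ c ∉ M := by
      by_contra hcon
      push_neg at hcon
      apply hfM2
      rw [hfeq, pow_two]
      refine Submodule.add_mem _ (Submodule.add_mem _ (Ideal.mul_mem_mul hcon.1 hCxM)
        (Ideal.mul_mem_mul hcon.2 hgM)) ?_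
      rw [← pow_two]
      exact heM2
    -- localize T at p
    set W := Localization.AtPrime p with hW
    haveI : IsDomain W := IsLocalization.isDomain_localization p.primeCompl_le_nonZeroDivisors
    haveI : IsNoetherianRing W := IsLocalization.isNoetherianRing p.primeCompl W inferInstance
    set φ : R[X] →+* W := (algebraMap T W).comp π with hφ
    have hφm : Ideal.map φ M = maximalIdeal W := by
      rw [hφ, ← Ideal.map_map, hM, Ideal.map_comap_of_surjective π hπsurj,
        Localization.AtPrime.map_eq_maximalIdeal]
    have hcomapφ : Ideal.comap φ (maximalIdeal W) = M := by
      rw [hφ, ← Ideal.comap_comap]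
      rw [show Ideal.comap (algebraMap T W) (maximalIdeal W) = p from
        Localization.AtPrime.comap_maximalIdeal, hM]
    have hunits : ∀ u : R[X], u ∉ M → IsUnit (φ u) := by
      intro u hu
      by_contra hnu
      apply hu
      rw [← hcomapφ]
      exact Ideal.mem_comap.mpr ((IsLocalRing.mem_maximalIdeal _).mpr hnu)
    have hφf : φ f = 0 := by rw [hφ]; show algebraMap T W (π f) = 0; rw [hπf, map_zero]
    have hφCx : φ (C x) ∈ maximalIdeal W := by
      rw [← hφm]; exact Ideal.mem_map_of_mem φ hCxM
    have hφg : φ g ∈ maximalIdeal W := by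
      rw [← hφm]; exact Ideal.mem_map_of_mem φ hgM
    have hφe : φ e ∈ maximalIdeal W ^ 2 := by
      rw [← hφm, ← Ideal.map_pow]; exact Ideal.mem_map_of_mem φ heM2
    have hmle : maximalIdeal W ≤
        Ideal.span {φ (C x)} ⊔ Ideal.span {φ g} ⊔ maximalIdeal W ^ 2 := by
      conv_lhs => rw [← hφm, hMdec, Ideal.map_sup, Ideal.map_span, Set.image_singleton]
      refine sup_le ?_ ?_
      · intro t ht
        have h1 : Ideal.map φ (Ideal.map C q) ≤
            Ideal.span {φ (C x)} ⊔ (Ideal.map φ (Ideal.map C q)) ^ 2 := by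
          have h2 := Ideal.map_mono (f := φ) hmapCq
          rwa [Ideal.map_sup, Ideal.map_span, Set.image_singleton, Ideal.map_pow] at h2
        rcases Submodule.mem_sup.mp (h1 ht) with ⟨u1, hu1, u2, hu2, hu⟩
        have hCqm : Ideal.map φ (Ideal.map C q) ≤ maximalIdeal W :=
          hφm ▸ Ideal.map_mono hCqM
        have hu2' : u2 ∈ maximalIdeal W ^ 2 := Ideal.pow_right_mono hCqm 2 hu2
        rw [← hu]
        exact Submodule.add_mem _ (Submodule.mem_sup_left (Submodule.mem_sup_left hu1))
          (Submodule.mem_sup_right hu2')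
      · exact le_sup_of_le_left le_sup_right
    have heq : φ a * φ (C x) + φ c * φ g + φ e = 0 := by
      have h1 := congrArg φ hfeq
      rw [hφf, map_add, map_add, _root_.map_mul, _root_.map_mul] at h1
      exact h1.symm
    -- maximal ideal of W is principal
    have hprincipal : ∃ t, t ∈ maximalIdeal W ∧ maximalIdeal W = Ideal.span {t} := by
      rcases key with hc' | hc'
      · -- a ∉ M : φ (C x) ∈ span {φ g} ⊔ m²
        obtain ⟨va, hva⟩ := (hunits a hc').exists_left_inv
        have hrep : φ (C x) = (-(va * φ c)) * φ g + (-va) * φ e := by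
          linear_combination va * heq - (φ (C x)) * hva
        have hCx2 : φ (C x) ∈ Ideal.span {φ g} ⊔ maximalIdeal W ^ 2 := by
          rw [hrep]
          exact Submodule.add_mem _
            (Submodule.mem_sup_left (Ideal.mem_span_singleton'.mpr ⟨_, rfl⟩))
            (Submodule.mem_sup_right (Ideal.mul_mem_left _ _ hφe))
        refine ⟨φ g, hφg, maximalIdeal_eq_span_of_le_sup_sq hφg ?_⟩
        intro t ht
        rcases Submodule.mem_sup.mp (hmle ht) with ⟨u1, hu1, u3, hu3, hu⟩
        rcases Submodule.mem_sup.mp hu1 with ⟨s1, hs1, s2, hs2, hs⟩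
        rw [Ideal.mem_span_singleton'] at hs1
        obtain ⟨b1, hb1⟩ := hs1
        have hs1' : b1 * φ (C x) ∈ Ideal.span {φ g} ⊔ maximalIdeal W ^ 2 :=
          Submodule.smul_mem _ b1 hCx2
        rw [← hu, ← hs, ← hb1]
        exact Submodule.add_mem _ (Submodule.add_mem _ hs1' (Submodule.mem_sup_left hs2))
          (Submodule.mem_sup_right hu3)
      · -- c ∉ M : φ g ∈ span {φ (C x)} ⊔ m²
        obtain ⟨vc, hvc⟩ := (hunits c hc').exists_left_inv
        have hrep : φ g = (-(vc * φ a)) * φ (C x) + (-vc) * φ e := by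
          linear_combination vc * heq - (φ g) * hvc
        have hg2 : φ g ∈ Ideal.span {φ (C x)} ⊔ maximalIdeal W ^ 2 := by
          rw [hrep]
          exact Submodule.add_mem _
            (Submodule.mem_sup_left (Ideal.mem_span_singleton'.mpr ⟨_, rfl⟩))
            (Submodule.mem_sup_right (Ideal.mul_mem_left _ _ hφe))
        refine ⟨φ (C x), hφCx, maximalIdeal_eq_span_of_le_sup_sq hφCx ?_⟩
        intro t ht
        rcases Submodule.mem_sup.mp (hmle ht) with ⟨u1, hu1, u3, hu3, hu⟩
        rcases Submodule.mem_sup.mp hu1 with ⟨s1, hs1, s2, hs2, hs⟩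
        rw [Ideal.mem_span_singleton'] at hs2
        obtain ⟨b2, hb2⟩ := hs2
        have hs2' : b2 * φ g ∈ Ideal.span {φ (C x)} ⊔ maximalIdeal W ^ 2 :=
          Submodule.smul_mem _ b2 hg2
        rw [← hu, ← hs, ← hb2]
        exact Submodule.add_mem _ (Submodule.add_mem _ (Submodule.mem_sup_left hs1) hs2')
          (Submodule.mem_sup_right hu3)
    obtain ⟨t, htm, hspan⟩ := hprincipal
    have hmbot : maximalIdeal W ≠ ⊥ := by
      intro hb
      have h1 : algebraMap T W z ∈ maximalIdeal W := by
        rw [← Localization.AtPrime.map_eq_maximalIdeal]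
        exact Ideal.mem_map_of_mem _ hzp
      have h2 : algebraMap T W z ≠ 0 := fun h0 => hz0
        (IsLocalization.injective W p.primeCompl_le_nonZeroDivisors (by rw [h0, map_zero]))
      rw [hb, Ideal.mem_bot] at h1
      exact h2 h1
    exact dvr_of_principal_maximalIdeal ⟨t, hspan⟩ hmbot
end

section
/- Let θ be an algebraic integer with minimal polynomial f ∈ ℤ[t], let R = ℤ[θ], let 𝒫 be a maximal ideal of R, and let p be the rational prime with 𝒫 ∩ ℤ = pℤ. Let μ_𝒫 ∈ ℤ[t] be a monic polynomial of least degree such that μ_𝒫(θ) ∈ 𝒫. If there exist g, h ∈ ℤ[t] such that f = μ_𝒫·h + p·g and gcd(μ̄_𝒫, ḡ, h̄) = 1 in 𝔽_p[t], then the localization R_𝒫 of R at 𝒫 is a discrete valuation ring. -/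
open Polynomial

set_option maxHeartbeats 2000000 in
set_option synthInstance.maxHeartbeats 1000000 in
/-- **Lüneburg's test (1984).** Let `θ` be an algebraic integer with minimal polynomial `f`,
`R = ℤ[θ]`, `𝓟` a maximal ideal of `R` lying over the rational prime `p`, and `μ_𝓟` a monic
integer polynomial of least degree with `μ_𝓟(θ) ∈ 𝓟`.  If there exist `g, h ∈ ℤ[t]` such that
`f = μ_𝓟 h + p g` and `gcd(μ̄_𝓟, ḡ, h̄) = 1` in `𝔽_p[t]`, then the localization `R_𝓟` is a
discrete valuation ring. -/
theorem luneburg_test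
    (θ : ℂ) (hθ : IsIntegral ℤ θ)
    (𝓟 : Ideal (Algebra.adjoin ℤ {θ})) [𝓟.IsMaximal]
    (p : ℕ) [Fact p.Prime]
    (h𝓟p : 𝓟.comap (algebraMap ℤ (Algebra.adjoin ℤ {θ})) = Ideal.span {(p : ℤ)})
    (μ : ℤ[X]) (hμmonic : μ.Monic)
    (hμ𝓟 : aeval (⟨θ, Algebra.self_mem_adjoin_singleton ℤ θ⟩ : Algebra.adjoin ℤ {θ}) μ ∈ 𝓟)
    (hμmin : ∀ q : ℤ[X], q.Monic →
      aeval (⟨θ, Algebra.self_mem_adjoin_singleton ℤ θ⟩ : Algebra.adjoin ℤ {θ}) q ∈ 𝓟 →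
      μ.degree ≤ q.degree)
    (g h : ℤ[X])
    (hf : minpoly ℤ θ = μ * h + Polynomial.C (p : ℤ) * g)
    (hgcd : IsUnit (EuclideanDomain.gcd
      (EuclideanDomain.gcd (μ.map (Int.castRingHom (ZMod p))) (g.map (Int.castRingHom (ZMod p))))
      (h.map (Int.castRingHom (ZMod p))))) :
    IsDiscreteValuationRing (Localization.AtPrime 𝓟) := by
  classical
  have hp : p.Prime := Fact.out
  set θ' : Algebra.adjoin ℤ {θ} := ⟨θ, Algebra.self_mem_adjoin_singleton ℤ θ⟩ with hθ'def
  set f0 : ℤ →+* ZMod p := Int.castRingHom (ZMod p) with hf0def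
  -- p lies in 𝓟
  have hpP : algebraMap ℤ (Algebra.adjoin ℤ {θ}) ((p : ℕ) : ℤ) ∈ 𝓟 := by
    have h1 : ((p : ℕ) : ℤ) ∈ Ideal.span {((p : ℕ) : ℤ)} := Ideal.mem_span_singleton_self _
    rw [← h𝓟p] at h1
    exact h1
  -- every element of R is a value of an integer polynomial at θ'
  have hrepr : ∀ x : Algebra.adjoin ℤ {θ}, ∃ q : ℤ[X], aeval θ' q = x := by
    intro x
    have hx : (x : ℂ) ∈ (Polynomial.aeval (R := ℤ) θ).range := by
      rw [← Algebra.adjoin_singleton_eq_range_aeval]; exact x.2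
    obtain ⟨q, hq⟩ := hx
    refine ⟨q, Subtype.ext ?_⟩
    rw [← Subalgebra.aeval_coe]
    exact hq
  -- key minimality lemma: small degree and value in 𝓟 forces zero reduction mod p
  have key0 : ∀ r : ℤ[X], r.degree < μ.degree → aeval θ' r ∈ 𝓟 → r.map f0 = 0 := by
    intro r hdeg hrP
    by_contra hr0
    set rb : (ZMod p)[X] := r.map f0 with hrbdef
    have hlc : rb.leadingCoeff ≠ 0 := leadingCoeff_ne_zero.mpr hr0
    obtain ⟨a, ha⟩ := ZMod.intCast_surjective (n := p) rb.leadingCoeff⁻¹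
    have hf0a : f0 a = rb.leadingCoeff⁻¹ := by
      rw [hf0def]; simpa using ha
    have ha0 : f0 a ≠ 0 := by rw [hf0a]; exact inv_ne_zero hlc
    set d : ℕ := rb.natDegree with hddef
    set v : ℤ[X] := C a * r with hvdef
    set mv : (ZMod p)[X] := v.map f0 with hmvdef
    have hmveq : mv = C (f0 a) * rb := by
      rw [hmvdef, hvdef, Polynomial.map_mul, Polynomial.map_C]
    have hmvdeg : mv.natDegree = d := by
      rw [hmveq, natDegree_C_mul ha0]
    have hmvmonic : mv.Monic := by
      have : mv.leadingCoeff = 1 := by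
        rw [hmveq, leadingCoeff_mul, leadingCoeff_C, hf0a, inv_mul_cancel₀ hlc]
      exact this
    set w : ℤ[X] := X ^ d + ∑ i ∈ Finset.range d, monomial i (v.coeff i) with hwdef
    have hsumdeg : (∑ i ∈ Finset.range d, monomial i (v.coeff i)).degree < (d : WithBot ℕ) := by
      apply lt_of_le_of_lt (degree_sum_le _ _)
      rw [Finset.sup_lt_iff (by exact WithBot.bot_lt_coe d)]
      intro i hi
      exact lt_of_le_of_lt (degree_monomial_le i _)
        (by exact_mod_cast Nat.cast_lt.mpr (Finset.mem_range.mp hi))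
    have hwmonic : w.Monic := monic_X_pow_add hsumdeg
    have hwdeg : w.degree = (d : WithBot ℕ) := by
      rw [hwdef, degree_add_eq_left_of_degree_lt (by rw [degree_X_pow]; exact hsumdeg),
        degree_X_pow]
    have hwmap : w.map f0 = mv := by
      have hmv_sum : mv = (∑ i ∈ Finset.range d, monomial i (mv.coeff i)) + X ^ d := by
        conv_lhs => rw [mv.as_sum_range' (d + 1) (by rw [hmvdeg]; exact Nat.lt_succ_self d)]
        rw [Finset.sum_range_succ, ← hmvdeg, Monic.coeff_natDegree hmvmonic,
          ← X_pow_eq_monomial, hmvdeg]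
      rw [hwdef, Polynomial.map_add, Polynomial.map_pow, map_X, Polynomial.map_sum, hmv_sum,
        add_comm]
      congr 1
      refine Finset.sum_congr rfl fun i _ => ?_
      rw [map_monomial, hmvdef, coeff_map]
    have hker : w - v ∈ Ideal.span {C ((p : ℕ) : ℤ)} := by
      have h1 : w - v ∈ RingHom.ker (mapRingHom f0) := by
        rw [RingHom.mem_ker]
        show (w - v).map f0 = 0
        rw [Polynomial.map_sub, hwmap, ← hmvdef, sub_self]
      rwa [ker_mapRingHom, hf0def, ZMod.ker_intCastRingHom, Ideal.map_span,
        Set.image_singleton] at h1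
    obtain ⟨u, hu⟩ := Ideal.mem_span_singleton.mp hker
    have hwP : (aeval θ') w ∈ 𝓟 := by
      have hw2 : w = C ((p : ℕ) : ℤ) * u + v := sub_eq_iff_eq_add.mp hu
      rw [hw2, map_add]
      refine Ideal.add_mem _ ?_ ?_
      · rw [map_mul, aeval_C]
        exact Ideal.mul_mem_right _ _ hpP
      · rw [hvdef, map_mul, aeval_C]
        exact Ideal.mul_mem_left _ _ hrP
    have hcontr := hμmin w hwmonic hwP
    rw [hwdeg] at hcontr
    have hrbdeg : rb.degree = (d : WithBot ℕ) := degree_eq_natDegree hr0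
    have hle : μ.degree ≤ r.degree := hcontr.trans (by rw [← hrbdeg]; exact degree_map_le)
    exact absurd hdeg (not_lt.mpr hle)
  -- decomposition of polynomials whose value lies in 𝓟
  have decomp : ∀ q : ℤ[X], aeval θ' q ∈ 𝓟 →
      ∃ s u : ℤ[X], q = μ * s + C ((p : ℕ) : ℤ) * u := by
    intro q hq
    have hmod : aeval θ' (q %ₘ μ) ∈ 𝓟 := by
      have heq : q %ₘ μ = q - μ * (q /ₘ μ) := eq_sub_of_add_eq (modByMonic_add_div q μ)
      rw [heq, map_sub, map_mul]
      exact Ideal.sub_mem _ hq (Ideal.mul_mem_right _ _ hμ𝓟)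
    have h0 := key0 (q %ₘ μ) (degree_modByMonic_lt q hμmonic) hmod
    have hker : q %ₘ μ ∈ Ideal.span {C ((p : ℕ) : ℤ)} := by
      have h1 : q %ₘ μ ∈ RingHom.ker (mapRingHom f0) := by
        rw [RingHom.mem_ker]
        show (q %ₘ μ).map f0 = 0
        exact h0
      rwa [ker_mapRingHom, hf0def, ZMod.ker_intCastRingHom, Ideal.map_span,
        Set.image_singleton] at h1
    obtain ⟨u, hu⟩ := Ideal.mem_span_singleton.mp hker
    refine ⟨q /ₘ μ, u, ?_⟩
    conv_lhs => rw [← modByMonic_add_div q μ]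
    rw [hu, add_comm]
  -- membership in 𝓟 forces divisibility by μ mod p
  have Advd : ∀ q : ℤ[X], aeval θ' q ∈ 𝓟 → μ.map f0 ∣ q.map f0 := by
    intro q hq
    obtain ⟨s, u, hqe⟩ := decomp q hq
    refine ⟨s.map f0, ?_⟩
    rw [hqe, Polynomial.map_add, Polynomial.map_mul, Polynomial.map_mul, Polynomial.map_C]
    have hp0 : f0 ((p : ℕ) : ℤ) = 0 := by
      rw [hf0def]
      simp
    rw [hp0, C_0, zero_mul, add_zero]
  -- the minimal polynomial relation in R
  have hfθ0 : aeval θ' (minpoly ℤ θ) = 0 := by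
    apply Subtype.ext
    rw [ZeroMemClass.coe_zero, ← Subalgebra.aeval_coe]
    exact minpoly.aeval ℤ θ
  have hrel : aeval θ' μ * aeval θ' h +
      algebraMap ℤ (Algebra.adjoin ℤ {θ}) ((p : ℕ) : ℤ) * aeval θ' g = 0 := by
    have h2 := hfθ0
    rw [hf, map_add, map_mul, map_mul, aeval_C] at h2
    exact h2
  -- instances on the localization
  haveI hfinR : Module.Finite ℤ (Algebra.adjoin ℤ {θ}) :=
    Module.Finite.iff_fg.mpr hθ.fg_adjoin_singleton
  haveI hnoethR : IsNoetherianRing (Algebra.adjoin ℤ {θ}) :=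
    Algebra.FiniteType.isNoetherianRing ℤ _
  haveI : IsNoetherianRing (Localization.AtPrime 𝓟) :=
    IsLocalization.isNoetherianRing 𝓟.primeCompl _ hnoethR
  haveI : IsDomain (Localization.AtPrime 𝓟) :=
    IsLocalization.isDomain_localization 𝓟.primeCompl_le_nonZeroDivisors
  set φ := algebraMap (Algebra.adjoin ℤ {θ}) (Localization.AtPrime 𝓟) with hφdef
  have hφinj : Function.Injective φ :=
    IsLocalization.injective _ 𝓟.primeCompl_le_nonZeroDivisors
  have hpR0 : algebraMap ℤ (Algebra.adjoin ℤ {θ}) ((p : ℕ) : ℤ) ≠ 0 := by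
    intro h0
    have h1 := congrArg (fun x : Algebra.adjoin ℤ {θ} => (x : ℂ)) h0
    push_cast at h1
    exact hp.ne_zero (by exact_mod_cast h1)
  have hpLne : φ (algebraMap ℤ (Algebra.adjoin ℤ {θ}) ((p : ℕ) : ℤ)) ≠ 0 := by
    intro h0
    exact hpR0 (hφinj (h0.trans (map_zero φ).symm))
  have hnf : ¬ IsField (Localization.AtPrime 𝓟) := by
    intro hfield
    have hbot := IsLocalRing.isField_iff_maximalIdeal_eq.mp hfield
    have hmem : φ (algebraMap ℤ (Algebra.adjoin ℤ {θ}) ((p : ℕ) : ℤ)) ∈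
        IsLocalRing.maximalIdeal (Localization.AtPrime 𝓟) := by
      rw [← Localization.AtPrime.map_eq_maximalIdeal]
      exact Ideal.mem_map_of_mem _ hpP
    rw [hbot] at hmem
    exact hpLne hmem
  -- produce a single generator of the maximal ideal of the localization
  have hπ : ∃ π : Algebra.adjoin ℤ {θ}, π ∈ 𝓟 ∧ ∀ x ∈ 𝓟, φ x ∈ Ideal.span {φ π} := by
    by_cases hcase : μ.map f0 ∣ h.map f0
    · -- here g(θ) is a unit locally; π = μ(θ)
      have hgnd : ¬ μ.map f0 ∣ g.map f0 := by
        intro hdg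
        have hdall := EuclideanDomain.dvd_gcd (EuclideanDomain.dvd_gcd dvd_rfl hdg) hcase
        have hunit : IsUnit (μ.map f0) := isUnit_of_dvd_unit hdall hgcd
        have hμ1 : μ = 1 := hμmonic.natDegree_eq_zero.mp
          (by rw [← hμmonic.natDegree_map f0, (hμmonic.map f0).eq_one_of_isUnit hunit,
            natDegree_one])
        rw [hμ1, map_one] at hμ𝓟
        exact Ideal.IsMaximal.ne_top ‹_› ((Ideal.eq_top_iff_one 𝓟).mpr hμ𝓟)
      have hgP : aeval θ' g ∉ 𝓟 := fun hmem => hgnd (Advd g hmem)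
      have hgu : IsUnit (φ (aeval θ' g)) :=
        IsLocalization.map_units _ (⟨aeval θ' g, hgP⟩ : 𝓟.primeCompl)
      obtain ⟨cinv, hcinv⟩ := isUnit_iff_exists_inv.mp hgu
      have hR2 : algebraMap ℤ (Algebra.adjoin ℤ {θ}) ((p : ℕ) : ℤ) * aeval θ' g =
          -(aeval θ' μ * aeval θ' h) := eq_neg_of_add_eq_zero_right hrel
      have h2 : φ (algebraMap ℤ (Algebra.adjoin ℤ {θ}) ((p : ℕ) : ℤ)) * φ (aeval θ' g) =
          -(φ (aeval θ' μ) * φ (aeval θ' h)) := by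
        rw [← map_mul, hR2, map_neg, map_mul]
      have hdvdp : φ (aeval θ' μ) ∣ φ (algebraMap ℤ (Algebra.adjoin ℤ {θ}) ((p : ℕ) : ℤ)) := by
        refine ⟨-(φ (aeval θ' h) * cinv), ?_⟩
        calc φ (algebraMap ℤ (Algebra.adjoin ℤ {θ}) ((p : ℕ) : ℤ))
            = φ (algebraMap ℤ (Algebra.adjoin ℤ {θ}) ((p : ℕ) : ℤ)) * (φ (aeval θ' g) * cinv) := by
              rw [hcinv, mul_one]
          _ = φ (algebraMap ℤ (Algebra.adjoin ℤ {θ}) ((p : ℕ) : ℤ)) * φ (aeval θ' g) * cinv := by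
              ring
          _ = -(φ (aeval θ' μ) * φ (aeval θ' h)) * cinv := by rw [h2]
          _ = φ (aeval θ' μ) * -(φ (aeval θ' h) * cinv) := by ring
      refine ⟨aeval θ' μ, hμ𝓟, ?_⟩
      intro x hx
      obtain ⟨q, hq⟩ := hrepr x
      obtain ⟨s, u, hqe⟩ := decomp q (by rw [hq]; exact hx)
      rw [Ideal.mem_span_singleton]
      have hxe : x = aeval θ' μ * aeval θ' s +
          algebraMap ℤ (Algebra.adjoin ℤ {θ}) ((p : ℕ) : ℤ) * aeval θ' u := by
        rw [← hq, hqe, map_add, map_mul, map_mul, aeval_C]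
      rw [hxe, map_add, map_mul, map_mul]
      exact dvd_add (dvd_mul_right _ _) ((hdvdp).mul_right _)
    · -- here h(θ) is a unit locally; π = p
      have hhP : aeval θ' h ∉ 𝓟 := fun hmem => hcase (Advd h hmem)
      have hhu : IsUnit (φ (aeval θ' h)) :=
        IsLocalization.map_units _ (⟨aeval θ' h, hhP⟩ : 𝓟.primeCompl)
      obtain ⟨cinv, hcinv⟩ := isUnit_iff_exists_inv.mp hhu
      have hR2 : aeval θ' μ * aeval θ' h =
          -(algebraMap ℤ (Algebra.adjoin ℤ {θ}) ((p : ℕ) : ℤ) * aeval θ' g) :=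
        eq_neg_of_add_eq_zero_left hrel
      have h2 : φ (aeval θ' μ) * φ (aeval θ' h) =
          -(φ (algebraMap ℤ (Algebra.adjoin ℤ {θ}) ((p : ℕ) : ℤ)) * φ (aeval θ' g)) := by
        rw [← map_mul, hR2, map_neg, map_mul]
      have hdvdμ : φ (algebraMap ℤ (Algebra.adjoin ℤ {θ}) ((p : ℕ) : ℤ)) ∣ φ (aeval θ' μ) := by
        refine ⟨-(φ (aeval θ' g) * cinv), ?_⟩
        calc φ (aeval θ' μ)
            = φ (aeval θ' μ) * (φ (aeval θ' h) * cinv) := by rw [hcinv, mul_one]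
          _ = φ (aeval θ' μ) * φ (aeval θ' h) * cinv := by ring
          _ = -(φ (algebraMap ℤ (Algebra.adjoin ℤ {θ}) ((p : ℕ) : ℤ)) * φ (aeval θ' g)) * cinv := by
              rw [h2]
          _ = φ (algebraMap ℤ (Algebra.adjoin ℤ {θ}) ((p : ℕ) : ℤ)) * -(φ (aeval θ' g) * cinv) := by
              ring
      refine ⟨algebraMap ℤ (Algebra.adjoin ℤ {θ}) ((p : ℕ) : ℤ), hpP, ?_⟩
      intro x hx
      obtain ⟨q, hq⟩ := hrepr x
      obtain ⟨s, u, hqe⟩ := decomp q (by rw [hq]; exact hx)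
      rw [Ideal.mem_span_singleton]
      have hxe : x = aeval θ' μ * aeval θ' s +
          algebraMap ℤ (Algebra.adjoin ℤ {θ}) ((p : ℕ) : ℤ) * aeval θ' u := by
        rw [← hq, hqe, map_add, map_mul, map_mul, aeval_C]
      rw [hxe, map_add, map_mul, map_mul]
      exact dvd_add ((hdvdμ).mul_right _) (dvd_mul_right _ _)
  obtain ⟨π, hπP, hπgen⟩ := hπ
  have hmax : IsLocalRing.maximalIdeal (Localization.AtPrime 𝓟) = Ideal.span {φ π} := by
    rw [← Localization.AtPrime.map_eq_maximalIdeal]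
    apply le_antisymm
    · rw [Ideal.map_le_iff_le_comap]
      intro x hx
      exact hπgen x hx
    · rw [Ideal.span_le, Set.singleton_subset_iff]
      exact Ideal.mem_map_of_mem _ hπP
  have hprin : (IsLocalRing.maximalIdeal (Localization.AtPrime 𝓟)).IsPrincipal := ⟨⟨φ π, hmax⟩⟩
  exact ((IsDiscreteValuationRing.TFAE (Localization.AtPrime 𝓟) hnf).out 0 4).mpr hprin
end

section
/- Let θ be an algebraic integer with minimal polynomial f ∈ ℤ[t], let R = ℤ[θ], let 𝒫 be a maximal ideal of R, and let p be the rational prime with 𝒫 ∩ ℤ = pℤ. Let μ_𝒫 ∈ ℤ[t] be a monic polynomial of least degree such that μ_𝒫(θ) ∈ 𝒫. The following statements are equivalent: (1) the localization R_𝒫 is a discrete valuation ring; (2) for every g, h ∈ ℤ[t] such that f = μ_𝒫·h + p·g, one has gcd(μ̄_𝒫, ḡ, h̄) = 1 in 𝔽_p[t]; (3) there exist g, h ∈ ℤ[t] such that f = μ_𝒫·h + p·g and gcd(μ̄_𝒫, ḡ, h̄) = 1 in 𝔽_p[t]; (4) f does not lie in the square of the ideal (p, μ_𝒫(t)) of ℤ[t].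 -/
open Polynomial

set_option maxHeartbeats 2000000
set_option synthInstance.maxHeartbeats 1000000
set_option linter.unusedSectionVars false
set_option linter.unusedVariables false

namespace LuneburgAux

noncomputable section

variable {p : ℕ} [Fact p.Prime]

/-- reduction mod p of an integer polynomial -/
local notation "red" => Polynomial.map (Int.castRingHom (ZMod p))

lemma map_eq_zero_iff' (A : ℤ[X]) :
    A.map (Int.castRingHom (ZMod p)) = 0 ↔ ∃ B, A = C (p : ℤ) * B := by
  constructor
  · intro h
    have : ∀ i, (p : ℤ) ∣ A.coeff i := by
      intro i
      have := congrArg (fun q => Polynomial.coeff q i) h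
      simp only [coeff_map, coeff_zero] at this
      exact (ZMod.intCast_zmod_eq_zero_iff_dvd _ _).mp this
    obtain ⟨B, hB⟩ := (Polynomial.C_dvd_iff_dvd_coeff _ _).mpr this
    exact ⟨B, hB⟩
  · rintro ⟨B, rfl⟩
    simp [Polynomial.map_mul]

lemma dvd_of_dvd_p_mul {μ q : ℤ[X]} (hμ : μ.Monic) (h : μ ∣ C (p : ℤ) * q) : μ ∣ q := by
  obtain ⟨d, hd⟩ := h
  have hmap : (μ.map (Int.castRingHom (ZMod p))) * (d.map (Int.castRingHom (ZMod p))) = 0 := by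
    have := congrArg (Polynomial.map (Int.castRingHom (ZMod p))) hd
    simpa [Polynomial.map_mul] using this.symm
  have hd0 : d.map (Int.castRingHom (ZMod p)) = 0 := by
    rcases mul_eq_zero.mp hmap with h | h
    · exact absurd h (hμ.map _).ne_zero
    · exact h
  obtain ⟨e, rfl⟩ := (map_eq_zero_iff' d).mp hd0
  refine ⟨e, ?_⟩
  have hp0 : (C (p : ℤ)) ≠ 0 := by
    simp only [ne_eq, C_eq_zero]
    exact_mod_cast (Fact.out : p.Prime).ne_zero
  apply mul_left_cancel₀ hp0
  rw [hd]; ring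

lemma map_dvd_iff {μ : ℤ[X]} (hμ : μ.Monic) (q : ℤ[X]) :
    μ.map (Int.castRingHom (ZMod p)) ∣ q.map (Int.castRingHom (ZMod p)) ↔
      ∃ a b, q = μ * a + C (p : ℤ) * b := by
  constructor
  · intro h
    have hmod : (q %ₘ μ).map (Int.castRingHom (ZMod p)) = 0 := by
      rw [Polynomial.map_modByMonic _ hμ]
      exact (modByMonic_eq_zero_iff_dvd (hμ.map _)).mpr h
    obtain ⟨B, hB⟩ := (map_eq_zero_iff' _).mp hmod
    refine ⟨q /ₘ μ, B, ?_⟩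
    conv_lhs => rw [← modByMonic_add_div q μ]
    rw [hB]; ring
  · rintro ⟨a, b, rfl⟩
    refine Dvd.intro (a.map (Int.castRingHom (ZMod p))) ?_
    simp [Polynomial.map_add, Polynomial.map_mul]

lemma sq_mem_iff {α : Type*} [CommRing α] (x y f : α) :
    f ∈ (Ideal.span {x, y}) ^ 2 ↔ ∃ a b c, f = x * x * a + x * y * b + y * y * c := by
  constructor
  · intro hf
    rw [pow_two] at hf
    have hle : Ideal.span {x, y} * Ideal.span {x, y} ≤
        Ideal.span ({x * x, x * y, y * y} : Set α) := by
      rw [Ideal.mul_le]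
      intro r hr s hs
      obtain ⟨a, b, rfl⟩ := Ideal.mem_span_pair.mp hr
      obtain ⟨c, d, rfl⟩ := Ideal.mem_span_pair.mp hs
      have : (a * x + b * y) * (c * x + d * y) =
          (a * c) * (x * x) + (a * d + b * c) * (x * y) + (b * d) * (y * y) := by ring
      rw [this]
      refine Ideal.add_mem _ (Ideal.add_mem _ ?_ ?_) ?_ <;>
        exact Ideal.mul_mem_left _ _ (Ideal.subset_span (by simp))
    have hf' := hle hf
    rw [Ideal.mem_span_insert] at hf'
    obtain ⟨a, z, hz, rfl⟩ := hf'
    rw [Ideal.mem_span_insert] at hz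
    obtain ⟨b, w, hw, rfl⟩ := hz
    rw [Ideal.mem_span_singleton'] at hw
    obtain ⟨c, rfl⟩ := hw
    exact ⟨a, b, c, by ring⟩
  · rintro ⟨a, b, c, rfl⟩
    rw [pow_two]
    have hx' : x ∈ Ideal.span ({x, y} : Set α) := Ideal.subset_span (by simp)
    have hy' : y ∈ Ideal.span ({x, y} : Set α) := Ideal.subset_span (by simp)
    refine Ideal.add_mem _ (Ideal.add_mem _ ?_ ?_) ?_
    · rw [mul_assoc]
      exact Ideal.mul_mem_mul hx' (Ideal.mul_mem_right a _ hx')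
    · rw [mul_assoc]
      exact Ideal.mul_mem_mul hx' (Ideal.mul_mem_right b _ hy')
    · rw [mul_assoc]
      exact Ideal.mul_mem_mul hy' (Ideal.mul_mem_right c _ hy')

lemma span_pair_principal {α : Type*} [CommRing α] [IsDomain α] [IsLocalRing α] {a b : α}
    (h : (Ideal.span {a, b}).IsPrincipal) :
    a ∈ Ideal.span ({b} : Set α) ∨ b ∈ Ideal.span ({a} : Set α) := by
  obtain ⟨x, hx0⟩ := h
  have hx : Ideal.span ({a, b} : Set α) = Ideal.span ({x} : Set α) := by
    rw [hx0, Ideal.submodule_span_eq]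
  have ha : a ∈ Ideal.span ({x} : Set α) := by
    rw [← hx]; exact Ideal.subset_span (by simp)
  have hb : b ∈ Ideal.span ({x} : Set α) := by
    rw [← hx]; exact Ideal.subset_span (by simp)
  obtain ⟨s, hs⟩ := Ideal.mem_span_singleton'.mp ha
  obtain ⟨t, ht⟩ := Ideal.mem_span_singleton'.mp hb
  have hxm : x ∈ Ideal.span ({a, b} : Set α) := by rw [hx]; exact Ideal.subset_span (by simp)
  obtain ⟨u, v, huv⟩ := Ideal.mem_span_pair.mp hxm
  rcases eq_or_ne x 0 with rfl | hx0
  · left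
    rw [← hs, mul_zero]
    exact Ideal.zero_mem _
  · have h1 : (u * s + v * t) * x = x := by
      calc (u * s + v * t) * x = u * (s * x) + v * (t * x) := by ring
        _ = u * a + v * b := by rw [hs, ht]
        _ = x := huv
    have h2 : u * s + v * t = 1 := by
      have := mul_right_cancel₀ hx0 (h1.trans (one_mul x).symm)
      exact this
    rcases IsLocalRing.isUnit_or_isUnit_of_isUnit_add (h2 ▸ isUnit_one) with hu | hv
    · right
      have hsu : IsUnit s := isUnit_of_mul_isUnit_right hu
      obtain ⟨w, hw⟩ := hsu.exists_left_inv
      rw [Ideal.mem_span_singleton', ← ht]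
      refine ⟨t * w, ?_⟩
      calc t * w * a = t * w * (s * x) := by rw [hs]
        _ = t * (w * s) * x := by ring
        _ = t * x := by rw [hw, mul_one]
    · left
      have htu : IsUnit t := isUnit_of_mul_isUnit_right hv
      obtain ⟨w, hw⟩ := htu.exists_left_inv
      rw [Ideal.mem_span_singleton', ← hs]
      refine ⟨s * w, ?_⟩
      calc s * w * b = s * w * (t * x) := by rw [ht]
        _ = s * (w * t) * x := by ring
        _ = s * x := by rw [hw, mul_one]

section Theta

variable (θ : ℂ) (𝓟 : Ideal (Algebra.adjoin ℤ {θ})) (p : ℕ) [Fact p.Prime] (μ : ℤ[X])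

/-- `p ∈ 𝓟` -/
lemma p_mem (h𝓟p : 𝓟.comap (algebraMap ℤ (Algebra.adjoin ℤ {θ})) = Ideal.span {(p : ℤ)}) :
    algebraMap ℤ (Algebra.adjoin ℤ {θ}) (p : ℤ) ∈ 𝓟 := by
  have h1 : (p : ℤ) ∈ 𝓟.comap (algebraMap ℤ (Algebra.adjoin ℤ {θ})) := by
    rw [h𝓟p]; exact Ideal.subset_span rfl
  exact Ideal.mem_comap.mp h1

lemma aeval_surjective :
    Function.Surjective
      ⇑(aeval (⟨θ, Algebra.self_mem_adjoin_singleton ℤ θ⟩ : Algebra.adjoin ℤ {θ}) :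
        ℤ[X] →ₐ[ℤ] (Algebra.adjoin ℤ {θ})) := by
  intro x
  have hx : (x : ℂ) ∈ (aeval θ : ℤ[X] →ₐ[ℤ] ℂ).range := by
    rw [← Algebra.adjoin_singleton_eq_range_aeval]; exact x.2
  obtain ⟨q, hq⟩ := hx
  exact ⟨q, Subtype.ext (by simpa [Polynomial.aeval_algebraMap_apply] using hq)⟩

lemma minpoly_eq' :
    minpoly ℤ θ =
      minpoly ℤ (⟨θ, Algebra.self_mem_adjoin_singleton ℤ θ⟩ : Algebra.adjoin ℤ {θ}) := by
  have hinj : Function.Injective (algebraMap (Algebra.adjoin ℤ {θ}) ℂ) :=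
    fun a b h => Subtype.ext h
  exact minpoly.algebraMap_eq (A := ℤ) (B := (Algebra.adjoin ℤ {θ})) (B' := ℂ) hinj
    ⟨θ, Algebra.self_mem_adjoin_singleton ℤ θ⟩

/-- key minimality consequence: small-degree elements of `𝓟` have all coefficients
divisible by `p`. -/
lemma coeffs_dvd_of_low_degree
    (h𝓟p : 𝓟.comap (algebraMap ℤ (Algebra.adjoin ℤ {θ})) = Ideal.span {(p : ℤ)})
    (hμmin : ∀ q : ℤ[X], q.Monic →
      aeval (⟨θ, Algebra.self_mem_adjoin_singleton ℤ θ⟩ : Algebra.adjoin ℤ {θ}) q ∈ 𝓟 →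
      μ.degree ≤ q.degree)
    (r : ℤ[X]) (hdeg : r.degree < μ.degree)
    (hr : aeval (⟨θ, Algebra.self_mem_adjoin_singleton ℤ θ⟩ : Algebra.adjoin ℤ {θ}) r ∈ 𝓟) :
    ∃ B, r = C (p : ℤ) * B := by
  by_contra hcon
  have hr0 : r.map (Int.castRingHom (ZMod p)) ≠ 0 := fun h => hcon ((map_eq_zero_iff' r).mp h)
  set ρ' : (ZMod p)[X] := r.map (Int.castRingHom (ZMod p)) with hρ'
  have hc : ρ'.leadingCoeff ≠ 0 := leadingCoeff_ne_zero.mpr hr0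
  set ρ : (ZMod p)[X] := ρ' * C ρ'.leadingCoeff⁻¹ with hρ
  have hρmonic : ρ.Monic := monic_mul_leadingCoeff_inv hr0
  have hsurj : Function.Surjective (Int.castRingHom (ZMod p)) := ZMod.intCast_surjective
  have hlift : ρ ∈ Polynomial.lifts (Int.castRingHom (ZMod p)) := by
    rw [Polynomial.mem_lifts]
    obtain ⟨q, hq⟩ := Polynomial.map_surjective _ hsurj ρ
    exact ⟨q, hq⟩
  obtain ⟨q0, hq0map, hq0deg, hq0monic⟩ :=
    Polynomial.lifts_and_degree_eq_and_monic hlift hρmonic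
  obtain ⟨c', hc'⟩ := hsurj ρ'.leadingCoeff⁻¹
  have hmapeq : (q0 - C c' * r).map (Int.castRingHom (ZMod p)) = 0 := by
    rw [Polynomial.map_sub, Polynomial.map_mul, Polynomial.map_C, hc', hq0map, hρ]
    ring
  obtain ⟨B, hB⟩ := (map_eq_zero_iff' _).mp hmapeq
  have hq0P : aeval (⟨θ, Algebra.self_mem_adjoin_singleton ℤ θ⟩ : Algebra.adjoin ℤ {θ}) q0 ∈ 𝓟 := by
    have hq0eq : q0 = C c' * r + C (p : ℤ) * B := by linear_combination hB
    rw [hq0eq, map_add, map_mul, map_mul, aeval_C, aeval_C]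
    exact Ideal.add_mem _ (Ideal.mul_mem_left _ _ hr)
      (Ideal.mul_mem_right _ _ (p_mem θ 𝓟 p h𝓟p))
  have hfinal : μ.degree ≤ q0.degree := hμmin q0 hq0monic hq0P
  rw [hq0deg] at hfinal
  have h1 : ρ.degree = ρ'.degree := by
    rw [hρ, degree_mul, degree_C (inv_ne_zero hc), add_zero]
  have h2 : ρ'.degree ≤ r.degree := Polynomial.degree_map_le
  rw [h1] at hfinal
  exact absurd (lt_of_le_of_lt (hfinal.trans h2) hdeg) (lt_irrefl _)

lemma mem_P_iff
    (h𝓟p : 𝓟.comap (algebraMap ℤ (Algebra.adjoin ℤ {θ})) = Ideal.span {(p : ℤ)})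
    (hμmonic : μ.Monic)
    (hμ𝓟 : aeval (⟨θ, Algebra.self_mem_adjoin_singleton ℤ θ⟩ : Algebra.adjoin ℤ {θ}) μ ∈ 𝓟)
    (hμmin : ∀ q : ℤ[X], q.Monic →
      aeval (⟨θ, Algebra.self_mem_adjoin_singleton ℤ θ⟩ : Algebra.adjoin ℤ {θ}) q ∈ 𝓟 →
      μ.degree ≤ q.degree)
    (q : ℤ[X]) :
    aeval (⟨θ, Algebra.self_mem_adjoin_singleton ℤ θ⟩ : Algebra.adjoin ℤ {θ}) q ∈ 𝓟 ↔
      ∃ a b, q = μ * a + C (p : ℤ) * b := by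
  constructor
  · intro hq
    have hdeg : (q %ₘ μ).degree < μ.degree := degree_modByMonic_lt q hμmonic
    have hmem : aeval (⟨θ, Algebra.self_mem_adjoin_singleton ℤ θ⟩ : Algebra.adjoin ℤ {θ})
        (q %ₘ μ) ∈ 𝓟 := by
      have heq : q %ₘ μ = q - μ * (q /ₘ μ) := by
        have := modByMonic_add_div q μ
        linear_combination this
      rw [heq, map_sub, map_mul]
      exact Ideal.sub_mem _ hq (Ideal.mul_mem_right _ _ hμ𝓟)
    obtain ⟨B, hB⟩ := coeffs_dvd_of_low_degree θ 𝓟 p μ h𝓟p hμmin _ hdeg hmem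
    refine ⟨q /ₘ μ, B, ?_⟩
    conv_lhs => rw [← modByMonic_add_div q μ]
    rw [hB]; ring
  · rintro ⟨a, b, rfl⟩
    rw [map_add, map_mul, map_mul, aeval_C]
    exact Ideal.add_mem _ (Ideal.mul_mem_right _ _ hμ𝓟)
      (Ideal.mul_mem_right _ _ (p_mem θ 𝓟 p h𝓟p))

lemma exists_decomposition
    (h𝓟p : 𝓟.comap (algebraMap ℤ (Algebra.adjoin ℤ {θ})) = Ideal.span {(p : ℤ)})
    (hμmonic : μ.Monic)
    (hμ𝓟 : aeval (⟨θ, Algebra.self_mem_adjoin_singleton ℤ θ⟩ : Algebra.adjoin ℤ {θ}) μ ∈ 𝓟)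
    (hμmin : ∀ q : ℤ[X], q.Monic →
      aeval (⟨θ, Algebra.self_mem_adjoin_singleton ℤ θ⟩ : Algebra.adjoin ℤ {θ}) q ∈ 𝓟 →
      μ.degree ≤ q.degree) :
    ∃ g h : ℤ[X], minpoly ℤ θ = μ * h + C (p : ℤ) * g := by
  have h0 : aeval (⟨θ, Algebra.self_mem_adjoin_singleton ℤ θ⟩ : Algebra.adjoin ℤ {θ})
      (minpoly ℤ θ) = 0 := by
    rw [minpoly_eq' θ]; exact minpoly.aeval ℤ _
  have hmem : aeval (⟨θ, Algebra.self_mem_adjoin_singleton ℤ θ⟩ : Algebra.adjoin ℤ {θ})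
      (minpoly ℤ θ) ∈ 𝓟 := by rw [h0]; exact Ideal.zero_mem _
  obtain ⟨a, b, hab⟩ := (mem_P_iff θ 𝓟 p μ h𝓟p hμmonic hμ𝓟 hμmin _).mp hmem
  exact ⟨b, a, hab⟩

lemma decomp_unique {μ : ℤ[X]} (hμmonic : μ.Monic) {F h g h' g' : ℤ[X]}
    (e1 : F = μ * h + C (p : ℤ) * g) (e2 : F = μ * h' + C (p : ℤ) * g') :
    ∃ k, h = h' + C (p : ℤ) * k ∧ g' = g + μ * k := by
  have e : C (p : ℤ) * (g' - g) = μ * (h - h') := by linear_combination e1 - e2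
  have hdvd : μ ∣ C (p : ℤ) * (g' - g) := ⟨h - h', e⟩
  obtain ⟨k, hk⟩ := dvd_of_dvd_p_mul hμmonic hdvd
  refine ⟨k, ?_, by linear_combination hk⟩
  have hμ0 : μ ≠ 0 := hμmonic.ne_zero
  have : μ * (h - h') = μ * (C (p : ℤ) * k) := by
    rw [← e, hk]; ring
  have := mul_left_cancel₀ hμ0 this
  linear_combination this

lemma red_C_p : (C (p : ℤ)).map (Int.castRingHom (ZMod p)) = 0 := by
  rw [Polynomial.map_C]
  simp

lemma mem_sq_iff {μ : ℤ[X]} (hμmonic : μ.Monic) {F g h : ℤ[X]}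
    (hf : F = μ * h + C (p : ℤ) * g) :
    F ∈ (Ideal.span {C (p : ℤ), μ}) ^ 2 ↔
      (μ.map (Int.castRingHom (ZMod p)) ∣ g.map (Int.castRingHom (ZMod p)) ∧
       μ.map (Int.castRingHom (ZMod p)) ∣ h.map (Int.castRingHom (ZMod p))) := by
  constructor
  · intro hmem
    obtain ⟨A, B, Cc, hrep⟩ := (sq_mem_iff _ _ _).mp hmem
    have e2 : F = μ * (μ * Cc + C (p : ℤ) * B) + C (p : ℤ) * (C (p : ℤ) * A) := by
      linear_combination hrep
    obtain ⟨k, hk1, hk2⟩ := decomp_unique (p := p) hμmonic hf e2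
    have hg' := congrArg (Polynomial.map (Int.castRingHom (ZMod p))) hk2
    have hh' := congrArg (Polynomial.map (Int.castRingHom (ZMod p))) hk1
    simp only [Polynomial.map_add, Polynomial.map_mul, red_C_p, zero_mul, add_zero,
      zero_add, mul_zero] at hg' hh'
    constructor
    · exact ⟨-(k.map (Int.castRingHom (ZMod p))), by linear_combination -hg'⟩
    · exact ⟨Cc.map (Int.castRingHom (ZMod p)), by linear_combination hh'⟩
  · rintro ⟨hg, hh⟩
    obtain ⟨a, b, hab⟩ := (map_dvd_iff hμmonic h).mp hh
    obtain ⟨c, d, hcd⟩ := (map_dvd_iff hμmonic g).mp hg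
    refine (sq_mem_iff _ _ _).mpr ⟨d, b + c, a, ?_⟩
    linear_combination hf + μ * hab + C (p : ℤ) * hcd

lemma natDegree_pos_of_not_isUnit' {K : Type*} [Field K] {x : K[X]} (h0 : x ≠ 0)
    (hu : ¬IsUnit x) : 0 < x.natDegree := by
  rcases Nat.eq_zero_or_pos x.natDegree with h | h
  · exfalso
    have hx := Polynomial.eq_C_of_natDegree_eq_zero h
    apply hu
    rw [hx]
    refine Polynomial.isUnit_C.mpr (isUnit_iff_ne_zero.mpr fun hc => h0 ?_)
    rw [hx, hc, map_zero]
  · exact h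

lemma gcd_isUnit_iff {M : (ZMod p)[X]} (hirr : Irreducible M) (G H : (ZMod p)[X]) :
    IsUnit (EuclideanDomain.gcd (EuclideanDomain.gcd M G) H) ↔ ¬(M ∣ G ∧ M ∣ H) := by
  constructor
  · rintro hu ⟨hG, hH⟩
    have hdvd : M ∣ EuclideanDomain.gcd (EuclideanDomain.gcd M G) H :=
      EuclideanDomain.dvd_gcd (EuclideanDomain.dvd_gcd dvd_rfl hG) hH
    exact hirr.not_isUnit (isUnit_of_dvd_unit hdvd hu)
  · intro hn
    by_contra hu
    have h1 : EuclideanDomain.gcd (EuclideanDomain.gcd M G) H ∣ M :=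
      dvd_trans (EuclideanDomain.gcd_dvd_left _ _) (EuclideanDomain.gcd_dvd_left _ _)
    have hG : EuclideanDomain.gcd (EuclideanDomain.gcd M G) H ∣ G :=
      dvd_trans (EuclideanDomain.gcd_dvd_left _ _) (EuclideanDomain.gcd_dvd_right _ _)
    have hH : EuclideanDomain.gcd (EuclideanDomain.gcd M G) H ∣ H :=
      EuclideanDomain.gcd_dvd_right _ _
    obtain ⟨E, hE⟩ := h1
    rcases hirr.isUnit_or_isUnit hE with h | h
    · exact hu h
    · obtain ⟨u, hu'⟩ := h
      have heq : M * ↑u⁻¹ = EuclideanDomain.gcd (EuclideanDomain.gcd M G) H := by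
        conv_lhs => rw [hE, ← hu']
        rw [mul_assoc, Units.mul_inv, mul_one]
      have hMD : M ∣ EuclideanDomain.gcd (EuclideanDomain.gcd M G) H := ⟨↑u⁻¹, heq.symm⟩
      exact hn ⟨hMD.trans hG, hMD.trans hH⟩

lemma mu_natDegree_pos [𝓟.IsMaximal] (hμmonic : μ.Monic)
    (hμ𝓟 : aeval (⟨θ, Algebra.self_mem_adjoin_singleton ℤ θ⟩ : Algebra.adjoin ℤ {θ}) μ ∈ 𝓟) :
    0 < μ.natDegree := by
  rcases Nat.eq_zero_or_pos μ.natDegree with h | h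
  · exfalso
    have hμ1 : μ = 1 := hμmonic.natDegree_eq_zero.mp h
    rw [hμ1, map_one] at hμ𝓟
    exact (Ideal.IsMaximal.ne_top inferInstance) ((Ideal.eq_top_iff_one _).mpr hμ𝓟)
  · exact h

lemma red_irreducible [𝓟.IsMaximal]
    (h𝓟p : 𝓟.comap (algebraMap ℤ (Algebra.adjoin ℤ {θ})) = Ideal.span {(p : ℤ)})
    (hμmonic : μ.Monic)
    (hμ𝓟 : aeval (⟨θ, Algebra.self_mem_adjoin_singleton ℤ θ⟩ : Algebra.adjoin ℤ {θ}) μ ∈ 𝓟)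
    (hμmin : ∀ q : ℤ[X], q.Monic →
      aeval (⟨θ, Algebra.self_mem_adjoin_singleton ℤ θ⟩ : Algebra.adjoin ℤ {θ}) q ∈ 𝓟 →
      μ.degree ≤ q.degree) :
    Irreducible (μ.map (Int.castRingHom (ZMod p))) := by
  have hprime : 𝓟.IsPrime := inferInstance
  have hdeg0 : 0 < μ.natDegree := mu_natDegree_pos θ 𝓟 μ hμmonic hμ𝓟
  have hMmonic : (μ.map (Int.castRingHom (ZMod p))).Monic := hμmonic.map _
  have hsurj : Function.Surjective (Int.castRingHom (ZMod p)) := ZMod.intCast_surjective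
  constructor
  · apply Polynomial.not_isUnit_of_natDegree_pos
    rwa [hμmonic.natDegree_map]
  · intro a b hab
    by_contra hcon
    push_neg at hcon
    obtain ⟨ha, hb⟩ := hcon
    have ha0 : a ≠ 0 := by
      rintro rfl; rw [zero_mul] at hab; exact hMmonic.ne_zero hab
    have hb0 : b ≠ 0 := by
      rintro rfl; rw [mul_zero] at hab; exact hMmonic.ne_zero hab
    have hc : a.leadingCoeff ≠ 0 := leadingCoeff_ne_zero.mpr ha0
    have ha'monic : (a * C a.leadingCoeff⁻¹).Monic := monic_mul_leadingCoeff_inv ha0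
    have hlc : a.leadingCoeff * b.leadingCoeff = 1 := by
      have h1 := hMmonic
      unfold Polynomial.Monic at h1
      rw [hab, leadingCoeff_mul] at h1
      exact h1
    have hb'monic : (b * C a.leadingCoeff).Monic := by
      unfold Polynomial.Monic
      rw [leadingCoeff_mul, leadingCoeff_C, mul_comm]
      exact hlc
    have hab' : (a * C a.leadingCoeff⁻¹) * (b * C a.leadingCoeff)
        = μ.map (Int.castRingHom (ZMod p)) := by
      calc (a * C a.leadingCoeff⁻¹) * (b * C a.leadingCoeff)
          = (a * b) * C (a.leadingCoeff⁻¹ * a.leadingCoeff) := by rw [C_mul]; ring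
        _ = μ.map (Int.castRingHom (ZMod p)) := by
            rw [inv_mul_cancel₀ hc, C_1, mul_one, ← hab]
    obtain ⟨A, hAmap, hAdeg, hAmonic⟩ := Polynomial.lifts_and_degree_eq_and_monic
      ((Polynomial.mem_lifts _).mpr (Polynomial.map_surjective _ hsurj _)) ha'monic
    obtain ⟨B, hBmap, hBdeg, hBmonic⟩ := Polynomial.lifts_and_degree_eq_and_monic
      ((Polynomial.mem_lifts _).mpr (Polynomial.map_surjective _ hsurj _)) hb'monic
    have hABmap : (μ - A * B).map (Int.castRingHom (ZMod p)) = 0 := by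
      rw [Polynomial.map_sub, Polynomial.map_mul, hAmap, hBmap, hab', sub_self]
    obtain ⟨E, hE⟩ := (map_eq_zero_iff' _).mp hABmap
    have hABP : aeval (⟨θ, Algebra.self_mem_adjoin_singleton ℤ θ⟩ : Algebra.adjoin ℤ {θ})
        (A * B) ∈ 𝓟 := by
      have heq : (A * B : ℤ[X]) = μ - C (p : ℤ) * E := by linear_combination -hE
      rw [heq, map_sub, map_mul, aeval_C]
      exact Ideal.sub_mem _ hμ𝓟 (Ideal.mul_mem_right _ _ (p_mem θ 𝓟 p h𝓟p))
    rw [map_mul] at hABP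
    -- degree bookkeeping
    have hnatM : (μ.map (Int.castRingHom (ZMod p))).natDegree = μ.natDegree :=
      hμmonic.natDegree_map _
    have hsum : a.natDegree + b.natDegree = μ.natDegree := by
      rw [← hnatM, hab, natDegree_mul ha0 hb0]
    have hapos : 0 < a.natDegree := natDegree_pos_of_not_isUnit' ha0 ha
    have hbpos : 0 < b.natDegree := natDegree_pos_of_not_isUnit' hb0 hb
    have hAnat : A.natDegree = a.natDegree := by
      have h1 : A.natDegree = (a * C a.leadingCoeff⁻¹).natDegree :=
        natDegree_eq_of_degree_eq hAdeg
      rw [h1, natDegree_mul ha0 (fun hcc => (inv_ne_zero hc) (C_eq_zero.mp hcc)),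
        natDegree_C, add_zero]
    have hBnat : B.natDegree = b.natDegree := by
      have h1 : B.natDegree = (b * C a.leadingCoeff).natDegree :=
        natDegree_eq_of_degree_eq hBdeg
      rw [h1, natDegree_mul hb0 (fun hcc => hc (C_eq_zero.mp hcc)), natDegree_C, add_zero]
    rcases hprime.mem_or_mem hABP with hmem | hmem
    · have h2 : μ.degree ≤ A.degree := hμmin A hAmonic hmem
      have h3 : μ.natDegree ≤ A.natDegree := natDegree_le_natDegree h2
      rw [hAnat] at h3
      omega
    · have h2 : μ.degree ≤ B.degree := hμmin B hBmonic hmem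
      have h3 : μ.natDegree ≤ B.natDegree := natDegree_le_natDegree h2
      rw [hBnat] at h3
      omega

lemma P_eq_span
    (h𝓟p : 𝓟.comap (algebraMap ℤ (Algebra.adjoin ℤ {θ})) = Ideal.span {(p : ℤ)})
    (hμmonic : μ.Monic)
    (hμ𝓟 : aeval (⟨θ, Algebra.self_mem_adjoin_singleton ℤ θ⟩ : Algebra.adjoin ℤ {θ}) μ ∈ 𝓟)
    (hμmin : ∀ q : ℤ[X], q.Monic →
      aeval (⟨θ, Algebra.self_mem_adjoin_singleton ℤ θ⟩ : Algebra.adjoin ℤ {θ}) q ∈ 𝓟 →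
      μ.degree ≤ q.degree) :
    𝓟 = Ideal.span {algebraMap ℤ (Algebra.adjoin ℤ {θ}) (p : ℤ),
      aeval (⟨θ, Algebra.self_mem_adjoin_singleton ℤ θ⟩ : Algebra.adjoin ℤ {θ}) μ} := by
  apply le_antisymm
  · intro x hx
    obtain ⟨q, rfl⟩ := aeval_surjective θ x
    obtain ⟨a, b, hab⟩ := (mem_P_iff θ 𝓟 p μ h𝓟p hμmonic hμ𝓟 hμmin q).mp hx
    rw [hab, map_add, map_mul, map_mul, aeval_C]
    refine Ideal.add_mem _ ?_ ?_
    · exact Ideal.mul_mem_right _ _ (Ideal.subset_span (by simp))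
    · exact Ideal.mul_mem_right _ _ (Ideal.subset_span (by simp))
  · rw [Ideal.span_le]
    intro x hx
    rcases Set.mem_insert_iff.mp hx with rfl | hx2
    · exact p_mem θ 𝓟 p h𝓟p
    · rw [Set.mem_singleton_iff] at hx2
      subst hx2
      exact hμ𝓟

lemma exists_of_mem_span_loc [𝓟.IsMaximal] (x y : Algebra.adjoin ℤ {θ})
    (h : algebraMap (Algebra.adjoin ℤ {θ}) (Localization.AtPrime 𝓟) x ∈
      Ideal.span {algebraMap (Algebra.adjoin ℤ {θ}) (Localization.AtPrime 𝓟) y}) :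
    ∃ s r : Algebra.adjoin ℤ {θ}, s ∈ 𝓟.primeCompl ∧ s * x = y * r := by
  set φ := algebraMap (Algebra.adjoin ℤ {θ}) (Localization.AtPrime 𝓟) with hφ
  obtain ⟨z, hz⟩ := Ideal.mem_span_singleton'.mp h
  obtain ⟨⟨r, s⟩, hrs⟩ := IsLocalization.mk'_surjective 𝓟.primeCompl z
  dsimp only at hrs
  have hspec := IsLocalization.mk'_spec (Localization.AtPrime 𝓟) r s
  have key : φ (↑s * x) = φ (r * y) := by
    rw [map_mul, map_mul]
    calc φ ↑s * φ x = φ ↑s * (z * φ y) := by rw [hz]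
      _ = (z * φ ↑s) * φ y := by ring
      _ = φ r * φ y := by rw [← hrs, hφ, hspec]
  obtain ⟨c, hc⟩ := (IsLocalization.eq_iff_exists 𝓟.primeCompl _).mp key
  exact ⟨↑c * ↑s, ↑c * r, Submonoid.mul_mem _ c.2 s.2, by linear_combination hc⟩

lemma maximalIdeal_eq [𝓟.IsMaximal]
    (h𝓟p : 𝓟.comap (algebraMap ℤ (Algebra.adjoin ℤ {θ})) = Ideal.span {(p : ℤ)})
    (hμmonic : μ.Monic)
    (hμ𝓟 : aeval (⟨θ, Algebra.self_mem_adjoin_singleton ℤ θ⟩ : Algebra.adjoin ℤ {θ}) μ ∈ 𝓟)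
    (hμmin : ∀ q : ℤ[X], q.Monic →
      aeval (⟨θ, Algebra.self_mem_adjoin_singleton ℤ θ⟩ : Algebra.adjoin ℤ {θ}) q ∈ 𝓟 →
      μ.degree ≤ q.degree) :
    IsLocalRing.maximalIdeal (Localization.AtPrime 𝓟) =
      Ideal.span {algebraMap (Algebra.adjoin ℤ {θ}) (Localization.AtPrime 𝓟)
          (algebraMap ℤ (Algebra.adjoin ℤ {θ}) (p : ℤ)),
        algebraMap (Algebra.adjoin ℤ {θ}) (Localization.AtPrime 𝓟)
          (aeval (⟨θ, Algebra.self_mem_adjoin_singleton ℤ θ⟩ : Algebra.adjoin ℤ {θ}) μ)} := by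
  have h1 := P_eq_span θ 𝓟 p μ h𝓟p hμmonic hμ𝓟 hμmin
  have h2 := congrArg (Ideal.map (algebraMap (Algebra.adjoin ℤ {θ})
    (Localization.AtPrime 𝓟))) h1
  rw [Ideal.map_span, Set.image_insert_eq, Set.image_singleton] at h2
  rw [← Localization.AtPrime.map_eq_maximalIdeal, h2]

lemma principal_of_not_mem_sq [𝓟.IsMaximal]
    (h𝓟p : 𝓟.comap (algebraMap ℤ (Algebra.adjoin ℤ {θ})) = Ideal.span {(p : ℤ)})
    (hμmonic : μ.Monic)
    (hμ𝓟 : aeval (⟨θ, Algebra.self_mem_adjoin_singleton ℤ θ⟩ : Algebra.adjoin ℤ {θ}) μ ∈ 𝓟)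
    (hμmin : ∀ q : ℤ[X], q.Monic →
      aeval (⟨θ, Algebra.self_mem_adjoin_singleton ℤ θ⟩ : Algebra.adjoin ℤ {θ}) q ∈ 𝓟 →
      μ.degree ≤ q.degree)
    (hnot : minpoly ℤ θ ∉ (Ideal.span {C (p : ℤ), μ}) ^ 2) :
    (IsLocalRing.maximalIdeal (Localization.AtPrime 𝓟)).IsPrincipal := by
  obtain ⟨g, h, hf⟩ := exists_decomposition θ 𝓟 p μ h𝓟p hμmonic hμ𝓟 hμmin
  have hnd : ¬(μ.map (Int.castRingHom (ZMod p)) ∣ g.map (Int.castRingHom (ZMod p)) ∧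
      μ.map (Int.castRingHom (ZMod p)) ∣ h.map (Int.castRingHom (ZMod p))) :=
    fun hc => hnot ((mem_sq_iff p hμmonic hf).mpr hc)
  set θ' : Algebra.adjoin ℤ {θ} := ⟨θ, Algebra.self_mem_adjoin_singleton ℤ θ⟩ with hθ'def
  set φ := algebraMap (Algebra.adjoin ℤ {θ}) (Localization.AtPrime 𝓟) with hφ
  set PR := algebraMap ℤ (Algebra.adjoin ℤ {θ}) (p : ℤ) with hPR
  have h0 : aeval θ' (minpoly ℤ θ) = 0 := by
    rw [minpoly_eq' θ]; exact minpoly.aeval ℤ _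
  have hrel : aeval θ' μ * aeval θ' h + PR * aeval θ' g = 0 := by
    rw [hf] at h0
    simpa [map_add, map_mul, aeval_C, hPR] using h0
  have hmemP_of_dvd : ∀ q : ℤ[X], aeval θ' q ∈ 𝓟 →
      μ.map (Int.castRingHom (ZMod p)) ∣ q.map (Int.castRingHom (ZMod p)) := by
    intro q hq
    obtain ⟨a, b, hab⟩ := (mem_P_iff θ 𝓟 p μ h𝓟p hμmonic hμ𝓟 hμmin q).mp hq
    refine ⟨a.map (Int.castRingHom (ZMod p)), ?_⟩
    have := congrArg (Polynomial.map (Int.castRingHom (ZMod p))) hab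
    simpa [Polynomial.map_add, Polynomial.map_mul, red_C_p] using this
  have hME := maximalIdeal_eq θ 𝓟 p μ h𝓟p hμmonic hμ𝓟 hμmin
  by_cases hh : μ.map (Int.castRingHom (ZMod p)) ∣ h.map (Int.castRingHom (ZMod p))
  · -- maximal ideal generated by the image of `μ(θ)`
    have hGnot : aeval θ' g ∉ 𝓟 := fun hc => hnd ⟨hmemP_of_dvd g hc, hh⟩
    have hGu : IsUnit (φ (aeval θ' g)) :=
      (IsLocalization.AtPrime.isUnit_to_map_iff (Localization.AtPrime 𝓟) 𝓟 _).mpr hGnot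
    obtain ⟨u, hu⟩ := hGu
    have hrelφ : φ (aeval θ' μ) * φ (aeval θ' h) + φ PR * φ (aeval θ' g) = 0 := by
      have := congrArg φ hrel
      simpa only [map_add, map_mul, map_zero] using this
    have hPmem : φ PR ∈ Ideal.span {φ (aeval θ' μ)} := by
      rw [Ideal.mem_span_singleton']
      refine ⟨-(φ (aeval θ' h) * ↑u⁻¹), ?_⟩
      have h3 : φ PR * ↑u = -(φ (aeval θ' μ) * φ (aeval θ' h)) := by
        rw [hu]; linear_combination hrelφ
      have h4 : φ PR * (↑u * ↑u⁻¹) = -(φ (aeval θ' μ) * φ (aeval θ' h)) * ↑u⁻¹ := by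
        rw [← mul_assoc, h3]
      rw [Units.mul_inv, mul_one] at h4
      rw [h4]; ring
    refine ⟨⟨φ (aeval θ' μ), ?_⟩⟩
    rw [Ideal.submodule_span_eq, hME]
    exact Submodule.span_insert_eq_span hPmem
  · -- maximal ideal generated by the image of `p`
    have hHnot : aeval θ' h ∉ 𝓟 := fun hc => hh (hmemP_of_dvd h hc)
    have hHu : IsUnit (φ (aeval θ' h)) :=
      (IsLocalization.AtPrime.isUnit_to_map_iff (Localization.AtPrime 𝓟) 𝓟 _).mpr hHnot
    obtain ⟨u, hu⟩ := hHu
    have hrelφ : φ (aeval θ' μ) * φ (aeval θ' h) + φ PR * φ (aeval θ' g) = 0 := by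
      have := congrArg φ hrel
      simpa only [map_add, map_mul, map_zero] using this
    have hPmem : φ (aeval θ' μ) ∈ Ideal.span {φ PR} := by
      rw [Ideal.mem_span_singleton']
      refine ⟨-(φ (aeval θ' g) * ↑u⁻¹), ?_⟩
      have h3 : φ (aeval θ' μ) * ↑u = -(φ PR * φ (aeval θ' g)) := by
        rw [hu]; linear_combination hrelφ
      have h4 : φ (aeval θ' μ) * (↑u * ↑u⁻¹) = -(φ PR * φ (aeval θ' g)) * ↑u⁻¹ := by
        rw [← mul_assoc, h3]
      rw [Units.mul_inv, mul_one] at h4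
      rw [h4]; ring
    refine ⟨⟨φ PR, ?_⟩⟩
    rw [Ideal.submodule_span_eq, hME, Set.pair_comm]
    exact Submodule.span_insert_eq_span hPmem

lemma not_mem_sq_of_principal [𝓟.IsMaximal] (hθ : IsIntegral ℤ θ)
    (h𝓟p : 𝓟.comap (algebraMap ℤ (Algebra.adjoin ℤ {θ})) = Ideal.span {(p : ℤ)})
    (hμmonic : μ.Monic)
    (hμ𝓟 : aeval (⟨θ, Algebra.self_mem_adjoin_singleton ℤ θ⟩ : Algebra.adjoin ℤ {θ}) μ ∈ 𝓟)
    (hμmin : ∀ q : ℤ[X], q.Monic →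
      aeval (⟨θ, Algebra.self_mem_adjoin_singleton ℤ θ⟩ : Algebra.adjoin ℤ {θ}) q ∈ 𝓟 →
      μ.degree ≤ q.degree)
    (hmem : minpoly ℤ θ ∈ (Ideal.span {C (p : ℤ), μ}) ^ 2)
    (hpr : (IsLocalRing.maximalIdeal (Localization.AtPrime 𝓟)).IsPrincipal) : False := by
  have hinj : Function.Injective (algebraMap (Algebra.adjoin ℤ {θ}) ℂ) :=
    fun a b hab => Subtype.ext hab
  have hθ' : IsIntegral ℤ (⟨θ, Algebra.self_mem_adjoin_singleton ℤ θ⟩ : Algebra.adjoin ℤ {θ}) :=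
    (isIntegral_algebraMap_iff hinj).mp hθ
  obtain ⟨A, B, Cc, hrep⟩ := (sq_mem_iff _ _ _).mp hmem
  have hME := maximalIdeal_eq θ 𝓟 p μ h𝓟p hμmonic hμ𝓟 hμmin
  rw [hME] at hpr
  have hdvd : ∀ q : ℤ[X],
      aeval (⟨θ, Algebra.self_mem_adjoin_singleton ℤ θ⟩ : Algebra.adjoin ℤ {θ}) q = 0 →
      ∃ w, q = minpoly ℤ θ * w := by
    intro q hq
    have h1 : minpoly ℤ θ ∣ q := by
      rw [minpoly_eq' θ]
      exact minpoly.isIntegrallyClosed_dvd hθ' hq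
    exact h1
  rcases span_pair_principal hpr with hcase | hcase
  · -- the image of `p` lies in the span of the image of `μ(θ)`
    obtain ⟨s, r, hs, heq⟩ := exists_of_mem_span_loc θ 𝓟 _ _ hcase
    obtain ⟨S, hS⟩ := aeval_surjective θ s
    obtain ⟨Rr, hRr⟩ := aeval_surjective θ r
    obtain ⟨w, hw⟩ := hdvd (S * C (p : ℤ) - μ * Rr) (by
      rw [map_sub, map_mul, map_mul, aeval_C, hS, hRr]
      linear_combination heq)
    have hkey : C (p : ℤ) * (S - C (p : ℤ) * A * w - μ * B * w) = μ * (Rr + μ * Cc * w) := by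
      linear_combination hw + w * hrep
    obtain ⟨e, he⟩ := dvd_of_dvd_p_mul hμmonic ⟨Rr + μ * Cc * w, hkey⟩
    have hSP : aeval (⟨θ, Algebra.self_mem_adjoin_singleton ℤ θ⟩ : Algebra.adjoin ℤ {θ}) S ∈ 𝓟 :=
      (mem_P_iff θ 𝓟 p μ h𝓟p hμmonic hμ𝓟 hμmin S).mpr
        ⟨e + B * w, A * w, by linear_combination he⟩
    exact hs (hS ▸ hSP)
  · -- the image of `μ(θ)` lies in the span of the image of `p`
    obtain ⟨s, r, hs, heq⟩ := exists_of_mem_span_loc θ 𝓟 _ _ hcase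
    obtain ⟨S, hS⟩ := aeval_surjective θ s
    obtain ⟨Rr, hRr⟩ := aeval_surjective θ r
    obtain ⟨w, hw⟩ := hdvd (S * μ - C (p : ℤ) * Rr) (by
      rw [map_sub, map_mul, map_mul, aeval_C, hS, hRr]
      linear_combination heq)
    have h1 := congrArg (Polynomial.map (Int.castRingHom (ZMod p))) hw
    have h2 := congrArg (Polynomial.map (Int.castRingHom (ZMod p))) hrep
    simp only [Polynomial.map_sub, Polynomial.map_mul, Polynomial.map_add, red_C_p,
      zero_mul, mul_zero, add_zero, zero_add, sub_zero] at h1 h2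
    rw [h2] at h1
    have hcancel : μ.map (Int.castRingHom (ZMod p)) * (S.map (Int.castRingHom (ZMod p))) =
        μ.map (Int.castRingHom (ZMod p)) * ((Cc.map (Int.castRingHom (ZMod p))) *
          ((μ.map (Int.castRingHom (ZMod p))) * (w.map (Int.castRingHom (ZMod p))))) := by
      linear_combination h1
    have hS' := mul_left_cancel₀ (hμmonic.map (Int.castRingHom (ZMod p))).ne_zero hcancel
    have hdvdS : μ.map (Int.castRingHom (ZMod p)) ∣ S.map (Int.castRingHom (ZMod p)) :=
      ⟨(Cc.map (Int.castRingHom (ZMod p))) * (w.map (Int.castRingHom (ZMod p))),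
        by linear_combination hS'⟩
    obtain ⟨a, b, hab⟩ := (map_dvd_iff hμmonic S).mp hdvdS
    have hSP : aeval (⟨θ, Algebra.self_mem_adjoin_singleton ℤ θ⟩ : Algebra.adjoin ℤ {θ}) S ∈ 𝓟 :=
      (mem_P_iff θ 𝓟 p μ h𝓟p hμmonic hμ𝓟 hμmin S).mpr ⟨a, b, hab⟩
    exact hs (hS ▸ hSP)

end Theta

end

end LuneburgAux


open LuneburgAux in

/-- **Local version of Uchida's theorem via Lüneburg's criterion.**  Let `θ` be an algebraic
integer with minimal polynomial `f`, `R = ℤ[θ]`, `𝓟` a maximal ideal of `R` lying over the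
rational prime `p`, and `μ_𝓟` a monic integer polynomial of least degree with `μ_𝓟(θ) ∈ 𝓟`.
The following are equivalent:
1. the localization `R_𝓟` is a discrete valuation ring;
2. for every `g, h` with `f = μ_𝓟 h + p g` one has `gcd(μ̄_𝓟, ḡ, h̄) = 1` in `𝔽_p[t]`;
3. there exist `g, h` with `f = μ_𝓟 h + p g` and `gcd(μ̄_𝓟, ḡ, h̄) = 1` in `𝔽_p[t]`;
4. `f ∉ (p, μ_𝓟(t))²` in `ℤ[t]`. -/
theorem luneburg_tfae
    (θ : ℂ) (hθ : IsIntegral ℤ θ)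
    (𝓟 : Ideal (Algebra.adjoin ℤ {θ})) [𝓟.IsMaximal]
    (p : ℕ) [Fact p.Prime]
    (h𝓟p : 𝓟.comap (algebraMap ℤ (Algebra.adjoin ℤ {θ})) = Ideal.span {(p : ℤ)})
    (μ : ℤ[X]) (hμmonic : μ.Monic)
    (hμ𝓟 : aeval (⟨θ, Algebra.self_mem_adjoin_singleton ℤ θ⟩ : Algebra.adjoin ℤ {θ}) μ ∈ 𝓟)
    (hμmin : ∀ q : ℤ[X], q.Monic →
      aeval (⟨θ, Algebra.self_mem_adjoin_singleton ℤ θ⟩ : Algebra.adjoin ℤ {θ}) q ∈ 𝓟 →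
      μ.degree ≤ q.degree) :
    [IsDiscreteValuationRing (Localization.AtPrime 𝓟),
      ∀ g h : ℤ[X], minpoly ℤ θ = μ * h + Polynomial.C (p : ℤ) * g →
        IsUnit (EuclideanDomain.gcd
          (EuclideanDomain.gcd (μ.map (Int.castRingHom (ZMod p)))
            (g.map (Int.castRingHom (ZMod p))))
          (h.map (Int.castRingHom (ZMod p)))),
      ∃ g h : ℤ[X], minpoly ℤ θ = μ * h + Polynomial.C (p : ℤ) * g ∧
        IsUnit (EuclideanDomain.gcd
          (EuclideanDomain.gcd (μ.map (Int.castRingHom (ZMod p)))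
            (g.map (Int.castRingHom (ZMod p))))
          (h.map (Int.castRingHom (ZMod p)))),
      minpoly ℤ θ ∉ (Ideal.span {Polynomial.C (p : ℤ), μ}) ^ 2].TFAE := by
  have hirr := red_irreducible θ 𝓟 p μ h𝓟p hμmonic hμ𝓟 hμmin
  haveI hNoeth : IsNoetherianRing (Algebra.adjoin ℤ {θ}) :=
    isNoetherianRing_of_fg (Subalgebra.fg_def.mpr ⟨{θ}, Set.finite_singleton θ, rfl⟩)
  haveI : IsNoetherianRing (Localization.AtPrime 𝓟) :=
    IsLocalization.isNoetherianRing 𝓟.primeCompl _ hNoeth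
  have hfield : ¬IsField (Localization.AtPrime 𝓟) := by
    intro hF
    have hbot := (IsLocalRing.isField_iff_maximalIdeal_eq).mp hF
    have hmem : (algebraMap (Algebra.adjoin ℤ {θ}) (Localization.AtPrime 𝓟))
        (algebraMap ℤ (Algebra.adjoin ℤ {θ}) (p : ℤ)) ∈
        IsLocalRing.maximalIdeal (Localization.AtPrime 𝓟) := by
      rw [← Localization.AtPrime.map_eq_maximalIdeal]
      exact Ideal.mem_map_of_mem _ (p_mem θ 𝓟 p h𝓟p)
    rw [hbot, Ideal.mem_bot] at hmem
    have hpne : (algebraMap ℤ (Algebra.adjoin ℤ {θ}) (p : ℤ)) ≠ 0 := by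
      intro h0
      have h1 : (algebraMap (Algebra.adjoin ℤ {θ}) ℂ)
          (algebraMap ℤ (Algebra.adjoin ℤ {θ}) (p : ℤ)) = 0 := by rw [h0, map_zero]
      rw [← IsScalarTower.algebraMap_apply ℤ (Algebra.adjoin ℤ {θ}) ℂ] at h1
      simp only [algebraMap_int_eq, eq_intCast] at h1
      exact (Fact.out : p.Prime).ne_zero (by exact_mod_cast h1)
    have hinj2 : Function.Injective
        (algebraMap (Algebra.adjoin ℤ {θ}) (Localization.AtPrime 𝓟)) :=
      IsLocalization.injective _ 𝓟.primeCompl_le_nonZeroDivisors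
    exact hpne (hinj2 (by rw [hmem, map_zero]))
  have hdvr : IsDiscreteValuationRing (Localization.AtPrime 𝓟) ↔
      (IsLocalRing.maximalIdeal (Localization.AtPrime 𝓟)).IsPrincipal :=
    (IsDiscreteValuationRing.TFAE (Localization.AtPrime 𝓟) hfield).out 0 4
  tfae_have 1 ↔ 4 := by
    rw [hdvr]
    constructor
    · intro hpr hmem
      exact not_mem_sq_of_principal θ 𝓟 p μ hθ h𝓟p hμmonic hμ𝓟 hμmin hmem hpr
    · intro hnot
      exact principal_of_not_mem_sq θ 𝓟 p μ h𝓟p hμmonic hμ𝓟 hμmin hnot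
  tfae_have 3 ↔ 4 := by
    constructor
    · rintro ⟨g, h, hf, hgcd⟩ hmem
      have := (gcd_isUnit_iff p hirr (g.map (Int.castRingHom (ZMod p)))
        (h.map (Int.castRingHom (ZMod p)))).mp hgcd
      exact this ((mem_sq_iff p hμmonic hf).mp hmem)
    · intro hnot
      obtain ⟨g, h, hf⟩ := exists_decomposition θ 𝓟 p μ h𝓟p hμmonic hμ𝓟 hμmin
      refine ⟨g, h, hf, ?_⟩
      refine (gcd_isUnit_iff p hirr _ _).mpr (fun hc => hnot ?_)
      exact (mem_sq_iff p hμmonic hf).mpr hc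
  tfae_have 2 → 3 := by
    intro h2
    obtain ⟨g, h, hf⟩ := exists_decomposition θ 𝓟 p μ h𝓟p hμmonic hμ𝓟 hμmin
    exact ⟨g, h, hf, h2 g h hf⟩
  tfae_have 3 → 2 := by
    rintro ⟨g, h, hf, hgcd⟩ g' h' hf'
    obtain ⟨k, hk1, hk2⟩ := decomp_unique (p := p) hμmonic hf hf'
    set D := EuclideanDomain.gcd (EuclideanDomain.gcd (μ.map (Int.castRingHom (ZMod p)))
      (g'.map (Int.castRingHom (ZMod p)))) (h'.map (Int.castRingHom (ZMod p))) with hD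
    have hDμ : D ∣ μ.map (Int.castRingHom (ZMod p)) :=
      dvd_trans (EuclideanDomain.gcd_dvd_left _ _) (EuclideanDomain.gcd_dvd_left _ _)
    have hDg' : D ∣ g'.map (Int.castRingHom (ZMod p)) :=
      dvd_trans (EuclideanDomain.gcd_dvd_left _ _) (EuclideanDomain.gcd_dvd_right _ _)
    have hDh' : D ∣ h'.map (Int.castRingHom (ZMod p)) :=
      EuclideanDomain.gcd_dvd_right _ _
    have hg : g.map (Int.castRingHom (ZMod p)) =
        g'.map (Int.castRingHom (ZMod p)) -
          μ.map (Int.castRingHom (ZMod p)) * k.map (Int.castRingHom (ZMod p)) := by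
      have := congrArg (Polynomial.map (Int.castRingHom (ZMod p))) hk2
      simp only [Polynomial.map_add, Polynomial.map_mul] at this
      linear_combination -this
    have hh : h.map (Int.castRingHom (ZMod p)) = h'.map (Int.castRingHom (ZMod p)) := by
      have := congrArg (Polynomial.map (Int.castRingHom (ZMod p))) hk1
      simpa only [Polynomial.map_add, Polynomial.map_mul, red_C_p, zero_mul,
        add_zero] using this
    have hDg : D ∣ g.map (Int.castRingHom (ZMod p)) := by
      rw [hg]
      exact dvd_sub hDg' (Dvd.dvd.mul_right hDμ _)
    have hDh : D ∣ h.map (Int.castRingHom (ZMod p)) := by rw [← hh] at hDh'; exact hDh'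
    have hDdvd : D ∣ EuclideanDomain.gcd (EuclideanDomain.gcd
        (μ.map (Int.castRingHom (ZMod p))) (g.map (Int.castRingHom (ZMod p))))
        (h.map (Int.castRingHom (ZMod p))) :=
      EuclideanDomain.dvd_gcd (EuclideanDomain.dvd_gcd hDμ hDg) hDh
    exact isUnit_of_dvd_unit hDdvd hgcd
  tfae_finish
end

section
/- Let θ be an algebraic integer with minimal polynomial f ∈ ℤ[t], let R = ℤ[θ], and let p be a rational prime. For any F ∈ ℤ[t] such that the reduction F̄ is irreducible in 𝔽_p[t] and F̄ divides f̄, the ideal pR + F(θ)R of R is a prime ideal. -/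
open Polynomial

/-- Let `θ` be an algebraic integer with minimal polynomial `f`, `R = ℤ[θ]`, and `p` a
rational prime.  For any `F ∈ ℤ[t]` such that the reduction `F̄` is irreducible in `𝔽_p[t]`
and `F̄` divides `f̄`, the ideal `p R + F(θ) R` of `R` is prime. -/
theorem span_p_F_theta_isPrime
    (θ : ℂ) (hθ : IsIntegral ℤ θ)
    (p : ℕ) [Fact p.Prime]
    (F : ℤ[X])
    (hFirr : Irreducible (F.map (Int.castRingHom (ZMod p))))
    (hFdvd : F.map (Int.castRingHom (ZMod p)) ∣
      (minpoly ℤ θ).map (Int.castRingHom (ZMod p))) :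
    (Ideal.span {((p : ℕ) : Algebra.adjoin ℤ {θ}),
      aeval (⟨θ, Algebra.self_mem_adjoin_singleton ℤ θ⟩ : Algebra.adjoin ℤ {θ}) F}).IsPrime := by
  haveI := Fact.mk hFirr
  set φ : ℤ →+* ZMod p := Int.castRingHom (ZMod p) with hφ
  set f : ℤ[X] := minpoly ℤ θ with hf
  set k := AdjoinRoot (F.map φ) with hk
  set θ' : Algebra.adjoin ℤ {θ} :=
    ⟨θ, Algebra.self_mem_adjoin_singleton ℤ θ⟩ with hθ'
  -- key computation: `aeval (root F̄) g = mk F̄ ḡ` for any `g : ℤ[X]`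
  have hcomp : (algebraMap ℤ k) =
      (algebraMap (ZMod p) k).comp φ :=
    Subsingleton.elim _ _
  have key : ∀ g : ℤ[X],
      aeval (AdjoinRoot.root (F.map φ)) g = AdjoinRoot.mk (F.map φ) (g.map φ) := by
    intro g
    rw [aeval_def, hcomp, ← eval₂_map, ← aeval_def, AdjoinRoot.aeval_eq]
  -- `f` is killed by evaluation at `root F̄`
  have hf0 : aeval (AdjoinRoot.root (F.map φ)) f = 0 := by
    rw [key, AdjoinRoot.mk_eq_zero]; exact hFdvd
  -- the homomorphism `R = ℤ[θ] →ₐ[ℤ] k`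
  let ψ : AdjoinRoot f →ₐ[ℤ] k := AdjoinRoot.liftAlgHom f (Algebra.ofId ℤ k) (AdjoinRoot.root (F.map φ)) hf0
  let Φ : Algebra.adjoin ℤ {θ} →ₐ[ℤ] k :=
    ψ.comp (minpoly.equivAdjoin hθ).symm.toAlgHom
  have hsymθ : (minpoly.equivAdjoin hθ).symm θ' = AdjoinRoot.root f := by
    rw [AlgEquiv.symm_apply_eq]
    show θ' = AdjoinRoot.Minpoly.toAdjoin ℤ θ (AdjoinRoot.root f)
    rw [AdjoinRoot.Minpoly.coe_toAdjoin, AdjoinRoot.liftAlgHom_root]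
  have hΦθ : Φ θ' = AdjoinRoot.root (F.map φ) := by
    show ψ ((minpoly.equivAdjoin hθ).symm θ') = _
    rw [hsymθ]
    show AdjoinRoot.liftAlgHom f (Algebra.ofId ℤ k) (AdjoinRoot.root (F.map φ)) hf0 (AdjoinRoot.root f) = AdjoinRoot.root (F.map φ)
    exact AdjoinRoot.liftAlgHom_root _ _ _ _
  have hΦaeval : ∀ g : ℤ[X],
      Φ (aeval θ' g) = AdjoinRoot.mk (F.map φ) (g.map φ) := by
    intro g
    rw [← Polynomial.aeval_algHom_apply, hΦθ, key]
  have hΦp : Φ ((p : ℕ) : Algebra.adjoin ℤ {θ}) = 0 := by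
    rw [map_natCast, ← map_natCast (algebraMap (ZMod p) k) p, ZMod.natCast_self, map_zero]
  -- the ideal is the kernel of `Φ`
  have hker : Ideal.span {((p : ℕ) : Algebra.adjoin ℤ {θ}), aeval θ' F}
      = RingHom.ker Φ.toRingHom := by
    apply le_antisymm
    · rw [Ideal.span_le, Set.insert_subset_iff, Set.singleton_subset_iff]
      constructor
      · simpa [RingHom.mem_ker] using hΦp
      · show aeval θ' F ∈ RingHom.ker Φ.toRingHom
        rw [RingHom.mem_ker]
        show Φ (aeval θ' F) = 0
        rw [hΦaeval, AdjoinRoot.mk_eq_zero]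
    · intro x hx
      rw [RingHom.mem_ker] at hx
      -- write x = aeval θ' g
      obtain ⟨g, hg⟩ : ∃ g : ℤ[X], aeval θ' g = x := by
        have hx2 : (x : ℂ) ∈ AlgHom.range (Polynomial.aeval (R := ℤ) θ) := by
          rw [← Algebra.adjoin_singleton_eq_range_aeval]; exact x.2
        obtain ⟨g, hg⟩ := AlgHom.mem_range (φ := Polynomial.aeval (R := ℤ) θ) |>.mp hx2
        exact ⟨g, Subtype.ext ((aeval_subalgebra_coe (R := ℤ) (A := ℂ) g (Algebra.adjoin ℤ {θ}) θ').trans hg)⟩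
      have hΦx : AdjoinRoot.mk (F.map φ) (g.map φ) = 0 := by
        rw [← hΦaeval, hg]; exact hx
      rw [AdjoinRoot.mk_eq_zero] at hΦx
      obtain ⟨c, hc⟩ := hΦx
      obtain ⟨h, rfl⟩ := (Polynomial.map_surjective φ ZMod.intCast_surjective) c
      have hdvd : C ((p : ℕ) : ℤ) ∣ g - F * h := by
        have hmem : g - F * h ∈ RingHom.ker (Polynomial.mapRingHom φ) := by
          rw [RingHom.mem_ker]
          simp only [coe_mapRingHom, Polynomial.map_sub, Polynomial.map_mul]
          rw [← hc, sub_self]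
        rw [Polynomial.ker_mapRingHom, ZMod.ker_intCastRingHom, Ideal.map_span,
          Set.image_singleton, Ideal.mem_span_singleton] at hmem
        exact_mod_cast hmem
      obtain ⟨q, hq⟩ := hdvd
      rw [← hg]
      rw [Ideal.mem_span_pair]
      refine ⟨aeval θ' q, aeval θ' h, ?_⟩
      have hgeq : g = C ((p : ℕ) : ℤ) * q + F * h := by
        rw [← hq]; ring
      rw [hgeq, map_add, map_mul, map_mul, aeval_C]
      push_cast
      ring
  rw [hker]
  exact RingHom.ker_isPrime Φ.toRingHom
end

section
/- Let θ be an algebraic integer, let R = ℤ[θ], let 𝒫 be a maximal ideal of R, and let p be the rational prime with 𝒫 ∩ ℤ = pℤ. Let μ_𝒫 ∈ ℤ[t] be a monic polynomial of least degree such that μ_𝒫(θ) ∈ 𝒫. Then pR + μ_𝒫(θ)R = 𝒫. -/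
open Polynomial

/-- Let `θ` be an algebraic integer, `R = ℤ[θ]`, `𝓟` a maximal ideal of `R` lying over the
rational prime `p`, and `μ_𝓟` a monic integer polynomial of least degree with `μ_𝓟(θ) ∈ 𝓟`.
Then `p R + μ_𝓟(θ) R = 𝓟`. -/
theorem span_p_mu_theta_eq_P
    (θ : ℂ) (hθ : IsIntegral ℤ θ)
    (𝓟 : Ideal (Algebra.adjoin ℤ {θ})) [𝓟.IsMaximal]
    (p : ℕ) [Fact p.Prime]
    (h𝓟p : 𝓟.comap (algebraMap ℤ (Algebra.adjoin ℤ {θ})) = Ideal.span {(p : ℤ)})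
    (μ : ℤ[X]) (hμmonic : μ.Monic)
    (hμ𝓟 : aeval (⟨θ, Algebra.self_mem_adjoin_singleton ℤ θ⟩ : Algebra.adjoin ℤ {θ}) μ ∈ 𝓟)
    (hμmin : ∀ q : ℤ[X], q.Monic →
      aeval (⟨θ, Algebra.self_mem_adjoin_singleton ℤ θ⟩ : Algebra.adjoin ℤ {θ}) q ∈ 𝓟 →
      μ.degree ≤ q.degree) :
    Ideal.span {((p : ℕ) : Algebra.adjoin ℤ {θ}),
      aeval (⟨θ, Algebra.self_mem_adjoin_singleton ℤ θ⟩ : Algebra.adjoin ℤ {θ}) μ} = 𝓟 := by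
  set θ' : Algebra.adjoin ℤ {θ} := ⟨θ, Algebra.self_mem_adjoin_singleton ℤ θ⟩ with hθ'
  have hpP : ((p : ℕ) : Algebra.adjoin ℤ {θ}) ∈ 𝓟 := by
    have h1 : (p : ℤ) ∈ 𝓟.comap (algebraMap ℤ (Algebra.adjoin ℤ {θ})) := by
      rw [h𝓟p]; exact Ideal.mem_span_singleton_self _
    have h2 := Ideal.mem_comap.mp h1
    have h3 : algebraMap ℤ (Algebra.adjoin ℤ {θ}) (p : ℤ) = ((p : ℕ) : Algebra.adjoin ℤ {θ}) := by
      rw [algebraMap_int_eq]; push_cast; rfl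
    rwa [h3] at h2
  set φ := Int.castRingHom (ZMod p) with hφ
  -- Key lemma: polynomials vanishing mod p evaluate into pS.
  have hL1 : ∀ g : ℤ[X], g.map φ = 0 →
      aeval θ' g ∈ Ideal.span {((p : ℕ) : Algebra.adjoin ℤ {θ})} := by
    intro g hg
    have hdvd : C (p : ℤ) ∣ g := by
      rw [C_dvd_iff_dvd_coeff]
      intro i
      have h0 : φ (g.coeff i) = 0 := by
        have := congrArg (fun q => Polynomial.coeff q i) hg
        simpa [coeff_map] using this
      exact (ZMod.intCast_zmod_eq_zero_iff_dvd _ p).mp h0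
    obtain ⟨h, rfl⟩ := hdvd
    rw [map_mul, aeval_C]
    refine Ideal.mem_span_singleton.mpr ⟨aeval θ' h, ?_⟩
    rw [algebraMap_int_eq]
    simp only [eq_intCast, Int.cast_natCast]
  have hspan_le : Ideal.span {((p : ℕ) : Algebra.adjoin ℤ {θ})} ≤
      Ideal.span {((p : ℕ) : Algebra.adjoin ℤ {θ}), aeval θ' μ} :=
    Ideal.span_mono (by simp)
  apply le_antisymm
  · rw [Ideal.span_le]
    rintro x hx
    simp only [Set.mem_insert_iff, Set.mem_singleton_iff] at hx
    rcases hx with rfl | rfl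
    · exact hpP
    · exact hμ𝓟
  · intro x hx
    obtain ⟨f, hf⟩ : ∃ f : ℤ[X], aeval θ' f = x := by
      have hx1 : (x : ℂ) ∈ (aeval θ : ℤ[X] →ₐ[ℤ] ℂ).range := by
        rw [← Algebra.adjoin_singleton_eq_range_aeval]; exact x.2
      obtain ⟨f, hf⟩ := hx1
      exact ⟨f, Subtype.ext
        (((aeval_algHom_apply (Algebra.adjoin ℤ {θ}).val θ' f).symm).trans hf)⟩
    set r := f %ₘ μ with hr
    have hsplit : x = aeval θ' μ * aeval θ' (f /ₘ μ) + aeval θ' r := by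
      conv_lhs => rw [← hf, ← modByMonic_add_div f μ]
      rw [map_add, map_mul]
      ring
    have hrP : aeval θ' r ∈ 𝓟 := by
      have : aeval θ' r = x - aeval θ' μ * aeval θ' (f /ₘ μ) := by
        rw [hsplit]; ring
      rw [this]
      exact Ideal.sub_mem _ hx (Ideal.mul_mem_right _ _ hμ𝓟)
    have hr0 : r.map φ = 0 := by
      by_contra hr0
      have hc0 : (r.map φ).leadingCoeff ≠ 0 := leadingCoeff_ne_zero.mpr hr0
      have hm : (r.map φ * C (r.map φ).leadingCoeff⁻¹).Monic :=
        monic_mul_leadingCoeff_inv hr0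
      have hlift : (r.map φ * C (r.map φ).leadingCoeff⁻¹) ∈ Polynomial.lifts φ := by
        rw [lifts_iff_coeff_lifts]
        intro n
        exact ZMod.intCast_surjective _
      obtain ⟨q, hqmap, hqdeg, hqmonic⟩ := lifts_and_degree_eq_and_monic hlift hm
      obtain ⟨c', hc'⟩ := ZMod.intCast_surjective (n := p) (r.map φ).leadingCoeff⁻¹
      have hdiff : (q - r * C c').map φ = 0 := by
        rw [Polynomial.map_sub, hqmap, Polynomial.map_mul, map_C]
        have : φ c' = (r.map φ).leadingCoeff⁻¹ := hc'
        rw [this]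
        ring
      have hqP : aeval θ' q ∈ 𝓟 := by
        have h1 : aeval θ' (q - r * C c') ∈ 𝓟 := by
          refine Set.mem_of_mem_of_subset (hL1 _ hdiff) ?_
          exact Ideal.span_le.mpr (by simpa using hpP)
        have h2 : aeval θ' (r * C c') ∈ 𝓟 := by
          rw [map_mul]
          exact Ideal.mul_mem_right _ _ hrP
        have := Ideal.add_mem _ h1 h2
        simpa using this
      have hlt : q.degree < μ.degree := by
        rw [hqdeg, degree_mul_leadingCoeff_inv _ hr0]
        exact lt_of_le_of_lt degree_map_le (degree_modByMonic_lt f hμmonic)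
      exact absurd (hμmin q hqmonic hqP) (not_le.mpr hlt)
    have hrI : aeval θ' r ∈ Ideal.span {((p : ℕ) : Algebra.adjoin ℤ {θ}), aeval θ' μ} :=
      hspan_le (hL1 r hr0)
    rw [hsplit]
    refine Ideal.add_mem _ ?_ hrI
    exact Ideal.mul_mem_right _ _ (Ideal.subset_span (by simp))
end

section
/- Let θ be an algebraic integer with minimal polynomial f ∈ ℤ[t], let R = ℤ[θ], let 𝒫 be a maximal ideal of R, and let p be the rational prime with 𝒫 ∩ ℤ = pℤ. Let μ_𝒫 ∈ ℤ[t] be a monic polynomial of least degree such that μ_𝒫(θ) ∈ 𝒫, and let M = (p, μ_𝒫(t)) be the corresponding ideal of ℤ[t]. If μ̄_𝒫² divides f̄ in 𝔽_p[t] (i.e. f̄ has multiplicity ≥ 2 at μ̄_𝒫) and the localization R_𝒫 is a discrete valuation ring, then f ∉ M² and there exist g, h ∈ ℤ[t] such that f = μ_𝒫·h + p·g and gcd(μ̄_𝒫, ḡ) = 1 in 𝔽_p[t]. -/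
open Polynomial

set_option maxHeartbeats 1000000
set_option synthInstance.maxHeartbeats 400000

private lemma eq_C_p_mul (p : ℕ) [Fact p.Prime] {e : ℤ[X]}
    (h : e.map (Int.castRingHom (ZMod p)) = 0) : ∃ l, e = Polynomial.C (p : ℤ) * l := by
  have hd : Polynomial.C (p : ℤ) ∣ e := by
    rw [Polynomial.C_dvd_iff_dvd_coeff]
    intro i
    have hc : ((e.coeff i : ℤ) : ZMod p) = 0 := by
      have h2 := congrArg (fun q => Polynomial.coeff q i) h
      simpa [Polynomial.coeff_map] using h2
    exact (ZMod.intCast_zmod_eq_zero_iff_dvd _ p).mp hc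
  exact hd

/-- Let `θ` be an algebraic integer with minimal polynomial `f`, `R = ℤ[θ]`, `𝓟` a maximal
ideal of `R` lying over the rational prime `p`, `μ_𝓟` a monic integer polynomial of least
degree with `μ_𝓟(θ) ∈ 𝓟`, and `M = (p, μ_𝓟(t)) ⊆ ℤ[t]`.  If `μ̄_𝓟²` divides `f̄` in `𝔽_p[t]`
and the localization `R_𝓟` is a discrete valuation ring, then `f ∉ M²` and there exist
`g, h ∈ ℤ[t]` with `f = μ_𝓟 h + p g` and `gcd(μ̄_𝓟, ḡ) = 1` in `𝔽_p[t]`. -/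
theorem dvr_of_multiplicity_ge_two
    (θ : ℂ) (hθ : IsIntegral ℤ θ)
    (𝓟 : Ideal (Algebra.adjoin ℤ {θ})) [𝓟.IsMaximal]
    (p : ℕ) [Fact p.Prime]
    (h𝓟p : 𝓟.comap (algebraMap ℤ (Algebra.adjoin ℤ {θ})) = Ideal.span {(p : ℤ)})
    (μ : ℤ[X]) (hμmonic : μ.Monic)
    (hμ𝓟 : aeval (⟨θ, Algebra.self_mem_adjoin_singleton ℤ θ⟩ : Algebra.adjoin ℤ {θ}) μ ∈ 𝓟)
    (hμmin : ∀ q : ℤ[X], q.Monic →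
      aeval (⟨θ, Algebra.self_mem_adjoin_singleton ℤ θ⟩ : Algebra.adjoin ℤ {θ}) q ∈ 𝓟 →
      μ.degree ≤ q.degree)
    (hmult : (μ.map (Int.castRingHom (ZMod p))) ^ 2 ∣
      (minpoly ℤ θ).map (Int.castRingHom (ZMod p)))
    (hdvr : IsDiscreteValuationRing (Localization.AtPrime 𝓟)) :
    minpoly ℤ θ ∉ (Ideal.span {Polynomial.C (p : ℤ), μ}) ^ 2 ∧
      ∃ g h : ℤ[X], minpoly ℤ θ = μ * h + Polynomial.C (p : ℤ) * g ∧
        IsUnit (EuclideanDomain.gcd (μ.map (Int.castRingHom (ZMod p)))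
          (g.map (Int.castRingHom (ZMod p)))) := by
  classical
  have hp : p.Prime := Fact.out
  set θ' : Algebra.adjoin ℤ {θ} := ⟨θ, Algebra.self_mem_adjoin_singleton ℤ θ⟩ with hθ'def
  set f : ℤ[X] := minpoly ℤ θ with hfdef
  set ψ : ℤ →+* ZMod p := Int.castRingHom (ZMod p) with hψdef
  set M : Ideal ℤ[X] := Ideal.span {Polynomial.C (p : ℤ), μ} with hMdef
  set Φ : ℤ[X] →+* Algebra.adjoin ℤ {θ} := ((aeval θ' : ℤ[X] →ₐ[ℤ] Algebra.adjoin ℤ {θ}) : ℤ[X] →+* Algebra.adjoin ℤ {θ}) with hΦdef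
  have hΦapp : ∀ q : ℤ[X], Φ q = aeval θ' q := by intro q; rw [hΦdef]; rfl
  -- basic facts
  have hψsurj : Function.Surjective ψ := ZMod.intCast_surjective
  have hCp0 : (Polynomial.C (p : ℤ)).map ψ = 0 := by
    rw [Polynomial.map_C]
    simp [hψdef]
  have hμbar_monic : (μ.map ψ).Monic := hμmonic.map ψ
  have hμbar_ne : μ.map ψ ≠ 0 := hμbar_monic.ne_zero
  have hμbardeg : (μ.map ψ).natDegree = μ.natDegree := hμmonic.natDegree_map ψ
  have hCpne : (Polynomial.C (p : ℤ)) ≠ 0 := by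
    exact (Polynomial.C_ne_zero (R := ℤ)).mpr (Int.natCast_ne_zero.mpr hp.ne_zero)
  have hpA : Φ (Polynomial.C (p : ℤ)) ∈ 𝓟 := by
    rw [hΦapp, Polynomial.aeval_C]
    have h1 : (p : ℤ) ∈ Ideal.span {(p : ℤ)} := Ideal.mem_span_singleton_self _
    rw [← h𝓟p] at h1
    exact Ideal.mem_comap.mp h1
  have hμ𝓟' : Φ μ ∈ 𝓟 := by rw [hΦapp]; exact hμ𝓟
  have hdegμ : 1 ≤ μ.natDegree := by
    by_contra hcon
    push_neg at hcon
    have h0 : μ.natDegree = 0 := by omega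
    have h1 : μ = 1 := (hμmonic.natDegree_eq_zero).mp h0
    rw [h1] at hμ𝓟
    simp only [map_one] at hμ𝓟
    exact (‹𝓟.IsMaximal›.ne_top) ((Ideal.eq_top_iff_one 𝓟).mpr hμ𝓟)
  have hΦsurj : Function.Surjective Φ := by
    intro z
    have hz : (z : ℂ) ∈ (Polynomial.aeval θ : ℤ[X] →ₐ[ℤ] ℂ).range := by
      rw [← Algebra.adjoin_singleton_eq_range_aeval ℤ θ]; exact z.2
    obtain ⟨q, hq⟩ := hz
    refine ⟨q, ?_⟩
    apply Subtype.ext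
    rw [hΦapp]
    simpa [hθ'def] using hq
  have hker : ∀ q : ℤ[X], Φ q = 0 ↔ f ∣ q := by
    intro q
    constructor
    · intro h0
      have h1 : aeval θ q = 0 := by
        have h2 := congrArg (Subtype.val) h0
        rw [hΦapp] at h2
        simpa [hθ'def] using h2
      exact minpoly.isIntegrallyClosed_dvd hθ h1
    · rintro ⟨k, rfl⟩
      have hf0 : Φ f = 0 := by
        apply Subtype.ext
        rw [hΦapp]
        simpa [hθ'def, hfdef] using minpoly.aeval ℤ θ
      rw [map_mul, hf0, zero_mul]
  have hμM : μ ∈ M := Ideal.subset_span (by simp)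
  have hCpM : Polynomial.C (p : ℤ) ∈ M := Ideal.subset_span (by simp)
  have hmemM : ∀ q : ℤ[X], q ∈ M ↔ (μ.map ψ) ∣ q.map ψ := by
    intro q
    constructor
    · intro hq
      obtain ⟨a, b, hab⟩ := Ideal.mem_span_pair.mp hq
      refine ⟨b.map ψ, ?_⟩
      rw [← hab]
      simp [Polynomial.map_add, Polynomial.map_mul, hCp0, mul_comm]
    · rintro ⟨K, hK⟩
      obtain ⟨k, rfl⟩ := Polynomial.map_surjective ψ hψsurj K
      obtain ⟨l, hl⟩ := eq_C_p_mul p (e := q - μ * k)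
        (by rw [Polynomial.map_sub, Polynomial.map_mul, hK]; exact sub_eq_zero_of_eq rfl)
      have hq : q = μ * k + Polynomial.C (p : ℤ) * l := by linear_combination hl
      rw [hq]
      exact Ideal.add_mem _ (Ideal.mul_mem_right _ _ hμM) (Ideal.mul_mem_right _ _ hCpM)
  have hpull : ∀ q : ℤ[X], Φ q ∈ 𝓟 ↔ q ∈ M := by
    intro q
    constructor
    · intro hq
      have hqeq : q %ₘ μ + μ * (q /ₘ μ) = q := Polynomial.modByMonic_add_div q μ
      have hr𝓟 : Φ (q %ₘ μ) ∈ 𝓟 := by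
        have h1 : Φ q = Φ (q %ₘ μ) + Φ μ * Φ (q /ₘ μ) := by
          conv_lhs => rw [← hqeq]
          rw [map_add Φ, map_mul Φ]
        have h1' : Φ (q %ₘ μ) = Φ q - Φ μ * Φ (q /ₘ μ) := by rw [h1]; ring
        rw [h1']
        exact Ideal.sub_mem _ hq (Ideal.mul_mem_right _ _ hμ𝓟')
      by_cases hr0 : (q %ₘ μ).map ψ = 0
      · obtain ⟨l, hl⟩ := eq_C_p_mul p hr0
        have h2 : q = μ * (q /ₘ μ) + Polynomial.C (p : ℤ) * l := by
          linear_combination hl - hqeq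
        rw [h2]
        exact Ideal.add_mem _ (Ideal.mul_mem_right _ _ hμM) (Ideal.mul_mem_right _ _ hCpM)
      · exfalso
        set rb : (ZMod p)[X] := (q %ₘ μ).map ψ with hrbdef
        have hmon : (rb * Polynomial.C rb.leadingCoeff⁻¹).Monic :=
          Polynomial.monic_mul_leadingCoeff_inv hr0
        have hlift : rb * Polynomial.C rb.leadingCoeff⁻¹ ∈ Polynomial.lifts ψ := by
          obtain ⟨w, hw⟩ := Polynomial.map_surjective ψ hψsurj (rb * Polynomial.C rb.leadingCoeff⁻¹)
          exact (Polynomial.mem_lifts _).mpr ⟨w, hw⟩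
        obtain ⟨a, hamap, hadeg, hamonic⟩ :=
          Polynomial.lifts_and_degree_eq_and_monic hlift hmon
        obtain ⟨c, hc⟩ := hψsurj rb.leadingCoeff⁻¹
        obtain ⟨l, hl⟩ := eq_C_p_mul p (e := a - (q %ₘ μ) * Polynomial.C c)
          (by rw [Polynomial.map_sub, Polynomial.map_mul, hamap, Polynomial.map_C, hc]
              exact sub_eq_zero_of_eq rfl)
        have ha𝓟 : Φ a ∈ 𝓟 := by
          have h3 : a = (q %ₘ μ) * Polynomial.C c + Polynomial.C (p : ℤ) * l := by
            linear_combination hl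
          rw [h3, map_add Φ, map_mul Φ, map_mul Φ]
          exact Ideal.add_mem _ (Ideal.mul_mem_right _ _ hr𝓟) (Ideal.mul_mem_right _ _ hpA)
        have hdlt : a.degree < μ.degree := by
          rw [hadeg, Polynomial.degree_mul_leadingCoeff_inv _ hr0]
          calc rb.degree ≤ (q %ₘ μ).degree := Polynomial.degree_map_le
            _ < μ.degree := Polynomial.degree_modByMonic_lt q hμmonic
        exact absurd (hμmin a hamonic ha𝓟) (not_le.mpr hdlt)
    · intro hq
      obtain ⟨a, b, hab⟩ := Ideal.mem_span_pair.mp hq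
      rw [← hab, map_add Φ, map_mul Φ, map_mul Φ]
      exact Ideal.add_mem _ (Ideal.mul_mem_left _ _ hpA) (Ideal.mul_mem_left _ _ hμ𝓟')
  -- irreducibility of μ̄
  have hirr : Irreducible (μ.map ψ) := by
    constructor
    · intro hu
      have h0 := Polynomial.natDegree_eq_zero_of_isUnit hu
      rw [hμbardeg] at h0; omega
    · intro B C hBC
      by_contra hcon
      push_neg at hcon
      obtain ⟨hB, hC⟩ := hcon
      have hB0 : B ≠ 0 := fun h => hμbar_ne (by rw [hBC, h, zero_mul])
      have hC0 : C ≠ 0 := fun h => hμbar_ne (by rw [hBC, h, mul_zero])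
      have hdB : 0 < B.natDegree := by
        by_contra hcc
        push_neg at hcc
        have h0 : B.natDegree = 0 := by omega
        have h1 : B = Polynomial.C (B.coeff 0) := Polynomial.eq_C_of_natDegree_eq_zero h0
        apply hB
        rw [h1]
        exact Polynomial.isUnit_C.mpr (isUnit_iff_ne_zero.mpr
          (fun hc => hB0 (by rw [h1, hc, map_zero])))
      have hdC : 0 < C.natDegree := by
        by_contra hcc
        push_neg at hcc
        have h0 : C.natDegree = 0 := by omega
        have h1 : C = Polynomial.C (C.coeff 0) := Polynomial.eq_C_of_natDegree_eq_zero h0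
        apply hC
        rw [h1]
        exact Polynomial.isUnit_C.mpr (isUnit_iff_ne_zero.mpr
          (fun hc => hC0 (by rw [h1, hc, map_zero])))
      have hlead : B.leadingCoeff * C.leadingCoeff = 1 := by
        have h1 := hμbar_monic
        rw [Polynomial.Monic, hBC, Polynomial.leadingCoeff_mul] at h1
        exact h1
      set B1 : (ZMod p)[X] := B * Polynomial.C C.leadingCoeff with hB1def
      set C1 : (ZMod p)[X] := C * Polynomial.C B.leadingCoeff with hC1def
      have hB1monic : B1.Monic := by
        rw [Polynomial.Monic, hB1def, Polynomial.leadingCoeff_mul, Polynomial.leadingCoeff_C]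
        exact hlead
      have hC1monic : C1.Monic := by
        rw [Polynomial.Monic, hC1def, Polynomial.leadingCoeff_mul, Polynomial.leadingCoeff_C]
        rw [mul_comm]; exact hlead
      have hB1C1 : B1 * C1 = μ.map ψ := by
        have h2 : B1 * C1 = (B * C) * Polynomial.C (B.leadingCoeff * C.leadingCoeff) := by
          rw [Polynomial.C_mul]; ring
        rw [h2, hlead, Polynomial.C_1, mul_one, ← hBC]
      have hB1d : B1.natDegree = B.natDegree := by
        rw [hB1def, Polynomial.natDegree_mul hB0 (Polynomial.C_ne_zero.mpr
          (Polynomial.leadingCoeff_ne_zero.mpr hC0)), Polynomial.natDegree_C, add_zero]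
      have hC1d : C1.natDegree = C.natDegree := by
        rw [hC1def, Polynomial.natDegree_mul hC0 (Polynomial.C_ne_zero.mpr
          (Polynomial.leadingCoeff_ne_zero.mpr hB0)), Polynomial.natDegree_C, add_zero]
      have hsum : μ.natDegree = B1.natDegree + C1.natDegree := by
        have h3 := Polynomial.natDegree_mul hB1monic.ne_zero hC1monic.ne_zero
        rw [hB1C1, hμbardeg] at h3
        exact h3
      have hliftB : B1 ∈ Polynomial.lifts ψ := by
        obtain ⟨w, hw⟩ := Polynomial.map_surjective ψ hψsurj B1
        exact (Polynomial.mem_lifts _).mpr ⟨w, hw⟩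
      have hliftC : C1 ∈ Polynomial.lifts ψ := by
        obtain ⟨w, hw⟩ := Polynomial.map_surjective ψ hψsurj C1
        exact (Polynomial.mem_lifts _).mpr ⟨w, hw⟩
      obtain ⟨b, hbmap, hbdeg, hbmonic⟩ := Polynomial.lifts_and_degree_eq_and_monic hliftB hB1monic
      obtain ⟨c, hcmap, hcdeg, hcmonic⟩ := Polynomial.lifts_and_degree_eq_and_monic hliftC hC1monic
      obtain ⟨l, hl⟩ := eq_C_p_mul p (e := b * c - μ)
        (by rw [Polynomial.map_sub, Polynomial.map_mul, hbmap, hcmap, hB1C1]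
            exact sub_eq_zero_of_eq rfl)
      have hbc𝓟 : Φ b * Φ c ∈ 𝓟 := by
        have h4 : b * c = μ + Polynomial.C (p : ℤ) * l := by linear_combination hl
        have h5 : Φ b * Φ c = Φ μ + Φ (Polynomial.C (p : ℤ)) * Φ l := by
          rw [← map_mul Φ, ← map_mul Φ, ← map_add Φ, h4]
        rw [h5]
        exact Ideal.add_mem _ hμ𝓟' (Ideal.mul_mem_right _ _ hpA)
      have hbnd : b.natDegree = B1.natDegree := Polynomial.natDegree_eq_of_degree_eq hbdeg
      have hcnd : c.natDegree = C1.natDegree := Polynomial.natDegree_eq_of_degree_eq hcdeg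
      rcases (Ideal.IsMaximal.isPrime ‹𝓟.IsMaximal›).mem_or_mem hbc𝓟 with hmem | hmem
      · have h6 := Polynomial.natDegree_le_natDegree (hμmin b hbmonic hmem)
        omega
      · have h6 := Polynomial.natDegree_le_natDegree (hμmin c hcmonic hmem)
        omega
  -- the division f = μ h + p g
  set h : ℤ[X] := f /ₘ μ with hhdef
  have hrmap : (f %ₘ μ).map ψ = 0 := by
    rw [Polynomial.map_modByMonic _ hμmonic,
      Polynomial.modByMonic_eq_zero_iff_dvd hμbar_monic]
    exact (dvd_pow_self _ two_ne_zero).trans hmult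
  obtain ⟨g, hg⟩ : ∃ g, f %ₘ μ = Polynomial.C (p : ℤ) * g := eq_C_p_mul p hrmap
  have hkey : f = μ * h + Polynomial.C (p : ℤ) * g := by
    have h1 := Polynomial.modByMonic_add_div f μ
    rw [hg] at h1
    linear_combination -h1
  have hfbar : f.map ψ = (μ.map ψ) * (h.map ψ) := by
    have h1 := congrArg (Polynomial.map ψ) hkey
    simpa [Polynomial.map_add, Polynomial.map_mul, hCp0] using h1
  have hhM : h ∈ M := by
    refine (hmemM h).mpr ?_
    obtain ⟨k, hk⟩ := hmult
    refine ⟨k, mul_left_cancel₀ hμbar_ne ?_⟩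
    rw [← hfbar, hk]; ring
  -- THE MAIN STEP: μ̄ does not divide ḡ
  have hmain : ¬ ((μ.map ψ) ∣ g.map ψ) := by
    intro hgdvd
    have hgM : g ∈ M := (hmemM g).mpr hgdvd
    have hfM2 : f ∈ M ^ 2 := by
      rw [hkey, sq]
      exact Ideal.add_mem _ (Ideal.mul_mem_mul hμM hhM) (Ideal.mul_mem_mul hCpM hgM)
    have h𝓟M : 𝓟 = M.map Φ := by
      apply le_antisymm
      · intro z hz
        obtain ⟨q, rfl⟩ := hΦsurj z
        exact Ideal.mem_map_of_mem Φ ((hpull q).mp hz)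
      · rw [Ideal.map_le_iff_le_comap]
        intro q hq
        exact Ideal.mem_comap.mpr ((hpull q).mpr hq)
    have h𝓟2 : (𝓟 ^ 2 : Ideal (Algebra.adjoin ℤ {θ})) = (M ^ 2).map Φ := by
      rw [h𝓟M, Ideal.map_pow]
    haveI := hdvr
    haveI hVR : ValuationRing (Localization.AtPrime 𝓟) := inferInstance
    set L := Localization.AtPrime 𝓟 with hLdef
    set alg : Algebra.adjoin ℤ {θ} →+* L := algebraMap _ L with halgdef
    obtain ⟨x, hx⟩ := ValuationRing.cond (alg (Φ (Polynomial.C (p : ℤ)))) (alg (Φ μ))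
    have hpb : (∃ s c : Algebra.adjoin ℤ {θ}, s ∉ 𝓟 ∧ s * Φ μ = Φ (Polynomial.C (p : ℤ)) * c) ∨
        (∃ s c : Algebra.adjoin ℤ {θ}, s ∉ 𝓟 ∧ s * Φ (Polynomial.C (p : ℤ)) = Φ μ * c) := by
      rcases hx with hd | hd
      · left
        obtain ⟨⟨r, s⟩, rfl⟩ := IsLocalization.mk'_surjective 𝓟.primeCompl x
        have h2 : alg (Φ μ * ↑s) = alg (Φ (Polynomial.C (p : ℤ)) * r) := by
          rw [map_mul, map_mul, ← hd, mul_assoc, IsLocalization.mk'_spec]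
        obtain ⟨t, ht⟩ := (IsLocalization.eq_iff_exists 𝓟.primeCompl L).mp h2
        refine ⟨↑t * ↑s, ↑t * r, ?_, ?_⟩
        · exact Submonoid.mul_mem _ t.2 s.2
        · linear_combination ht
      · right
        obtain ⟨⟨r, s⟩, rfl⟩ := IsLocalization.mk'_surjective 𝓟.primeCompl x
        have h2 : alg (Φ (Polynomial.C (p : ℤ)) * ↑s) = alg (Φ μ * r) := by
          rw [map_mul, map_mul, ← hd, mul_assoc, IsLocalization.mk'_spec]
        obtain ⟨t, ht⟩ := (IsLocalization.eq_iff_exists 𝓟.primeCompl L).mp h2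
        refine ⟨↑t * ↑s, ↑t * r, ?_, ?_⟩
        · exact Submonoid.mul_mem _ t.2 s.2
        · linear_combination ht
    -- a helper for the final degree contradiction
    have hunit : ¬ IsUnit (μ.map ψ) := hirr.not_isUnit
    rcases hpb with ⟨s, c, hs, heq⟩ | ⟨s, c, hs, heq⟩
    · -- Case A : s μ(θ) = p c, derive μ ∈ (p) + M², contradiction
      obtain ⟨y, i, hi𝓟, hyi⟩ := Ideal.IsMaximal.exists_inv ‹𝓟.IsMaximal› hs
      have hβmem : Φ μ - y * (Φ (Polynomial.C (p : ℤ)) * c) ∈ 𝓟 ^ 2 := by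
        have h3 : Φ μ - y * (Φ (Polynomial.C (p : ℤ)) * c) = i * Φ μ := by
          rw [← heq]
          linear_combination (-(Φ μ)) * hyi
        rw [h3, sq]
        exact Ideal.mul_mem_mul hi𝓟 hμ𝓟'
      rw [h𝓟2] at hβmem
      obtain ⟨m, hmM2, hm⟩ := (Ideal.mem_map_iff_of_surjective Φ hΦsurj).mp hβmem
      obtain ⟨qy, hqy⟩ := hΦsurj (y * c)
      have hker0 : Φ (μ - Polynomial.C (p : ℤ) * qy - m) = 0 := by
        rw [map_sub Φ, map_sub Φ, map_mul Φ, hqy, hm]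
        ring
      obtain ⟨k, hk⟩ := (hker _).mp hker0
      have hμmem : μ - Polynomial.C (p : ℤ) * qy ∈ M ^ 2 := by
        have h4 : μ - Polynomial.C (p : ℤ) * qy = m + f * k := by linear_combination hk
        rw [h4]
        exact Ideal.add_mem _ hmM2 (Ideal.mul_mem_right _ _ hfM2)
      have hmapmem : (μ - Polynomial.C (p : ℤ) * qy).map ψ ∈
          (M.map (Polynomial.mapRingHom ψ)) ^ 2 := by
        rw [← Ideal.map_pow]
        exact Ideal.mem_map_of_mem _ hμmem
      have hMle : M.map (Polynomial.mapRingHom ψ) ≤ Ideal.span {μ.map ψ} := by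
        rw [hMdef, Ideal.map_span]
        refine Ideal.span_le.mpr ?_
        rintro x ⟨z, hz, rfl⟩
        rcases hz with hz | hz
        · rw [hz]
          simpa [Polynomial.coe_mapRingHom, hCp0] using (Ideal.zero_mem _)
        · rw [Set.mem_singleton_iff] at hz
          rw [hz]
          exact Ideal.subset_span (by simp [Polynomial.coe_mapRingHom])
      have h5 : (μ - Polynomial.C (p : ℤ) * qy).map ψ ∈ (Ideal.span {μ.map ψ}) ^ 2 := by
        refine Set.mem_of_mem_of_subset hmapmem ?_
        rw [sq, sq]
        exact Ideal.mul_mono hMle hMle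
      rw [Ideal.span_singleton_pow, Ideal.mem_span_singleton] at h5
      have hmapval : (μ - Polynomial.C (p : ℤ) * qy).map ψ = μ.map ψ := by
        rw [Polynomial.map_sub, Polynomial.map_mul, hCp0, zero_mul, sub_zero]
      rw [hmapval] at h5
      obtain ⟨k2, hk2⟩ := h5
      have h6 : (1 : (ZMod p)[X]) = μ.map ψ * k2 := by
        refine mul_left_cancel₀ hμbar_ne ?_
        rw [mul_one]
        calc μ.map ψ = (μ.map ψ) ^ 2 * k2 := hk2
          _ = μ.map ψ * (μ.map ψ * k2) := by ring
      exact hunit (IsUnit.of_mul_eq_one _ h6.symm)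
    · -- Case B : s p = μ(θ) c, derive p ∈ (μ) + M², contradiction
      obtain ⟨y, i, hi𝓟, hyi⟩ := Ideal.IsMaximal.exists_inv ‹𝓟.IsMaximal› hs
      have hβmem : Φ (Polynomial.C (p : ℤ)) - y * (Φ μ * c) ∈ 𝓟 ^ 2 := by
        have h3 : Φ (Polynomial.C (p : ℤ)) - y * (Φ μ * c) = i * Φ (Polynomial.C (p : ℤ)) := by
          rw [← heq]
          linear_combination (-(Φ (Polynomial.C (p : ℤ)))) * hyi
        rw [h3, sq]
        exact Ideal.mul_mem_mul hi𝓟 hpA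
      rw [h𝓟2] at hβmem
      obtain ⟨m, hmM2, hm⟩ := (Ideal.mem_map_iff_of_surjective Φ hΦsurj).mp hβmem
      obtain ⟨qy, hqy⟩ := hΦsurj (y * c)
      have hker0 : Φ (Polynomial.C (p : ℤ) - μ * qy - m) = 0 := by
        rw [map_sub Φ, map_sub Φ, map_mul Φ, hqy, hm]
        ring
      obtain ⟨k, hk⟩ := (hker _).mp hker0
      have hCpmem : Polynomial.C (p : ℤ) - μ * qy ∈ M ^ 2 := by
        have h4 : Polynomial.C (p : ℤ) - μ * qy = m + f * k := by linear_combination hk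
        rw [h4]
        exact Ideal.add_mem _ hmM2 (Ideal.mul_mem_right _ _ hfM2)
      have hM2le : M ^ 2 ≤ Ideal.span {Polynomial.C (p : ℤ) * Polynomial.C (p : ℤ)} ⊔
          Ideal.span {μ} := by
        rw [sq, hMdef]
        refine Ideal.mul_le.mpr ?_
        intro r hr s' hs'
        obtain ⟨a1, b1, h1⟩ := Ideal.mem_span_pair.mp hr
        obtain ⟨a2, b2, h2⟩ := Ideal.mem_span_pair.mp hs'
        rw [← h1, ← h2]
        refine Submodule.mem_sup.mpr
          ⟨a1 * a2 * (Polynomial.C (p : ℤ) * Polynomial.C (p : ℤ)),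
            Ideal.mem_span_singleton'.mpr ⟨a1 * a2, rfl⟩,
            (a1 * Polynomial.C (p : ℤ) * b2 + b1 * a2 * Polynomial.C (p : ℤ)
              + b1 * b2 * μ) * μ,
            Ideal.mem_span_singleton'.mpr ⟨_, rfl⟩, by ring⟩
      obtain ⟨x1, hx1, x2, hx2, hxeq⟩ := Submodule.mem_sup.mp (hM2le hCpmem)
      obtain ⟨d, hd⟩ := Ideal.mem_span_singleton'.mp hx1
      obtain ⟨e, he⟩ := Ideal.mem_span_singleton'.mp hx2
      have heq2 : Polynomial.C (p : ℤ) * (1 - Polynomial.C (p : ℤ) * d) = μ * (qy + e) := by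
        linear_combination -hxeq - hd - he
      have h0 : (μ.map ψ) * ((qy + e).map ψ) = 0 := by
        have h7 := congrArg (Polynomial.map ψ) heq2
        rw [Polynomial.map_mul, Polynomial.map_mul, hCp0, zero_mul] at h7
        exact h7.symm
      have h00 : (qy + e).map ψ = 0 := by
        rcases mul_eq_zero.mp h0 with hc | hc
        · exact absurd hc hμbar_ne
        · exact hc
      obtain ⟨e3, he3⟩ := eq_C_p_mul p h00
      have hcancel : 1 - Polynomial.C (p : ℤ) * d = μ * e3 := by
        refine mul_left_cancel₀ hCpne ?_
        rw [heq2, he3]; ring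
      have h8 : (1 : (ZMod p)[X]) = μ.map ψ * e3.map ψ := by
        have h7 := congrArg (Polynomial.map ψ) hcancel
        rw [Polynomial.map_sub, Polynomial.map_mul, hCp0, zero_mul, sub_zero,
          Polynomial.map_one, Polynomial.map_mul] at h7
        exact h7
      exact hunit (IsUnit.of_mul_eq_one _ h8.symm)
  -- conclusions
  constructor
  · -- f ∉ M²
    intro hfM2
    apply hmain
    have h1 : Polynomial.C (p : ℤ) * g ∈ M ^ 2 := by
      have h2 : Polynomial.C (p : ℤ) * g = f - μ * h := by linear_combination -hkey
      rw [h2]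
      exact Ideal.sub_mem _ hfM2 (by rw [sq]; exact Ideal.mul_mem_mul hμM hhM)
    rw [sq, hMdef, Ideal.span_pair_mul_span_pair] at h1
    obtain ⟨u1, z1, hz1, he1⟩ := Ideal.mem_span_insert.mp h1
    obtain ⟨u2, z2, hz2, he2⟩ := Ideal.mem_span_insert.mp hz1
    obtain ⟨u3, z3, hz3, he3⟩ := Ideal.mem_span_insert.mp hz2
    obtain ⟨u4, he4⟩ := Ideal.mem_span_singleton'.mp hz3
    have heqbig : Polynomial.C (p : ℤ) * g = u1 * (Polynomial.C (p : ℤ) * Polynomial.C (p : ℤ))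
        + u2 * (Polynomial.C (p : ℤ) * μ) + u3 * (μ * Polynomial.C (p : ℤ)) + u4 * (μ * μ) := by
      rw [he1, he2, he3, ← he4]; ring
    have hu4map : (u4.map ψ) * ((μ.map ψ) * (μ.map ψ)) = 0 := by
      have h7 := congrArg (Polynomial.map ψ) heqbig
      simpa [Polynomial.map_add, Polynomial.map_mul, hCp0] using h7.symm
    have hu40 : u4.map ψ = 0 := by
      rcases mul_eq_zero.mp hu4map with hc | hc
      · exact hc
      · exact absurd hc (mul_ne_zero hμbar_ne hμbar_ne)
    obtain ⟨u5, hu5⟩ := eq_C_p_mul p hu40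
    have hgeq : g = u1 * Polynomial.C (p : ℤ) + u2 * μ + u3 * μ + u5 * (μ * μ) := by
      refine mul_left_cancel₀ hCpne ?_
      rw [heqbig, hu5]; ring
    have hgM : g ∈ M := by
      rw [hgeq]
      refine Ideal.add_mem _ (Ideal.add_mem _ (Ideal.add_mem _ ?_ ?_) ?_) ?_
      · exact Ideal.mul_mem_left _ _ hCpM
      · exact Ideal.mul_mem_left _ _ hμM
      · exact Ideal.mul_mem_left _ _ hμM
      · have : u5 * (μ * μ) = u5 * μ * μ := by ring
        rw [this]
        exact Ideal.mul_mem_left _ _ hμM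
    exact (hmemM g).mp hgM
  · -- existence of g, h and the gcd condition
    refine ⟨g, h, hkey, ?_⟩
    obtain ⟨e, he⟩ := EuclideanDomain.gcd_dvd_left (μ.map ψ) (g.map ψ)
    rcases hirr.isUnit_or_isUnit he with hu | hu
    · exact hu
    · exfalso
      apply hmain
      have hassoc : Associated (EuclideanDomain.gcd (μ.map ψ) (g.map ψ)) (μ.map ψ) :=
        ⟨hu.unit, by rw [IsUnit.unit_spec]; exact he.symm⟩
      exact hassoc.symm.dvd.trans (EuclideanDomain.gcd_dvd_right _ _)
end

section
/- Let θ be an algebraic integer with minimal polynomial f ∈ ℤ[t], let R = ℤ[θ], let 𝒫 be a maximal ideal of R, and let p be the rational prime with 𝒫 ∩ ℤ = pℤ. Let μ_𝒫 ∈ ℤ[t] be a monic polynomial of least degree such that μ_𝒫(θ) ∈ 𝒫, and let M = (p, μ_𝒫(t)) be the corresponding ideal of ℤ[t]. If f ∉ M², then for every g, h ∈ ℤ[t] satisfying f = μ_𝒫·h + p·g one has gcd(μ̄_𝒫, h̄, ḡ) = 1 in 𝔽_p[t]. -/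
open Polynomial

private lemma gcd_aux (A : Type) [CommRing A]
    (𝓟 : Ideal A) [𝓟.IsMaximal]
    (p : ℕ) [Fact p.Prime]
    (θ' : A)
    (hp : ((p : ℕ) : A) ∈ 𝓟)
    (μ : ℤ[X]) (hμmonic : μ.Monic)
    (hμ𝓟 : eval₂ (Int.castRingHom A) θ' μ ∈ 𝓟)
    (hμmin : ∀ q : ℤ[X], q.Monic → eval₂ (Int.castRingHom A) θ' q ∈ 𝓟 →
      μ.degree ≤ q.degree)
    {f : ℤ[X]} (hM : f ∉ (Ideal.span {Polynomial.C ((p : ℕ) : ℤ), μ}) ^ 2)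
    (g h : ℤ[X]) (hfgh : f = μ * h + Polynomial.C ((p : ℕ) : ℤ) * g) :
    IsUnit (EuclideanDomain.gcd
        (EuclideanDomain.gcd (μ.map (Int.castRingHom (ZMod p)))
          (h.map (Int.castRingHom (ZMod p))))
        (g.map (Int.castRingHom (ZMod p)))) := by
  have hpK : ((p : ℕ) : A ⧸ 𝓟) = 0 := by
    rw [← map_natCast (Ideal.Quotient.mk 𝓟)]
    exact Ideal.Quotient.eq_zero_iff_mem.mpr hp
  haveI hcharP : CharP (A ⧸ 𝓟) p := by
    have hdvd : ringChar (A ⧸ 𝓟) ∣ p := ringChar.dvd hpK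
    rcases (Fact.out : p.Prime).eq_one_or_self_of_dvd _ hdvd with h1 | h1
    · exfalso
      have h2 := ringChar.Nat.cast_ringChar (R := A ⧸ 𝓟)
      rw [h1] at h2
      simp at h2
    · exact ringChar.of_eq h1
  letI : Field (A ⧸ 𝓟) := Ideal.Quotient.field 𝓟
  letI : Algebra (ZMod p) (A ⧸ 𝓟) := ZMod.algebra _ p
  set θb : A ⧸ 𝓟 := Ideal.Quotient.mk 𝓟 θ' with hθb
  -- key compatibility
  have key : ∀ q : ℤ[X], aeval θb (q.map (Int.castRingHom (ZMod p))) =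
      Ideal.Quotient.mk 𝓟 (eval₂ (Int.castRingHom A) θ' q) := by
    intro q
    rw [aeval_def, eval₂_map, Polynomial.hom_eval₂]
    have hcomp : (algebraMap (ZMod p) (A ⧸ 𝓟)).comp (Int.castRingHom (ZMod p)) =
        (Ideal.Quotient.mk 𝓟).comp (Int.castRingHom A) := RingHom.ext_int _ _
    rw [hcomp]
  set μb : (ZMod p)[X] := μ.map (Int.castRingHom (ZMod p)) with hμb
  have hμb_monic : μb.Monic := hμmonic.map _
  have hroot : aeval θb μb = 0 := by
    rw [hμb, key]; exact Ideal.Quotient.eq_zero_iff_mem.mpr hμ𝓟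
  have hint : IsIntegral (ZMod p) θb := ⟨μb, hμb_monic, by rwa [← aeval_def]⟩
  set π := minpoly (ZMod p) θb with hπ
  have hπ_monic : π.Monic := minpoly.monic hint
  have hπ_dvd : π ∣ μb := minpoly.dvd _ _ hroot
  -- lift π to a monic integer polynomial of the same degree
  obtain ⟨q, hq_map, hq_deg, hq_monic⟩ :=
    Polynomial.lifts_and_degree_eq_and_monic
      (by
        obtain ⟨q₀, hq₀⟩ := Polynomial.map_surjective (Int.castRingHom (ZMod p))
          ZMod.intCast_surjective π
        exact ⟨q₀, hq₀⟩) hπ_monic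
  have hq𝓟 : eval₂ (Int.castRingHom A) θ' q ∈ 𝓟 := by
    rw [← Ideal.Quotient.eq_zero_iff_mem, ← key, hq_map]
    exact minpoly.aeval _ _
  have hdeg : π.degree = μb.degree := by
    apply le_antisymm
    · exact Polynomial.degree_le_of_dvd hπ_dvd hμb_monic.ne_zero
    · rw [hμb, hμmonic.degree_map, ← hq_deg]
      exact hμmin q hq_monic hq𝓟
  have hπ_eq : π = μb := by
    obtain ⟨c, hc⟩ := hπ_dvd
    have hc0 : c ≠ 0 := by
      rintro rfl
      rw [mul_zero] at hc
      exact hμb_monic.ne_zero hc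
    have hnd : μb.natDegree = π.natDegree + c.natDegree := by
      rw [hc]; exact Polynomial.natDegree_mul hπ_monic.ne_zero hc0
    have hnd2 : π.natDegree = μb.natDegree :=
      Polynomial.natDegree_eq_of_degree_eq hdeg
    have hndc : c.natDegree = 0 := by omega
    have hc_monic : c.Monic := by
      have h3 := hμb_monic.leadingCoeff
      rw [hc, Polynomial.leadingCoeff_mul, hπ_monic.leadingCoeff, one_mul] at h3
      exact h3
    have hc1 : c = 1 := Polynomial.eq_one_of_monic_natDegree_zero hc_monic hndc
    rw [hc, hc1, mul_one]
  have hirr : Irreducible μb := hπ_eq ▸ minpoly.irreducible hint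
  -- main argument
  set hb : (ZMod p)[X] := h.map (Int.castRingHom (ZMod p)) with hhb
  set gb : (ZMod p)[X] := g.map (Int.castRingHom (ZMod p)) with hgb
  by_contra hδ
  set δ := EuclideanDomain.gcd (EuclideanDomain.gcd μb hb) gb with hδdef
  have hδμ : δ ∣ μb :=
    (EuclideanDomain.gcd_dvd_left _ _).trans (EuclideanDomain.gcd_dvd_left _ _)
  have hδh : δ ∣ hb :=
    (EuclideanDomain.gcd_dvd_left _ _).trans (EuclideanDomain.gcd_dvd_right _ _)
  have hδg : δ ∣ gb := EuclideanDomain.gcd_dvd_right _ _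
  have hμdvd : μb ∣ δ := by
    obtain ⟨c, hc⟩ := hδμ
    rcases hirr.isUnit_or_isUnit hc with h1 | h2
    · exact absurd h1 hδ
    · exact ⟨↑h2.unit⁻¹, by rw [hc, mul_assoc, IsUnit.mul_val_inv, mul_one]⟩
  have hμh : μb ∣ hb := hμdvd.trans hδh
  have hμg : μb ∣ gb := hμdvd.trans hδg
  -- lift divisibilities
  have lift : ∀ r : ℤ[X], μb ∣ r.map (Int.castRingHom (ZMod p)) →
      ∃ a b : ℤ[X], r = μ * a + Polynomial.C ((p : ℕ) : ℤ) * b := by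
    intro r hdvd
    obtain ⟨ab, hab⟩ := hdvd
    obtain ⟨a, ha⟩ := Polynomial.map_surjective (Int.castRingHom (ZMod p))
      ZMod.intCast_surjective ab
    have hz : (r - μ * a).map (Int.castRingHom (ZMod p)) = 0 := by
      rw [Polynomial.map_sub, Polynomial.map_mul, ha, ← hμb, hab, sub_self]
    have hcd : Polynomial.C (((p : ℕ) : ℤ)) ∣ (r - μ * a) := by
      rw [Polynomial.C_dvd_iff_dvd_coeff]
      intro i
      have h4 : (((r - μ * a).coeff i : ℤ) : ZMod p) = 0 := by
        have h5 : ((r - μ * a).map (Int.castRingHom (ZMod p))).coeff i = 0 := by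
          rw [hz]; simp
        rw [Polynomial.coeff_map] at h5
        exact_mod_cast h5
      exact (ZMod.intCast_zmod_eq_zero_iff_dvd _ p).mp h4
    obtain ⟨b, hb'⟩ := hcd
    exact ⟨a, b, by linear_combination hb'⟩
  obtain ⟨a, b, hhab⟩ := lift h hμh
  obtain ⟨c, d, hgcd⟩ := lift g hμg
  apply hM
  have hμM : μ ∈ Ideal.span {Polynomial.C ((p : ℕ) : ℤ), μ} :=
    Ideal.subset_span (by simp)
  have hpM : Polynomial.C ((p : ℕ) : ℤ) ∈ Ideal.span {Polynomial.C ((p : ℕ) : ℤ), μ} :=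
    Ideal.subset_span (by simp)
  have hmem : ∀ x y z : ℤ[X], x ∈ Ideal.span {Polynomial.C ((p : ℕ) : ℤ), μ} →
      y ∈ Ideal.span {Polynomial.C ((p : ℕ) : ℤ), μ} →
      x * y * z ∈ (Ideal.span {Polynomial.C ((p : ℕ) : ℤ), μ}) ^ 2 := by
    intro x y z hx hy
    rw [sq]
    exact Ideal.mul_mem_right z _ (Ideal.mul_mem_mul hx hy)
  rw [hfgh, hhab, hgcd]
  have heq : μ * (μ * a + Polynomial.C ((p : ℕ) : ℤ) * b) +
      Polynomial.C ((p : ℕ) : ℤ) * (μ * c + Polynomial.C ((p : ℕ) : ℤ) * d) =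
      μ * μ * a + μ * Polynomial.C ((p : ℕ) : ℤ) * b +
      (Polynomial.C ((p : ℕ) : ℤ) * μ * c +
        Polynomial.C ((p : ℕ) : ℤ) * Polynomial.C ((p : ℕ) : ℤ) * d) := by ring
  rw [heq]
  exact Ideal.add_mem _
    (Ideal.add_mem _ (hmem _ _ _ hμM hμM) (hmem _ _ _ hμM hpM))
    (Ideal.add_mem _ (hmem _ _ _ hpM hμM) (hmem _ _ _ hpM hpM))

set_option maxHeartbeats 1000000 in
set_option synthInstance.maxHeartbeats 100000 in
/-- Let `θ` be an algebraic integer with minimal polynomial `f`, `R = ℤ[θ]`, `𝓟` a maximal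
ideal of `R` lying over the rational prime `p`, `μ_𝓟` a monic integer polynomial of least
degree with `μ_𝓟(θ) ∈ 𝓟`, and `M = (p, μ_𝓟(t)) ⊆ ℤ[t]`.  If `f ∉ M²`, then for every
`g, h ∈ ℤ[t]` with `f = μ_𝓟 h + p g` one has `gcd(μ̄_𝓟, h̄, ḡ) = 1` in `𝔽_p[t]`. -/
theorem gcd_one_of_not_mem_M_sq
    (θ : ℂ) (hθ : IsIntegral ℤ θ)
    (𝓟 : Ideal (Algebra.adjoin ℤ {θ})) [𝓟.IsMaximal]
    (p : ℕ) [Fact p.Prime]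
    (h𝓟p : 𝓟.comap (algebraMap ℤ (Algebra.adjoin ℤ {θ})) = Ideal.span {(p : ℤ)})
    (μ : ℤ[X]) (hμmonic : μ.Monic)
    (hμ𝓟 : aeval (⟨θ, Algebra.self_mem_adjoin_singleton ℤ θ⟩ : Algebra.adjoin ℤ {θ}) μ ∈ 𝓟)
    (hμmin : ∀ q : ℤ[X], q.Monic →
      aeval (⟨θ, Algebra.self_mem_adjoin_singleton ℤ θ⟩ : Algebra.adjoin ℤ {θ}) q ∈ 𝓟 →
      μ.degree ≤ q.degree)
    (hM : minpoly ℤ θ ∉ (Ideal.span {Polynomial.C (p : ℤ), μ}) ^ 2) :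
    ∀ g h : ℤ[X], minpoly ℤ θ = μ * h + Polynomial.C (p : ℤ) * g →
      IsUnit (EuclideanDomain.gcd
        (EuclideanDomain.gcd (μ.map (Int.castRingHom (ZMod p)))
          (h.map (Int.castRingHom (ZMod p))))
        (g.map (Int.castRingHom (ZMod p)))) := by
  intro g h hfgh
  set θ' : Algebra.adjoin ℤ {θ} := ⟨θ, Algebra.self_mem_adjoin_singleton ℤ θ⟩ with hθ'
  have hcast : algebraMap ℤ (Algebra.adjoin ℤ {θ}) =
      Int.castRingHom (Algebra.adjoin ℤ {θ}) := RingHom.ext_int _ _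
  have haev : ∀ q : ℤ[X], aeval θ' q = eval₂ (Int.castRingHom (Algebra.adjoin ℤ {θ})) θ' q := by
    intro q
    rw [aeval_def, hcast]
  have hpmem : ((p : ℕ) : Algebra.adjoin ℤ {θ}) ∈ 𝓟 := by
    have h1 : (p : ℤ) ∈ 𝓟.comap (algebraMap ℤ (Algebra.adjoin ℤ {θ})) := by
      rw [h𝓟p]; exact Ideal.mem_span_singleton_self _
    rw [Ideal.mem_comap] at h1
    rwa [hcast, show (Int.castRingHom (Algebra.adjoin ℤ {θ})) ((p : ℕ) : ℤ) =
      ((p : ℕ) : Algebra.adjoin ℤ {θ}) from map_natCast _ p] at h1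
  exact gcd_aux (Algebra.adjoin ℤ {θ}) 𝓟 p θ' hpmem μ hμmonic
    (by rw [← haev]; exact hμ𝓟)
    (fun q hq hq' => hμmin q hq (by rwa [haev]))
    hM g h hfgh
end

section
/- Let θ be an algebraic integer with minimal polynomial f ∈ ℤ[t], let R = ℤ[θ], let 𝒫 be a maximal ideal of R, and let p be the rational prime with 𝒫 ∩ ℤ = pℤ. Let μ_𝒫 ∈ ℤ[t] be a monic polynomial of least degree such that μ_𝒫(θ) ∈ 𝒫, and let M = (p, μ_𝒫(t)) be the corresponding ideal of ℤ[t]. Then the localization R_𝒫 is a discrete valuation ring if and only if f ∉ M². -/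
open Polynomial

section Aux

variable {p : ℕ} [Fact p.Prime]

/-- If every coefficient of a polynomial maps to zero mod `p`, then `C p` divides it. -/
lemma c_int_dvd_of_map_eq_zero {r : ℤ[X]}
    (h : r.map (Int.castRingHom (ZMod p)) = 0) : Polynomial.C ((p : ℕ) : ℤ) ∣ r := by
  rw [Polynomial.C_dvd_iff_dvd_coeff]
  intro i
  have := congrArg (fun q => Polynomial.coeff q i) h
  simp only [Polynomial.coeff_map, Polynomial.coeff_zero] at this
  exact_mod_cast (ZMod.intCast_zmod_eq_zero_iff_dvd _ p).mp this

/-- Decomposition of elements of `M ^ 2` where `M = (C p, μ)`. -/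
lemma mem_sq_decomp {μ : ℤ[X]} {f : ℤ[X]}
    (hf : f ∈ (Ideal.span {Polynomial.C ((p : ℕ) : ℤ), μ}) ^ 2) :
    ∃ α β : ℤ[X], α ∈ Ideal.span {Polynomial.C ((p : ℕ) : ℤ), μ} ∧
      f = Polynomial.C ((p : ℕ) : ℤ) * α + β * μ ^ 2 := by
  set a : ℤ[X] := Polynomial.C ((p : ℕ) : ℤ) with ha
  set M : Ideal ℤ[X] := Ideal.span {a, μ} with hM
  have key : M ^ 2 ≤ Ideal.span {a} * M ⊔ Ideal.span {μ ^ 2} := by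
    rw [pow_two]
    refine Ideal.mul_le.mpr ?_
    intro x hx y hy
    obtain ⟨u, v, huv⟩ := Ideal.mem_span_pair.mp hx
    obtain ⟨u', v', huv'⟩ := Ideal.mem_span_pair.mp hy
    have hx' : x * y = a * (u * u' * a + u * v' * μ + v * u' * μ) + (v * v') * μ ^ 2 := by
      rw [← huv, ← huv']; ring
    rw [hx']
    refine Submodule.add_mem _ (Submodule.mem_sup_left ?_) (Submodule.mem_sup_right ?_)
    · refine Ideal.mul_mem_mul (Ideal.subset_span (by simp)) ?_
      exact Ideal.mem_span_pair.mpr ⟨u * u', u * v' + v * u', by ring⟩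
    · exact Ideal.mem_span_singleton'.mpr ⟨v * v', rfl⟩
  obtain ⟨x, hx, y, hy, hxy⟩ := Submodule.mem_sup.mp (key hf)
  obtain ⟨α, hα, hαx⟩ := Ideal.mem_span_singleton_mul.mp hx
  obtain ⟨β, hβ⟩ := Ideal.mem_span_singleton'.mp hy
  exact ⟨α, β, hα, by rw [← hxy, ← hαx, ← hβ]⟩

end Aux

set_option maxHeartbeats 4000000 in
set_option synthInstance.maxHeartbeats 1000000 in
/-- Let `θ` be an algebraic integer with minimal polynomial `f`, `R = ℤ[θ]`, `𝓟` a maximal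
ideal of `R` lying over the rational prime `p`, `μ_𝓟` a monic integer polynomial of least
degree with `μ_𝓟(θ) ∈ 𝓟`, and `M = (p, μ_𝓟(t)) ⊆ ℤ[t]`.  The localization `R_𝓟` is a
discrete valuation ring if and only if `f ∉ M²`. -/
theorem dvr_iff_not_mem_M_sq
    (θ : ℂ) (hθ : IsIntegral ℤ θ)
    (𝓟 : Ideal (Algebra.adjoin ℤ {θ})) [𝓟.IsMaximal]
    (p : ℕ) [Fact p.Prime]
    (h𝓟p : 𝓟.comap (algebraMap ℤ (Algebra.adjoin ℤ {θ})) = Ideal.span {(p : ℤ)})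
    (μ : ℤ[X]) (hμmonic : μ.Monic)
    (hμ𝓟 : aeval (⟨θ, Algebra.self_mem_adjoin_singleton ℤ θ⟩ : Algebra.adjoin ℤ {θ}) μ ∈ 𝓟)
    (hμmin : ∀ q : ℤ[X], q.Monic →
      aeval (⟨θ, Algebra.self_mem_adjoin_singleton ℤ θ⟩ : Algebra.adjoin ℤ {θ}) q ∈ 𝓟 →
      μ.degree ≤ q.degree) :
    IsDiscreteValuationRing (Localization.AtPrime 𝓟) ↔
      minpoly ℤ θ ∉ (Ideal.span {Polynomial.C (p : ℤ), μ}) ^ 2 := by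
  classical
  have pP : p.Prime := Fact.out
  set θ' : Algebra.adjoin ℤ {θ} := ⟨θ, Algebra.self_mem_adjoin_singleton ℤ θ⟩ with hθ'def
  have hval : (algebraMap (Algebra.adjoin ℤ {θ}) ℂ) θ' = θ := rfl
  have hinjval : Function.Injective (algebraMap (Algebra.adjoin ℤ {θ}) ℂ) :=
    Subtype.val_injective
  have hθ'int : IsIntegral ℤ θ' := by
    have h := hθ
    rw [← hval] at h
    exact (isIntegral_algebraMap_iff (R := ℤ) hinjval).mp h
  have hminθ : minpoly ℤ θ' = minpoly ℤ θ := by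
    have := minpoly.algebraMap_eq (A := ℤ) hinjval θ'
    rw [hval] at this
    exact this.symm
  -- the evaluation map
  set φ : ℤ[X] →+* (Algebra.adjoin ℤ {θ}) :=
    ((Polynomial.aeval θ').toRingHom : ℤ[X] →+* (Algebra.adjoin ℤ {θ})) with hφdef
  have hφaeval : ∀ g : ℤ[X], φ g = Polynomial.aeval θ' g := fun g => rfl
  have hinjℤ : Function.Injective (algebraMap ℤ (Algebra.adjoin ℤ {θ})) := by
    intro x y hxy
    have h2 : algebraMap ℤ ℂ x = algebraMap ℤ ℂ y := by
      rw [IsScalarTower.algebraMap_apply ℤ (Algebra.adjoin ℤ {θ}) ℂ,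
        IsScalarTower.algebraMap_apply ℤ (Algebra.adjoin ℤ {θ}) ℂ, hxy]
    exact Int.cast_injective h2
  haveI hNZSMD : NoZeroSMulDivisors ℤ (Algebra.adjoin ℤ {θ}) :=
    by have := Module.isTorsionFree_iff_algebraMap_injective.mpr hinjℤ; infer_instance
  have hker : RingHom.ker φ = Ideal.span {minpoly ℤ θ} := by
    rw [hφdef, minpoly.ker_eval hθ'int, hminθ]
  have hφsurj : Function.Surjective φ := by
    intro x
    obtain ⟨g, hg⟩ : ∃ g : ℤ[X], Polynomial.aeval θ g = (x : ℂ) := by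
      have hx : (x : ℂ) ∈ (Polynomial.aeval θ : ℤ[X] →ₐ[ℤ] ℂ).range := by
        rw [← Algebra.adjoin_singleton_eq_range_aeval]; exact x.2
      exact hx
    refine ⟨g, ?_⟩
    apply Subtype.ext
    rw [hφaeval, Polynomial.aeval_subalgebra_coe]
    exact hg
  -- p ∈ 𝓟
  have hpmem : φ (Polynomial.C ((p : ℕ) : ℤ)) ∈ 𝓟 := by
    have h1 : ((p : ℕ) : ℤ) ∈ Ideal.span {((p : ℕ) : ℤ)} := Ideal.subset_span rfl
    rw [← h𝓟p, Ideal.mem_comap] at h1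
    have h2 : φ (Polynomial.C ((p : ℕ) : ℤ)) = algebraMap ℤ (Algebra.adjoin ℤ {θ}) ((p : ℕ) : ℤ) := by
      rw [hφaeval, Polynomial.aeval_C]
    rw [h2]
    exact h1
  set M : Ideal ℤ[X] := Ideal.span {Polynomial.C ((p : ℕ) : ℤ), μ} with hMdef
  -- 𝓟 pulls back to M
  have hcomap : 𝓟.comap φ = M := by
    apply le_antisymm
    · -- hard direction
      intro g hg
      rw [Ideal.mem_comap] at hg
      have hdiv : g %ₘ μ + μ * (g /ₘ μ) = g := Polynomial.modByMonic_add_div g μ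
      have hμP : φ μ ∈ 𝓟 := hμ𝓟
      have hrP : φ (g %ₘ μ) ∈ 𝓟 := by
        have h1 : φ (g %ₘ μ) = φ g - φ μ * φ (g /ₘ μ) := by
          rw [← map_mul, ← map_sub]
          congr 1
          linear_combination hdiv
        rw [h1]
        exact Ideal.sub_mem _ hg (Ideal.mul_mem_right _ _ hμP)
      -- g %ₘ μ is divisible by p
      have hCp : Polynomial.C ((p : ℕ) : ℤ) ∣ g %ₘ μ := by
        by_contra hnd
        set rbar := (g %ₘ μ).map (Int.castRingHom (ZMod p)) with hrbar
        have hrbar0 : rbar ≠ 0 := fun h0 => hnd (c_int_dvd_of_map_eq_zero h0)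
        set u := rbar * Polynomial.C (rbar.leadingCoeff)⁻¹ with hu
        have humonic : u.Monic := Polynomial.monic_mul_leadingCoeff_inv hrbar0
        have hulifts : u ∈ Polynomial.lifts (Int.castRingHom (ZMod p)) := by
          have hsur : Function.Surjective (Int.castRingHom (ZMod p)) :=
            fun x => ZMod.intCast_surjective x
          obtain ⟨w, hw⟩ := Polynomial.map_surjective _ hsur u
          exact ⟨w, hw⟩
        obtain ⟨s, hsmap, hsdeg, hsmonic⟩ :=
          Polynomial.lifts_and_degree_eq_and_monic hulifts humonic
        obtain ⟨c, hc⟩ := ZMod.intCast_surjective (rbar.leadingCoeff)⁻¹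
        have hmap0 : (s - Polynomial.C c * (g %ₘ μ)).map (Int.castRingHom (ZMod p)) = 0 := by
          rw [Polynomial.map_sub, Polynomial.map_mul, hsmap, Polynomial.map_C]
          simp only [Int.coe_castRingHom]
          rw [hc, hu, ← hrbar]
          ring
        obtain ⟨w, hw⟩ := c_int_dvd_of_map_eq_zero hmap0
        have hsP : φ s ∈ 𝓟 := by
          have h1 : φ s = φ (Polynomial.C ((p : ℕ) : ℤ)) * φ w
              + φ (Polynomial.C c) * φ (g %ₘ μ) := by
            rw [← map_mul, ← map_mul, ← map_add]
            congr 1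
            linear_combination hw
          rw [h1]
          exact Ideal.add_mem 𝓟 (Ideal.mul_mem_right _ 𝓟 hpmem) (Ideal.mul_mem_left _ _ hrP)
        have hdeg : s.degree < μ.degree := by
          calc s.degree = u.degree := hsdeg
            _ = rbar.degree := Polynomial.degree_mul_leadingCoeff_inv rbar hrbar0
            _ ≤ (g %ₘ μ).degree := Polynomial.degree_map_le
            _ < μ.degree := Polynomial.degree_modByMonic_lt g hμmonic
        exact absurd (hμmin s hsmonic hsP) (not_le.mpr hdeg)
      obtain ⟨w, hw⟩ := hCp
      rw [hMdef]
      refine Ideal.mem_span_pair.mpr ⟨w, g /ₘ μ, ?_⟩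
      linear_combination hdiv - hw
    · rw [hMdef, Ideal.span_le]
      rintro x hx
      simp only [Set.mem_insert_iff, Set.mem_singleton_iff] at hx
      rcases hx with rfl | rfl
      · exact hpmem
      · exact hμ𝓟
  have hφf : φ (minpoly ℤ θ) = 0 := by
    rw [hφaeval, ← hminθ]; exact minpoly.aeval ℤ θ'
  have hfM : minpoly ℤ θ ∈ M := by
    rw [← hcomap, Ideal.mem_comap, hφf]
    exact Ideal.zero_mem 𝓟
  -- the localization
  set ι : (Algebra.adjoin ℤ {θ}) →+* Localization.AtPrime 𝓟 :=
    algebraMap (Algebra.adjoin ℤ {θ}) (Localization.AtPrime 𝓟) with hιdef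
  haveI : IsDomain (Localization.AtPrime 𝓟) :=
    IsLocalization.isDomain_localization 𝓟.primeCompl_le_nonZeroDivisors
  haveI : IsNoetherianRing (Algebra.adjoin ℤ {θ}) := by
    haveI hFT : Algebra.FiniteType ℤ (Algebra.adjoin ℤ {θ}) := by
      rw [← Subalgebra.fg_iff_finiteType]
      exact Subalgebra.fg_def.mpr ⟨{θ}, Set.finite_singleton θ, rfl⟩
    exact Algebra.FiniteType.isNoetherianRing ℤ _
  haveI : IsNoetherianRing (Localization.AtPrime 𝓟) :=
    IsLocalization.isNoetherianRing 𝓟.primeCompl (Localization.AtPrime 𝓟) inferInstance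
  have hιinj : Function.Injective ι :=
    IsLocalization.injective (Localization.AtPrime 𝓟) 𝓟.primeCompl_le_nonZeroDivisors
  have hpR0 : φ (Polynomial.C ((p : ℕ) : ℤ)) ≠ 0 := by
    intro h0
    have h2 : φ (Polynomial.C ((p : ℕ) : ℤ))
        = algebraMap ℤ (Algebra.adjoin ℤ {θ}) ((p : ℕ) : ℤ) := by
      rw [hφaeval, Polynomial.aeval_C]
    rw [h2, ← map_zero (algebraMap ℤ (Algebra.adjoin ℤ {θ}))] at h0
    exact pP.ne_zero (by exact_mod_cast hinjℤ h0)
  have hmax : IsLocalRing.maximalIdeal (Localization.AtPrime 𝓟)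
      = Ideal.span {ι (φ (Polynomial.C ((p : ℕ) : ℤ))), ι (φ μ)} := by
    rw [← Localization.AtPrime.map_eq_maximalIdeal]
    have h𝓟 : 𝓟 = M.map φ := by rw [← hcomap, Ideal.map_comap_of_surjective φ hφsurj]
    have h2 : Ideal.map (algebraMap (Algebra.adjoin ℤ {θ}) (Localization.AtPrime 𝓟)) 𝓟
        = Ideal.map ι (Ideal.map φ M) := congrArg _ h𝓟
    rw [h2, hMdef, Ideal.map_span, Ideal.map_span]
    congr 1
    rw [Set.image_insert_eq, Set.image_singleton, Set.image_insert_eq, Set.image_singleton]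
  have hnotfield : ¬ IsField (Localization.AtPrime 𝓟) := by
    rw [IsLocalRing.isField_iff_maximalIdeal_eq]
    intro h0
    have hm : ι (φ (Polynomial.C ((p : ℕ) : ℤ))) ∈ IsLocalRing.maximalIdeal (Localization.AtPrime 𝓟) := by
      rw [hmax]; exact Ideal.subset_span (by simp)
    rw [h0] at hm
    simp only [Ideal.mem_bot] at hm
    exact hpR0 (hιinj (by rw [hm, map_zero]))
  constructor
  · -- DVR → f ∉ M²
    intro hdvr hfM2
    haveI : ValuationRing (Localization.AtPrime 𝓟) := ((IsDiscreteValuationRing.TFAE (Localization.AtPrime 𝓟) hnotfield).out 0 1).mp hdvr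
    obtain ⟨α, β, hαM, hαβ⟩ := mem_sq_decomp (p := p) (μ := μ) (f := minpoly ℤ θ)
      (by exact hfM2)
    obtain ⟨c, hc⟩ := ValuationRing.cond (ι (φ (Polynomial.C ((p : ℕ) : ℤ)))) (ι (φ μ))
    -- clear denominators in either case
    have clear : ∀ x y : ℤ[X], (∃ c : (Localization.AtPrime 𝓟), ι (φ x) * c = ι (φ y)) →
        ∃ σ γ : ℤ[X], σ ∉ M ∧ φ (x * γ) = φ (y * σ) := by
      rintro x y ⟨d, hd⟩
      obtain ⟨⟨γ', s⟩, hγs : IsLocalization.mk' (Localization.AtPrime 𝓟) γ' s = d⟩ :=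
        IsLocalization.mk'_surjective 𝓟.primeCompl d
      obtain ⟨γ, hγ⟩ := hφsurj γ'
      obtain ⟨σ, hσ⟩ := hφsurj (s : (Algebra.adjoin ℤ {θ}))
      refine ⟨σ, γ, ?_, ?_⟩
      · intro hσM
        rw [← hcomap, Ideal.mem_comap, hσ] at hσM
        exact s.2 hσM
      · apply hιinj
        rw [map_mul, map_mul, map_mul, map_mul, hγ, hσ]
        calc ι (φ x) * ι γ' = ι (φ x) * (IsLocalization.mk' (Localization.AtPrime 𝓟) γ' s * ι (s : (Algebra.adjoin ℤ {θ}))) := by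
              rw [IsLocalization.mk'_spec]
          _ = (ι (φ x) * d) * ι (s : (Algebra.adjoin ℤ {θ})) := by rw [hγs]; ring
          _ = ι (φ y) * ι (s : (Algebra.adjoin ℤ {θ})) := by rw [hd]
    have hμbar : (μ.map (Int.castRingHom (ZMod p))) ≠ 0 := (hμmonic.map _).ne_zero
    have hCp0 : (Polynomial.C ((Int.castRingHom (ZMod p)) ((p : ℕ) : ℤ)) : (ZMod p)[X]) = 0 := by
      simp
    rcases hc with hc1 | hc2
    · -- p * c = μθ
      obtain ⟨σ, γ, hσM, hφeq⟩ := clear _ _ ⟨c, hc1⟩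
      have hkermem : Polynomial.C ((p : ℕ) : ℤ) * γ - μ * σ ∈ RingHom.ker φ := by
        rw [RingHom.mem_ker, map_sub, hφeq, sub_self]
      rw [hker, Ideal.mem_span_singleton'] at hkermem
      obtain ⟨g, hg⟩ := hkermem
      have key : μ * (σ + g * β * μ) = Polynomial.C ((p : ℕ) : ℤ) * (γ - g * α) := by
        have h1 : Polynomial.C ((p : ℕ) : ℤ) * γ - μ * σ
            = g * (Polynomial.C ((p : ℕ) : ℤ) * α + β * μ ^ 2) := by
          rw [← hg, hαβ]
        linear_combination -h1
      have hmapkey := congrArg (Polynomial.map (Int.castRingHom (ZMod p))) key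
      rw [Polynomial.map_mul, Polynomial.map_mul, Polynomial.map_C, hCp0, zero_mul] at hmapkey
      have hfactor0 : ((σ + g * β * μ).map (Int.castRingHom (ZMod p))) = 0 :=
        (mul_eq_zero.mp hmapkey).resolve_left hμbar
      obtain ⟨w, hw⟩ := c_int_dvd_of_map_eq_zero hfactor0
      have : σ ∈ M := by
        rw [hMdef]
        refine Ideal.mem_span_pair.mpr ⟨w, -(g * β), ?_⟩
        linear_combination -hw
      exact hσM this
    · -- μθ * c = p
      obtain ⟨σ, γ, hσM, hφeq⟩ := clear _ _ ⟨c, hc2⟩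
      have hkermem : μ * γ - Polynomial.C ((p : ℕ) : ℤ) * σ ∈ RingHom.ker φ := by
        rw [RingHom.mem_ker, map_sub, hφeq, sub_self]
      rw [hker, Ideal.mem_span_singleton'] at hkermem
      obtain ⟨g, hg⟩ := hkermem
      have key : μ * (γ - g * β * μ) = Polynomial.C ((p : ℕ) : ℤ) * (σ + g * α) := by
        have h1 : μ * γ - Polynomial.C ((p : ℕ) : ℤ) * σ
            = g * (Polynomial.C ((p : ℕ) : ℤ) * α + β * μ ^ 2) := by
          rw [← hg, hαβ]
        linear_combination h1
      have hmapkey := congrArg (Polynomial.map (Int.castRingHom (ZMod p))) key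
      rw [Polynomial.map_mul, Polynomial.map_mul, Polynomial.map_C, hCp0, zero_mul] at hmapkey
      have hfactor0 : ((γ - g * β * μ).map (Int.castRingHom (ZMod p))) = 0 :=
        (mul_eq_zero.mp hmapkey).resolve_left hμbar
      obtain ⟨δ, hδ⟩ := c_int_dvd_of_map_eq_zero hfactor0
      have hCpne : (Polynomial.C ((p : ℕ) : ℤ) : ℤ[X]) ≠ 0 := by
        rw [Ne, Polynomial.C_eq_zero]
        exact_mod_cast pP.ne_zero
      have hσeq : σ = μ * δ - g * α := by
        have h2 : Polynomial.C ((p : ℕ) : ℤ) * (μ * δ)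
            = Polynomial.C ((p : ℕ) : ℤ) * (σ + g * α) := by
          rw [← key, hδ]; ring
        have h3 := mul_left_cancel₀ hCpne h2
        linear_combination -h3
      have : σ ∈ M := by
        rw [hσeq]
        refine Ideal.sub_mem _ ?_ ?_
        · exact Ideal.mul_mem_right _ _ (Ideal.subset_span (by simp))
        · exact Ideal.mul_mem_left _ _ hαM
      exact hσM this
  · -- f ∉ M² → DVR
    intro hfnotM2
    have hfnotM2' : minpoly ℤ θ ∉ M ^ 2 := fun hh => hfnotM2 hh
    obtain ⟨u, v, huv⟩ := Ideal.mem_span_pair.mp hfM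
    have hnotboth : u ∉ M ∨ v ∉ M := by
      by_contra h
      push_neg at h
      apply hfnotM2'
      rw [pow_two]
      have h1 : u * Polynomial.C ((p : ℕ) : ℤ) ∈ M * M :=
        Ideal.mul_mem_mul h.1 (Ideal.subset_span (by simp))
      have h2 : v * μ ∈ M * M :=
        Ideal.mul_mem_mul h.2 (Ideal.subset_span (by simp))
      rw [← huv]
      exact Ideal.add_mem _ h1 h2
    have hzero : ι (φ u) * ι (φ (Polynomial.C ((p : ℕ) : ℤ))) + ι (φ v) * ι (φ μ) = 0 := by
      rw [← map_mul, ← map_mul, ← map_mul, ← map_mul, ← map_add, ← map_add, huv, hφf,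
        map_zero]
    have hprinc : (IsLocalRing.maximalIdeal (Localization.AtPrime 𝓟)).IsPrincipal := by
      rcases hnotboth with hu | hv
      · have huP : φ u ∉ 𝓟 := fun h => hu (by rw [← hcomap]; exact h)
        have hunit : IsUnit (ι (φ u)) :=
          IsLocalization.map_units (Localization.AtPrime 𝓟) (⟨φ u, huP⟩ : 𝓟.primeCompl)
        obtain ⟨w, hw⟩ := hunit.exists_left_inv
        refine ⟨ι (φ μ), ?_⟩
        rw [hmax, Ideal.submodule_span_eq]
        apply le_antisymm
        · rw [Ideal.span_le]
          rintro x hx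
          simp only [Set.mem_insert_iff, Set.mem_singleton_iff] at hx
          rcases hx with rfl | rfl
          · rw [SetLike.mem_coe, Ideal.mem_span_singleton']
            refine ⟨-(w * ι (φ v)), ?_⟩
            have h1 : ι (φ (Polynomial.C ((p : ℕ) : ℤ)))
                = w * (ι (φ u) * ι (φ (Polynomial.C ((p : ℕ) : ℤ)))) := by
              rw [← mul_assoc, hw, one_mul]
            have h2 : ι (φ u) * ι (φ (Polynomial.C ((p : ℕ) : ℤ))) = -(ι (φ v) * ι (φ μ)) := by
              linear_combination hzero
            rw [h1, h2]; ring
          · exact Ideal.subset_span rfl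
        · rw [Ideal.span_le]
          rintro x rfl
          exact Ideal.subset_span (by simp)
      · have hvP : φ v ∉ 𝓟 := fun h => hv (by rw [← hcomap]; exact h)
        have hunit : IsUnit (ι (φ v)) :=
          IsLocalization.map_units (Localization.AtPrime 𝓟) (⟨φ v, hvP⟩ : 𝓟.primeCompl)
        obtain ⟨w, hw⟩ := hunit.exists_left_inv
        refine ⟨ι (φ (Polynomial.C ((p : ℕ) : ℤ))), ?_⟩
        rw [hmax, Ideal.submodule_span_eq]
        apply le_antisymm
        · rw [Ideal.span_le]
          rintro x hx
          simp only [Set.mem_insert_iff, Set.mem_singleton_iff] at hx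
          rcases hx with rfl | rfl
          · exact Ideal.subset_span rfl
          · rw [SetLike.mem_coe, Ideal.mem_span_singleton']
            refine ⟨-(w * ι (φ u)), ?_⟩
            have h1 : ι (φ μ) = w * (ι (φ v) * ι (φ μ)) := by
              rw [← mul_assoc, hw, one_mul]
            have h2 : ι (φ v) * ι (φ μ) = -(ι (φ u) * ι (φ (Polynomial.C ((p : ℕ) : ℤ)))) := by
              linear_combination hzero
            rw [h1, h2]; ring
        · rw [Ideal.span_le]
          rintro x rfl
          exact Ideal.subset_span (by simp)
    exact ((IsDiscreteValuationRing.TFAE (Localization.AtPrime 𝓟) hnotfield).out 0 4).mpr hprinc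
end

section
/- Let θ be an algebraic integer with minimal polynomial f ∈ ℤ[t], let R = ℤ[θ], let 𝒫 be a maximal ideal of R, and let p be the rational prime with 𝒫 ∩ ℤ = pℤ. Let μ_𝒫 ∈ ℤ[t] be a monic polynomial of least degree such that μ_𝒫(θ) ∈ 𝒫. If the localization R_𝒫 is a discrete valuation ring, then there exist g, h ∈ ℤ[t] such that f = μ_𝒫·h + p·g and gcd(μ̄_𝒫, ḡ, h̄) = 1 in 𝔽_p[t]. -/
open Polynomial

private lemma aux_Cp_dvd (p : ℕ) (q : ℤ[X]) (hq : q.map (Int.castRingHom (ZMod p)) = 0) :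
    ∃ B : ℤ[X], q = Polynomial.C (p : ℤ) * B := by
  have : Polynomial.C (p : ℤ) ∣ q := by
    rw [Polynomial.C_dvd_iff_dvd_coeff]
    intro n
    have h := congrArg (fun r => Polynomial.coeff r n) hq
    simp only [Polynomial.coeff_map, Polynomial.coeff_zero, Int.coe_castRingHom] at h
    exact (ZMod.intCast_zmod_eq_zero_iff_dvd _ p).mp h
  obtain ⟨B, hB⟩ := this
  exact ⟨B, hB⟩

private lemma aux_mem_of_dvd {A : Type*} [CommRing A] (𝓟 : Ideal A) (p : ℕ) (x : A)
    (hp : algebraMap ℤ A (p : ℤ) ∈ 𝓟) {q₂ q₁ : ℤ[X]}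
    (h₂ : aeval x q₂ ∈ 𝓟)
    (hdvd : q₂.map (Int.castRingHom (ZMod p)) ∣ q₁.map (Int.castRingHom (ZMod p))) :
    aeval x q₁ ∈ 𝓟 := by
  obtain ⟨a, ha⟩ := hdvd
  obtain ⟨A', hA'⟩ := Polynomial.map_surjective (Int.castRingHom (ZMod p))
    (fun y => ZMod.intCast_surjective y) a
  obtain ⟨B, hB⟩ := aux_Cp_dvd p (q₁ - q₂ * A') (by
    rw [Polynomial.map_sub, Polynomial.map_mul, hA', ← ha, sub_self])
  have hq₁ : q₁ = q₂ * A' + Polynomial.C (p : ℤ) * B := by linear_combination hB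
  rw [hq₁, map_add, map_mul, map_mul, aeval_C]
  exact Ideal.add_mem _ (Ideal.mul_mem_right _ _ h₂) (Ideal.mul_mem_right _ _ hp)

private lemma aux_dvd_of_mem {A : Type*} [CommRing A] (𝓟 : Ideal A) (p : ℕ) [Fact p.Prime]
    (x : A) (hp : algebraMap ℤ A (p : ℤ) ∈ 𝓟) (μ : ℤ[X]) (hμmonic : μ.Monic)
    (hμ𝓟 : aeval x μ ∈ 𝓟)
    (hμmin : ∀ q : ℤ[X], q.Monic → aeval x q ∈ 𝓟 → μ.degree ≤ q.degree)
    {q : ℤ[X]} (hq : aeval x q ∈ 𝓟) :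
    μ.map (Int.castRingHom (ZMod p)) ∣ q.map (Int.castRingHom (ZMod p)) := by
  set φ := Int.castRingHom (ZMod p) with hφ
  have hμ'monic : (μ.map φ).Monic := hμmonic.map φ
  rw [← Polynomial.modByMonic_eq_zero_iff_dvd hμ'monic]
  by_contra hr
  set r' := (q.map φ) %ₘ (μ.map φ) with hr'def
  obtain ⟨D, hD⟩ := Polynomial.map_surjective φ ZMod.intCast_surjective ((q.map φ) /ₘ (μ.map φ))
  have hμD : aeval x (μ * D) ∈ 𝓟 := by
    rw [map_mul]; exact Ideal.mul_mem_right _ _ hμ𝓟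
  have hrθ : aeval x (q - μ * D) ∈ 𝓟 := by
    rw [map_sub]; exact Ideal.sub_mem _ hq hμD
  have hrmap : (q - μ * D).map φ = r' := by
    have key := Polynomial.modByMonic_add_div (q.map φ) (μ.map φ)
    rw [Polynomial.map_sub, Polynomial.map_mul, hD, hr'def]
    linear_combination -key
  have hw : (r' * Polynomial.C r'.leadingCoeff⁻¹).Monic :=
    Polynomial.monic_mul_leadingCoeff_inv hr
  have hlift : (r' * Polynomial.C r'.leadingCoeff⁻¹) ∈ Polynomial.lifts φ := by
    rw [Polynomial.lifts_iff_coeff_lifts]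
    intro n
    obtain ⟨a, ha⟩ := ZMod.intCast_surjective ((r' * Polynomial.C r'.leadingCoeff⁻¹).coeff n)
    exact ⟨a, ha⟩
  obtain ⟨W, hW1, hW2, hW3⟩ := Polynomial.lifts_and_degree_eq_and_monic hlift hw
  have hWθ : aeval x W ∈ 𝓟 :=
    aux_mem_of_dvd 𝓟 p x hp hrθ (by rw [hrmap, hW1]; exact dvd_mul_right _ _)
  have hle := hμmin W hW3 hWθ
  have hlt : W.degree < μ.degree := by
    rw [hW2, Polynomial.degree_mul_leadingCoeff_inv _ hr]
    calc r'.degree < (μ.map φ).degree := Polynomial.degree_modByMonic_lt _ hμ'monic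
    _ = μ.degree := hμmonic.degree_map φ
  exact absurd hle (not_le.mpr hlt)

private lemma aux_irred {A : Type*} [CommRing A] (𝓟 : Ideal A) [hmax : 𝓟.IsMaximal]
    (p : ℕ) [Fact p.Prime] (x : A)
    (hp : algebraMap ℤ A (p : ℤ) ∈ 𝓟) (μ : ℤ[X]) (hμmonic : μ.Monic)
    (hμ𝓟 : aeval x μ ∈ 𝓟)
    (hμmin : ∀ q : ℤ[X], q.Monic → aeval x q ∈ 𝓟 → μ.degree ≤ q.degree) :
    Irreducible (μ.map (Int.castRingHom (ZMod p))) := by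
  set φ := Int.castRingHom (ZMod p) with hφ
  have hμ'monic : (μ.map φ).Monic := hμmonic.map φ
  constructor
  · intro hu
    have h0 : μ.natDegree = 0 := by
      have := Polynomial.natDegree_eq_zero_of_isUnit hu
      rwa [hμmonic.natDegree_map φ] at this
    have hμ1 : μ = 1 := hμmonic.natDegree_eq_zero.mp h0
    rw [hμ1, map_one] at hμ𝓟
    exact hmax.ne_top ((Ideal.eq_top_iff_one _).mpr hμ𝓟)
  · intro a b hab
    haveI := hmax.isPrime
    obtain ⟨A', hA'⟩ := Polynomial.map_surjective φ ZMod.intCast_surjective a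
    obtain ⟨B', hB'⟩ := Polynomial.map_surjective φ ZMod.intCast_surjective b
    have hmem : aeval x (A' * B') ∈ 𝓟 := by
      refine aux_mem_of_dvd 𝓟 p x hp hμ𝓟 ?_
      rw [Polynomial.map_mul, hA', hB', ← hab]
    rw [map_mul] at hmem
    rcases Ideal.IsPrime.mem_or_mem ‹𝓟.IsPrime› hmem with h | h
    · obtain ⟨c, hc⟩ := hA' ▸ aux_dvd_of_mem 𝓟 p x hp μ hμmonic hμ𝓟 hμmin h
      refine Or.inr (IsUnit.of_mul_eq_one (a := b) c ?_)
      have : μ.map φ * (b * c) = μ.map φ * 1 := by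
        linear_combination (-b : (ZMod p)[X]) * hc - hab
      exact mul_left_cancel₀ hμ'monic.ne_zero this
    · obtain ⟨c, hc⟩ := hB' ▸ aux_dvd_of_mem 𝓟 p x hp μ hμmonic hμ𝓟 hμmin h
      refine Or.inl (IsUnit.of_mul_eq_one (a := a) c ?_)
      have : μ.map φ * (a * c) = μ.map φ * 1 := by
        linear_combination (-a : (ZMod p)[X]) * hc - hab
      exact mul_left_cancel₀ hμ'monic.ne_zero this

set_option maxHeartbeats 1600000 in
set_option synthInstance.maxHeartbeats 400000 in
/-- **Converse of Lüneburg's test.**  Let `θ` be an algebraic integer with minimal polynomial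
`f`, `R = ℤ[θ]`, `𝓟` a maximal ideal of `R` lying over the rational prime `p`, and `μ_𝓟` a
monic integer polynomial of least degree with `μ_𝓟(θ) ∈ 𝓟`.  If the localization `R_𝓟` is a
discrete valuation ring, then there exist `g, h ∈ ℤ[t]` such that `f = μ_𝓟 h + p g` and
`gcd(μ̄_𝓟, ḡ, h̄) = 1` in `𝔽_p[t]`. -/
theorem exists_gcd_one_of_dvr
    (θ : ℂ) (hθ : IsIntegral ℤ θ)
    (𝓟 : Ideal (Algebra.adjoin ℤ {θ})) [𝓟.IsMaximal]
    (p : ℕ) [Fact p.Prime]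
    (h𝓟p : 𝓟.comap (algebraMap ℤ (Algebra.adjoin ℤ {θ})) = Ideal.span {(p : ℤ)})
    (μ : ℤ[X]) (hμmonic : μ.Monic)
    (hμ𝓟 : aeval (⟨θ, Algebra.self_mem_adjoin_singleton ℤ θ⟩ : Algebra.adjoin ℤ {θ}) μ ∈ 𝓟)
    (hμmin : ∀ q : ℤ[X], q.Monic →
      aeval (⟨θ, Algebra.self_mem_adjoin_singleton ℤ θ⟩ : Algebra.adjoin ℤ {θ}) q ∈ 𝓟 →
      μ.degree ≤ q.degree)
    (hdvr : IsDiscreteValuationRing (Localization.AtPrime 𝓟)) :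
    ∃ g h : ℤ[X], minpoly ℤ θ = μ * h + Polynomial.C (p : ℤ) * g ∧
      IsUnit (EuclideanDomain.gcd
        (EuclideanDomain.gcd (μ.map (Int.castRingHom (ZMod p)))
          (g.map (Int.castRingHom (ZMod p))))
        (h.map (Int.castRingHom (ZMod p)))) := by
  classical
  set φ := Int.castRingHom (ZMod p) with hφdef
  set θ' : Algebra.adjoin ℤ {θ} := ⟨θ, Algebra.self_mem_adjoin_singleton ℤ θ⟩ with hθ'def
  have hp0 : ((p : ℤ) : ZMod p) = 0 := by
    exact_mod_cast ZMod.natCast_self p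
  have hp0' : φ ((p : ℤ)) = 0 := by
    rw [hφdef, Int.coe_castRingHom]; exact hp0
  have hCp : Polynomial.C (φ ((p : ℤ))) = (0 : (ZMod p)[X]) := by
    rw [hp0', Polynomial.C_0]
  have hpZ : (p : ℤ) ≠ 0 := Int.natCast_ne_zero.mpr (Fact.out : p.Prime).ne_zero
  have hp𝓟 : algebraMap ℤ (Algebra.adjoin ℤ {θ}) (p : ℤ) ∈ 𝓟 := by
    rw [← Ideal.mem_comap, h𝓟p]
    exact Ideal.mem_span_singleton_self _
  have hcoe : ∀ q : ℤ[X], ((aeval θ' q : Algebra.adjoin ℤ {θ}) : ℂ) = aeval θ q := by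
    intro q
    exact Polynomial.aeval_subalgebra_coe q _ _
  have hf0 : aeval θ' (minpoly ℤ θ) = 0 := by
    have h1 : ((aeval θ' (minpoly ℤ θ) : Algebra.adjoin ℤ {θ}) : ℂ) = 0 := by
      rw [hcoe]; exact minpoly.aeval ℤ θ
    exact_mod_cast h1
  -- division
  set h : ℤ[X] := (minpoly ℤ θ) /ₘ μ with hhdef
  set r : ℤ[X] := (minpoly ℤ θ) %ₘ μ with hrdef
  have hfeq : minpoly ℤ θ = μ * h + r := by
    have key := Polynomial.modByMonic_add_div (minpoly ℤ θ) μ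
    linear_combination -key
  have hrθ : aeval θ' r ∈ 𝓟 := by
    have h2 : r = minpoly ℤ θ - μ * h := by linear_combination -hfeq
    have h3 : aeval θ' (μ * h) ∈ 𝓟 := by
      rw [map_mul]; exact Ideal.mul_mem_right _ _ hμ𝓟
    rw [h2, map_sub, hf0, zero_sub]
    exact neg_mem h3
  have hμdvd_r : μ.map φ ∣ r.map φ :=
    aux_dvd_of_mem 𝓟 p θ' hp𝓟 μ hμmonic hμ𝓟 hμmin hrθ
  have hr0 : r.map φ = 0 := by
    refine Polynomial.eq_zero_of_dvd_of_degree_lt hμdvd_r ?_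
    calc (r.map φ).degree ≤ r.degree := Polynomial.degree_map_le
    _ < μ.degree := Polynomial.degree_modByMonic_lt _ hμmonic
    _ = (μ.map φ).degree := (hμmonic.degree_map φ).symm
  obtain ⟨g, hg⟩ := aux_Cp_dvd p r hr0
  have hfg : minpoly ℤ θ = μ * h + Polynomial.C (p : ℤ) * g := by rw [hfeq, hg]
  refine ⟨g, h, hfg, ?_⟩
  by_contra hD
  have hfbar : (minpoly ℤ θ).map φ = μ.map φ * h.map φ := by
    have := congrArg (Polynomial.map φ) hfg
    simpa [Polynomial.map_add, Polynomial.map_mul, Polynomial.map_C, hp0] using this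
  have hirr : Irreducible (μ.map φ) :=
    aux_irred 𝓟 p θ' hp𝓟 μ hμmonic hμ𝓟 hμmin
  set Dg := EuclideanDomain.gcd (EuclideanDomain.gcd (μ.map φ) (g.map φ)) (h.map φ) with hDgdef
  have hDμ : Dg ∣ μ.map φ :=
    (EuclideanDomain.gcd_dvd_left _ _).trans (EuclideanDomain.gcd_dvd_left _ _)
  have hDg2 : Dg ∣ g.map φ :=
    (EuclideanDomain.gcd_dvd_left _ _).trans (EuclideanDomain.gcd_dvd_right _ _)
  have hDh : Dg ∣ h.map φ := EuclideanDomain.gcd_dvd_right _ _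
  obtain ⟨c, hc⟩ := hDμ
  have hcunit : IsUnit c := (hirr.isUnit_or_isUnit hc).resolve_left hD
  have hμD : μ.map φ ∣ Dg := by
    obtain ⟨u, hu⟩ := hcunit
    exact ⟨↑u⁻¹, by rw [hc, ← hu, mul_assoc, Units.mul_inv, mul_one]⟩
  have hμg : μ.map φ ∣ g.map φ := hμD.trans hDg2
  have hμh : μ.map φ ∣ h.map φ := hμD.trans hDh
  -- localization
  haveI := hdvr
  have hinj : Function.Injective (algebraMap (Algebra.adjoin ℤ {θ}) (Localization.AtPrime 𝓟)) :=
    IsLocalization.injective _ 𝓟.primeCompl_le_nonZeroDivisors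
  set alg := algebraMap (Algebra.adjoin ℤ {θ}) (Localization.AtPrime 𝓟) with halg
  set m : Algebra.adjoin ℤ {θ} := aeval θ' μ with hm
  set π : Algebra.adjoin ℤ {θ} := algebraMap ℤ (Algebra.adjoin ℤ {θ}) (p : ℤ) with hπ
  have hrep : ∀ z : Algebra.adjoin ℤ {θ}, ∃ Q : ℤ[X], aeval θ' Q = z := by
    intro z
    have hz : (z : ℂ) ∈ ((Polynomial.aeval θ : ℤ[X] →ₐ[ℤ] ℂ)).range := by
      rw [← Algebra.adjoin_singleton_eq_range_aeval]; exact z.2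
    obtain ⟨Q, hQ⟩ := hz
    exact ⟨Q, Subtype.ext (by rw [hcoe]; exact hQ)⟩
  have hdich : alg π ∣ alg m ∨ alg m ∣ alg π := by
    rcases le_total (IsDiscreteValuationRing.addVal (Localization.AtPrime 𝓟) (alg π))
      (IsDiscreteValuationRing.addVal (Localization.AtPrime 𝓟) (alg m)) with hle | hle
    · exact Or.inl (IsDiscreteValuationRing.addVal_le_iff_dvd.mp hle)
    · exact Or.inr (IsDiscreteValuationRing.addVal_le_iff_dvd.mp hle)
  rcases hdich with ⟨x, hx⟩ | ⟨x, hx⟩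
  · -- alg m = alg π * x  : m * s = π * y
    obtain ⟨⟨y, s⟩, hys⟩ := IsLocalization.mk'_surjective 𝓟.primeCompl x
    dsimp only at hys
    have heq : alg (m * ↑s) = alg (π * y) := by
      rw [map_mul, map_mul, hx, ← hys, mul_assoc, IsLocalization.mk'_spec]
    have hrel : m * ↑s = π * y := hinj heq
    obtain ⟨σ, hσ⟩ := hrep ↑s
    obtain ⟨Q, hQ⟩ := hrep y
    have hE : aeval θ' (μ * σ - Polynomial.C (p : ℤ) * Q) = 0 := by
      rw [map_sub, map_mul, map_mul, aeval_C, hσ, hQ, sub_eq_zero]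
      exact hrel
    have hEC : aeval θ (μ * σ - Polynomial.C (p : ℤ) * Q) = 0 := by
      rw [← hcoe, hE]; rfl
    obtain ⟨q', hq'⟩ := minpoly.isIntegrallyClosed_dvd hθ hEC
    have hmapq := congrArg (Polynomial.map φ) hq'
    simp only [Polynomial.map_sub, Polynomial.map_mul, Polynomial.map_C] at hmapq
    have hσbar : σ.map φ = h.map φ * q'.map φ :=
      mul_left_cancel₀ (hμmonic.map φ).ne_zero
        (by linear_combination hmapq + (Q.map φ) * hCp + (q'.map φ) * hfbar)
    have hμσ : μ.map φ ∣ σ.map φ := by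
      rw [hσbar]; exact hμh.mul_right _
    have hmem : aeval θ' σ ∈ 𝓟 := aux_mem_of_dvd 𝓟 p θ' hp𝓟 hμ𝓟 hμσ
    rw [hσ] at hmem
    exact s.2 hmem
  · -- alg π = alg m * x : π * s = m * y
    obtain ⟨⟨y, s⟩, hys⟩ := IsLocalization.mk'_surjective 𝓟.primeCompl x
    dsimp only at hys
    have heq : alg (π * ↑s) = alg (m * y) := by
      rw [map_mul, map_mul, hx, ← hys, mul_assoc, IsLocalization.mk'_spec]
    have hrel : π * ↑s = m * y := hinj heq
    obtain ⟨σ, hσ⟩ := hrep ↑s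
    obtain ⟨Q, hQ⟩ := hrep y
    have hE : aeval θ' (Polynomial.C (p : ℤ) * σ - μ * Q) = 0 := by
      rw [map_sub, map_mul, map_mul, aeval_C, hσ, hQ, sub_eq_zero]
      exact hrel
    have hEC : aeval θ (Polynomial.C (p : ℤ) * σ - μ * Q) = 0 := by
      rw [← hcoe, hE]; rfl
    obtain ⟨q', hq'⟩ := minpoly.isIntegrallyClosed_dvd hθ hEC
    -- Q̄ = -(h̄ q̄')
    have hmapq := congrArg (Polynomial.map φ) hq'
    simp only [Polynomial.map_sub, Polynomial.map_mul, Polynomial.map_C] at hmapq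
    have hQbar : Q.map φ = -(h.map φ * q'.map φ) :=
      mul_left_cancel₀ (hμmonic.map φ).ne_zero
        (by linear_combination -hmapq + (σ.map φ) * hCp - (q'.map φ) * hfbar)
    obtain ⟨B, hB⟩ := aux_Cp_dvd p (Q + h * q') (by
      rw [Polynomial.map_add, Polynomial.map_mul, hQbar, neg_add_cancel])
    have hσeq : Polynomial.C (p : ℤ) * σ = Polynomial.C (p : ℤ) * (μ * B + g * q') := by
      linear_combination hq' + q' * hfg + μ * hB
    have hσeq' : σ = μ * B + g * q' :=
      mul_left_cancel₀ (by simpa using hpZ : Polynomial.C (p : ℤ) ≠ 0) hσeq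
    have hμσ : μ.map φ ∣ σ.map φ := by
      have : σ.map φ = μ.map φ * B.map φ + g.map φ * q'.map φ := by
        rw [hσeq', Polynomial.map_add, Polynomial.map_mul, Polynomial.map_mul]
      rw [this]
      exact dvd_add (dvd_mul_right _ _) (hμg.mul_right _)
    have hmem : aeval θ' σ ∈ 𝓟 := aux_mem_of_dvd 𝓟 p θ' hp𝓟 hμ𝓟 hμσ
    rw [hσ] at hmem
    exact s.2 hmem
end

section
/- Let ν ≥ 3 be a square-free integer with ν ≡ 2 or 3 (mod 4), and let P_n(t) = f^{∘n}(t) be the n-th iterate of f(t) = t² − ν in ℤ[t]. Then for every prime divisor p of ν and every n ≥ 1, the polynomial P_n is p-Eisenstein: p divides every coefficient of P_n except the leading one, and p² does not divide the constant term P_n(0). -/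
open Polynomial

/-- Let `ν ≥ 3` be a square-free integer with `ν ≡ 2` or `3 (mod 4)`, and let
`P n = f^{∘n}` be the `n`-th iterate of `f(t) = t² − ν`.  Then for every prime divisor `p`
of `ν` and every `n ≥ 1`, the polynomial `P n` is `p`-Eisenstein. -/
theorem iterate_isEisensteinAt
    (ν : ℕ) (hν3 : 3 ≤ ν) (hsf : Squarefree ν) (hmod : ν % 4 = 2 ∨ ν % 4 = 3)
    (P : ℕ → Polynomial ℤ)
    (hP0 : P 0 = Polynomial.X)
    (hPs : ∀ n, P (n + 1) = (P n) ^ 2 - Polynomial.C (ν : ℤ))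
    (p : ℕ) (hp : p.Prime) (hpν : p ∣ ν)
    (n : ℕ) (hn : 1 ≤ n) :
    (P n).IsEisensteinAt (Ideal.span {(p : ℤ)}) := by
  haveI : Fact p.Prime := ⟨hp⟩
  -- p² does not divide ν
  have hp2ν : ¬ (p * p ∣ ν) := fun h => hp.not_isUnit (hsf p h)
  have hp2ν' : ¬ ((p : ℤ) ^ 2 ∣ (ν : ℤ)) := by
    rw [pow_two, ← Nat.cast_mul, Int.natCast_dvd_natCast]
    exact hp2ν
  -- monicity and degree
  have hmono : ∀ m, (P m).Monic ∧ (P m).natDegree = 2 ^ m := by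
    intro m
    induction m with
    | zero => simp [hP0, monic_X]
    | succ k ih =>
      obtain ⟨hm, hd⟩ := ih
      have hm2 : ((P k) ^ 2).Monic := hm.pow 2
      have hd2 : ((P k) ^ 2).natDegree = 2 ^ (k + 1) := by
        rw [hm.natDegree_pow, hd]; ring
      have hpos : 0 < ((P k) ^ 2).natDegree := by
        rw [hd2]; positivity
      have hlt : (C (ν : ℤ)).degree < ((P k) ^ 2).degree := by
        apply lt_of_le_of_lt (degree_C_le)
        exact natDegree_pos_iff_degree_pos.mp hpos
      constructor
      · rw [hPs]; exact hm2.sub_of_left hlt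
      · rw [hPs, natDegree_sub_eq_left_of_natDegree_lt, hd2]
        rw [natDegree_C, hd2]; positivity
  -- reduction mod p
  have hmap : ∀ m, (P m).map (Int.castRingHom (ZMod p)) = X ^ 2 ^ m := by
    intro m
    induction m with
    | zero => simp [hP0]
    | succ k ih =>
      rw [hPs, Polynomial.map_sub, Polynomial.map_pow, ih, Polynomial.map_C]
      have hz : ((ν : ℤ) : ZMod p) = 0 := by
        rw [Int.cast_natCast, ZMod.natCast_eq_zero_iff]
        exact hpν
      rw [show ((Int.castRingHom (ZMod p)) (ν : ℤ)) = 0 from hz, map_zero, sub_zero,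
        ← pow_mul, pow_succ]
  have hdvd : ∀ m i, i < 2 ^ m → (p : ℤ) ∣ (P m).coeff i := by
    intro m i hi
    have := congrArg (fun q => Polynomial.coeff q i) (hmap m)
    simp only [coeff_map, coeff_X_pow] at this
    rw [if_neg (by omega)] at this
    rwa [← ZMod.intCast_zmod_eq_zero_iff_dvd]
  -- constant coefficient
  have hc : ∀ m, (p : ℤ) ∣ (P (m + 1)).coeff 0 ∧ ¬ ((p : ℤ) ^ 2 ∣ (P (m + 1)).coeff 0) := by
    intro m
    induction m with
    | zero =>
      have h1 : (P 1).coeff 0 = -(ν : ℤ) := by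
        rw [hPs, coeff_zero_eq_eval_zero]
        simp [hP0]
      rw [h1]
      constructor
      · exact (dvd_neg).mpr (Int.natCast_dvd_natCast.mpr hpν)
      · rw [dvd_neg]; exact hp2ν'
    | succ k ih =>
      obtain ⟨h1, h2⟩ := ih
      have heq : (P (k + 2)).coeff 0 = (P (k + 1)).coeff 0 ^ 2 - (ν : ℤ) := by
        rw [hPs, coeff_zero_eq_eval_zero, eval_sub, eval_pow, eval_C,
          coeff_zero_eq_eval_zero]
      rw [heq]
      have hsq : (p : ℤ) ^ 2 ∣ (P (k + 1)).coeff 0 ^ 2 := pow_dvd_pow_of_dvd h1 2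
      constructor
      · exact dvd_sub (dvd_trans (dvd_pow_self _ two_ne_zero) hsq)
          (Int.natCast_dvd_natCast.mpr hpν)
      · intro h
        exact hp2ν' (by simpa using dvd_sub hsq h)
  obtain ⟨m, rfl⟩ := Nat.exists_eq_succ_of_ne_zero (by omega : n ≠ 0)
  obtain ⟨hmon, hdg⟩ := hmono (m + 1)
  refine ⟨?_, ?_, ?_⟩
  · rw [hmon.leadingCoeff, Ideal.mem_span_singleton]
    intro h
    exact hp.one_lt.ne' (by exact_mod_cast Int.eq_one_of_dvd_one (by positivity) h)
  · intro i hi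
    rw [Ideal.mem_span_singleton]
    exact hdvd (m + 1) i (hdg ▸ hi)
  · rw [Ideal.span_singleton_pow, Ideal.mem_span_singleton]
    exact (hc m).2
end

section
/- Let ν ≥ 3 be a square-free integer with ν ≡ 2 or 3 (mod 4), and let P_n(t) = f^{∘n}(t) be the n-th iterate of f(t) = t² − ν in ℤ[t]. Each P_n (n ≥ 1) has only monomials of even degree; write P_n(t) = R_n(t)·t⁴ + D_n·t² + C_n with R_n ∈ ℤ[t], D_n ∈ ℤ the coefficient of t², and C_n = P_n(0) the constant term. Then for every n ≥ 2, a prime q divides D_{n+1} if and only if q divides C_k for some k with 1 ≤ k ≤ n; i.e., the set of prime divisors of D_{n+1} equals the union over 1 ≤ k ≤ n of the sets of prime divisors of C_k. -/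
open Polynomial

lemma coeff1_sq' (p : Polynomial ℤ) : (p ^ 2).coeff 1 = 2 * (p.coeff 0 * p.coeff 1) := by
  rw [sq, Polynomial.coeff_mul]
  simp [Finset.Nat.sum_antidiagonal_eq_sum_range_succ_mk, Finset.sum_range_succ]
  ring

lemma coeff2_sq' (p : Polynomial ℤ) :
    (p ^ 2).coeff 2 = 2 * p.coeff 0 * p.coeff 2 + p.coeff 1 ^ 2 := by
  rw [sq, Polynomial.coeff_mul]
  simp [Finset.Nat.sum_antidiagonal_eq_sum_range_succ_mk, Finset.sum_range_succ]
  ring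

/-- Let `ν ≥ 3` be a square-free integer with `ν ≡ 2` or `3 (mod 4)`, and let
`P n = f^{∘n}` be the `n`-th iterate of `f(t) = t² − ν`.  Writing `D n` for the coefficient
of `t²` and `C n = P n (0)` for the constant term, for every `n ≥ 2` the set of prime
divisors of `D (n+1)` is the union over `1 ≤ k ≤ n` of the sets of prime divisors of
`C k`. -/
theorem prime_divisors_of_D_succ
    (ν : ℕ) (hν3 : 3 ≤ ν) (hsf : Squarefree ν) (hmod : ν % 4 = 2 ∨ ν % 4 = 3)
    (P : ℕ → Polynomial ℤ)
    (hP0 : P 0 = Polynomial.X)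
    (hPs : ∀ n, P (n + 1) = (P n) ^ 2 - Polynomial.C (ν : ℤ))
    (n : ℕ) (hn : 2 ≤ n) :
    ∀ q : ℕ, q.Prime →
      ((q : ℤ) ∣ (P (n + 1)).coeff 2 ↔ ∃ k, 1 ≤ k ∧ k ≤ n ∧ (q : ℤ) ∣ (P k).coeff 0) := by
  -- coeff 1 vanishes for all iterates with index ≥ 1
  have hc1 : ∀ m, (P (m + 1)).coeff 1 = 0 := by
    intro m
    induction m with
    | zero => rw [hPs, hP0]; simp [coeff1_sq']
    | succ m ih => rw [hPs]; simp [coeff1_sq', ih]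
  -- constant-term recursion
  have hC : ∀ m, (P (m + 1)).coeff 0 = (P m).coeff 0 ^ 2 - ν := by
    intro m
    rw [hPs m, Polynomial.coeff_sub, sq, Polynomial.mul_coeff_zero,
      Polynomial.coeff_C_zero]
    ring
  have hC0 : (P 0).coeff 0 = 0 := by rw [hP0]; simp
  have hC1 : (P 1).coeff 0 = -(ν : ℤ) := by rw [hC, hC0]; ring
  have hC2 : (P 2).coeff 0 = (ν : ℤ) ^ 2 - ν := by rw [hC, hC1]; ring
  -- D recursion
  have hD : ∀ m, (P (m + 2)).coeff 2 = 2 * (P (m + 1)).coeff 0 * (P (m + 1)).coeff 2 := by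
    intro m
    rw [hPs (m + 1), Polynomial.coeff_sub, coeff2_sq', hc1 m]
    simp [Polynomial.coeff_C]
  have hD1 : (P 1).coeff 2 = 1 := by
    rw [hPs 0, hP0]
    simp [Polynomial.coeff_C]
  -- product formula
  have hprod : ∀ m, 1 ≤ m →
      (P (m + 1)).coeff 2 = 2 ^ m * ∏ k ∈ Finset.Icc 1 m, (P k).coeff 0 := by
    intro m hm
    induction m with
    | zero => omega
    | succ m ih =>
      rcases Nat.eq_zero_or_pos m with h0 | h1
      · subst h0
        rw [show (0:ℕ) + 1 + 1 = 2 from rfl, hD 0, hD1]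
        simp
      · rw [hD m, ih h1, Finset.prod_Icc_succ_top (by omega)]
        ring
  intro q hq
  have hq' : Prime (q : ℤ) := Int.prime_iff_natAbs_prime.mpr (by simpa using hq)
  rw [hprod n (by omega)]
  constructor
  · intro h
    rcases hq'.dvd_mul.mp h with h2 | h3
    · have hq2 : (q : ℤ) ∣ 2 := hq'.dvd_of_dvd_pow h2
      have hq2' : q = 2 := by
        have : q ∣ 2 := by exact_mod_cast hq2
        exact (Nat.prime_dvd_prime_iff_eq hq Nat.prime_two).mp this
      refine ⟨2, one_le_two, hn, ?_⟩
      rw [hq2', hC2]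
      have he : Even (((ν : ℤ) - 1) * ((ν : ℤ) - 1 + 1)) := Int.even_mul_succ_self _
      have : (2 : ℤ) ∣ (ν : ℤ) ^ 2 - ν := by
        have h2d := he.two_dvd
        have heq : (ν : ℤ) ^ 2 - ν = ((ν : ℤ) - 1) * ((ν : ℤ) - 1 + 1) := by ring
        rw [heq]
        exact h2d
      exact_mod_cast this
    · obtain ⟨k, hk, hdvd⟩ := hq'.exists_mem_finset_dvd h3
      exact ⟨k, (Finset.mem_Icc.mp hk).1, (Finset.mem_Icc.mp hk).2, hdvd⟩
  · rintro ⟨k, hk1, hkn, hdvd⟩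
    have hk : k ∈ Finset.Icc 1 n := Finset.mem_Icc.mpr ⟨hk1, hkn⟩
    exact Dvd.dvd.mul_left
      (hdvd.trans (Finset.dvd_prod_of_mem (fun j => (P j).coeff 0) hk)) _
end

section
/- Let ν ≥ 3 be a square-free integer with ν ≡ 2 or 3 (mod 4), let P_n(t) = f^{∘n}(t) be the n-th iterate of f(t) = t² − ν in ℤ[t], and let C_n = P_n(0). Let p be an odd prime not dividing ν which divides C_m for some m ≥ 1, and let n(p) be the least positive integer n such that p divides C_n. Then for all non-negative integers k and ℓ that are not congruent modulo n(p), the reductions P̄_k and P̄_ℓ are coprime in 𝔽_p[t]. -/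
open Polynomial

/-- Let `ν ≥ 3` be a square-free integer with `ν ≡ 2` or `3 (mod 4)`, `P n = f^{∘n}` the
`n`-th iterate of `f(t) = t² − ν`, and `C n = P n (0)`.  Let `p` be an odd prime not
dividing `ν`, dividing some `C m` with `m ≥ 1`, and let `n(p)` be the least positive index
`n` with `p ∣ C n`.  Then for all non-negative `k, ℓ` not congruent modulo `n(p)`, the
reductions `P̄ k` and `P̄ ℓ` are coprime in `𝔽_p[t]`. -/
theorem reductions_coprime_of_not_modEq
    (ν : ℕ) (hν3 : 3 ≤ ν) (hsf : Squarefree ν) (hmod : ν % 4 = 2 ∨ ν % 4 = 3)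
    (P : ℕ → Polynomial ℤ)
    (hP0 : P 0 = Polynomial.X)
    (hPs : ∀ n, P (n + 1) = (P n) ^ 2 - Polynomial.C (ν : ℤ))
    (p : ℕ) [Fact p.Prime] (hp2 : p ≠ 2) (hpν : ¬ p ∣ ν)
    (np : ℕ) (hnp1 : 1 ≤ np)
    (hnpdvd : (p : ℤ) ∣ (P np).coeff 0)
    (hnpleast : ∀ k, 1 ≤ k → (p : ℤ) ∣ (P k).coeff 0 → np ≤ k)
    (k l : ℕ) (hkl : ¬ k ≡ l [MOD np]) :
    IsCoprime ((P k).map (Int.castRingHom (ZMod p)))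
      ((P l).map (Int.castRingHom (ZMod p))) := by
  -- composition law
  have hcomp : ∀ m n, P (m + n) = (P n).comp (P m) := by
    intro m n
    induction n with
    | zero => simp [hP0]
    | succ n ih =>
        rw [← Nat.add_assoc, hPs, ih, hPs, sub_comp, pow_comp, C_comp]
  -- if p divides C_d then np ∣ d
  have hperiod : ∀ d, (p : ℤ) ∣ (P d).coeff 0 → np ∣ d := by
    intro d
    induction d using Nat.strong_induction_on with
    | _ d ih =>
      intro hd
      rcases Nat.eq_zero_or_pos d with h0 | h1
      · simp [h0]
      · have hle : np ≤ d := hnpleast d h1 hd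
        rcases Nat.eq_or_lt_of_le hle with heq | hlt
        · exact heq ▸ dvd_refl np
        · set d' := d - np with hd'
          have hds : d = np + d' := by omega
          have hcoe : (P d).coeff 0 = (P d').eval ((P np).coeff 0) := by
            rw [hds, hcomp np d', coeff_zero_eq_eval_zero, eval_comp,
              ← coeff_zero_eq_eval_zero]
          have hsub : (p : ℤ) ∣ (P d').eval ((P np).coeff 0) - (P d').eval 0 := by
            have := Polynomial.sub_dvd_eval_sub ((P np).coeff 0) 0 (P d')
            rw [sub_zero] at this
            exact dvd_trans hnpdvd this
          have hd'dvd : (p : ℤ) ∣ (P d').coeff 0 := by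
            rw [coeff_zero_eq_eval_zero]
            have h2 : (p : ℤ) ∣ (P d').eval ((P np).coeff 0) := hcoe ▸ hd
            simpa using dvd_sub h2 hsub
          have hnp' : np ∣ d' := ih d' (by omega) hd'dvd
          rcases hnp' with ⟨q, hq⟩
          exact ⟨q + 1, by rw [Nat.mul_succ, ← hq]; omega⟩
  -- coprime for k < l
  have key : ∀ k l : ℕ, k < l → ¬ np ∣ (l - k) →
      IsCoprime ((P k).map (Int.castRingHom (ZMod p)))
        ((P l).map (Int.castRingHom (ZMod p))) := by
    intro k l hklt hndvd
    set d := l - k with hdd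
    have hld : l = k + d := by omega
    set c : ℤ := (P d).coeff 0 with hc
    have hXdvd : X ∣ P d - C c := by
      rw [X_dvd_iff]
      simp [hc]
    obtain ⟨G, hG⟩ := hXdvd
    have hPd : P d = X * G + C c := by linear_combination hG
    have hPl : P l = P k * G.comp (P k) + C c := by
      rw [hld, hcomp k d, hPd, add_comp, mul_comp, X_comp, C_comp]
    have hcne : ((c : ℤ) : ZMod p) ≠ 0 := by
      intro h0
      exact hndvd (hperiod d ((ZMod.intCast_zmod_eq_zero_iff_dvd c p).mp h0))
    set φ := Int.castRingHom (ZMod p)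
    set u : ZMod p := φ c with hu
    have hul : ((P l).map φ) = ((P k).map φ) * ((G.comp (P k)).map φ) + C u := by
      rw [hPl, Polynomial.map_add, Polynomial.map_mul, Polynomial.map_C]
    refine ⟨-(C u⁻¹) * ((G.comp (P k)).map φ), C u⁻¹, ?_⟩
    rw [hul]
    have : u⁻¹ * u = 1 := inv_mul_cancel₀ hcne
    ring_nf
    rw [← C_mul, this, C_1]
  rcases lt_trichotomy k l with h | h | h
  · refine key k l h ?_
    intro hdvd
    exact hkl ((Nat.modEq_iff_dvd' (le_of_lt h)).mpr hdvd)
  · exact absurd (h ▸ Nat.ModEq.refl k) hkl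
  · refine (key l k h ?_).symm
    intro hdvd
    exact hkl ((Nat.modEq_iff_dvd' (le_of_lt h)).mpr hdvd).symm
end
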